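/- arXiv:2211.04080 — 7 statements merged into one kernel-verified Lean document; each statement's English description precedes it below -/
import Mathlib

section
/- For 0 < q ≤ 1 and s ≥ 0, ℓ^q_{v_s}(ℤ^d) is an algebra under discrete convolution: if a, b ∈ ℓ^q_{v_s}(ℤ^d), then a∗b ∈ ℓ^q_{v_s}(ℤ^d) and ‖a∗b‖_{ℓ^q_{v_s}} ≤ ‖a‖_{ℓ^q_{v_s}} ‖b‖_{ℓ^q_{v_s}}. -/
open scoped BigOperators ENNReal NNReal

lemma aux_tsum_rpow_le {ι : Type*} (f : ι → ℝ≥0∞) {q : ℝ} (hq0 : 0 < q) (hq1 : q ≤ 1) :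
    (∑' i, f i) ^ q ≤ ∑' i, f i ^ q := by
  classical
  have hfin : ∀ s : Finset ι, (∑ i ∈ s, f i) ^ q ≤ ∑ i ∈ s, f i ^ q := by
    intro s
    induction s using Finset.induction_on with
    | empty => simp [ENNReal.zero_rpow_of_pos hq0]
    | insert _ _ hx ih =>
      rw [Finset.sum_insert hx, Finset.sum_insert hx]
      exact (ENNReal.rpow_add_le_add_rpow _ _ hq0.le hq1).trans (by gcongr)
  have h1 : (∑' i, f i) ^ q = ⨆ s : Finset ι, (∑ i ∈ s, f i) ^ q := by
    rw [ENNReal.tsum_eq_iSup_sum]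
    exact Monotone.map_iSup_of_continuousAt
      (ENNReal.continuous_rpow_const.continuousAt)
      (ENNReal.monotone_rpow_of_nonneg hq0.le)
      (by simp [ENNReal.zero_rpow_of_pos hq0])
  rw [h1]
  exact iSup_le fun s => (hfin s).trans (ENNReal.sum_le_tsum s)

lemma aux_nnnorm_tsum_le {ι : Type*} (f : ι → ℂ) :
    (‖∑' i, f i‖₊ : ℝ≥0∞) ≤ ∑' i, (‖f i‖₊ : ℝ≥0∞) := by
  by_cases h : ∑' i, (‖f i‖₊ : ℝ≥0∞) = ∞
  · simp [h]
  · have hs : Summable fun i => ‖f i‖₊ := ENNReal.tsum_coe_ne_top_iff_summable.mp h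
    rw [← ENNReal.coe_tsum hs]
    exact_mod_cast nnnorm_tsum_le hs

/-- `ℓ^q_{v_s}(ℤ^d)`, `0 < q ≤ 1`, `s ≥ 0`, is an algebra under discrete convolution:
`‖a∗b‖_{ℓ^q_{v_s}} ≤ ‖a‖_{ℓ^q_{v_s}} ‖b‖_{ℓ^q_{v_s}}`. -/
theorem conv_algebra_lq_vs (d : ℕ) (q s : ℝ) (hq0 : 0 < q) (hq1 : q ≤ 1) (hs : 0 ≤ s)
    (v : (Fin d → ℤ) → ℝ)
    (hv : ∀ k, v k = (1 + ‖(fun i => (k i : ℝ) : Fin d → ℝ)‖) ^ s)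
    (a b : (Fin d → ℤ) → ℂ)
    (ha : Summable fun k => ‖a k‖ ^ q * v k ^ q)
    (hb : Summable fun k => ‖b k‖ ^ q * v k ^ q) :
    Summable (fun k => ‖∑' j, a (k - j) * b j‖ ^ q * v k ^ q) ∧
      (∑' k, ‖∑' j, a (k - j) * b j‖ ^ q * v k ^ q) ^ (1 / q) ≤
        (∑' k, ‖a k‖ ^ q * v k ^ q) ^ (1 / q) * (∑' k, ‖b k‖ ^ q * v k ^ q) ^ (1 / q) := by
  -- basic facts about v
  have hv1 : ∀ k, 1 ≤ v k := fun k => by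
    rw [hv k]
    exact Real.one_le_rpow (by linarith [norm_nonneg (fun i => ((k i : ℝ)) : Fin d → ℝ)]) hs
  have hv0 : ∀ k, 0 ≤ v k := fun k => le_trans zero_le_one (hv1 k)
  have hsub : ∀ k j, v k ≤ v (k - j) * v j := by
    intro k j
    rw [hv, hv, hv, ← Real.mul_rpow (by positivity) (by positivity)]
    apply Real.rpow_le_rpow (by positivity) _ hs
    have hcast : (fun i => (k i : ℝ)) =
        (fun i => (((k - j) i : ℝ))) + (fun i => ((j i : ℝ))) := by
      funext i; simp [Pi.sub_apply]
    have hnorm : ‖(fun i => (k i : ℝ) : Fin d → ℝ)‖ ≤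
        ‖(fun i => ((k - j) i : ℝ) : Fin d → ℝ)‖ + ‖(fun i => (j i : ℝ) : Fin d → ℝ)‖ := by
      rw [hcast]; exact norm_add_le _ _
    nlinarith [norm_nonneg (fun i => ((k - j) i : ℝ) : Fin d → ℝ),
      norm_nonneg (fun i => ((j i : ℝ)) : Fin d → ℝ)]
  -- ENNReal setup
  set w : (Fin d → ℤ) → ℝ≥0∞ := fun k => ENNReal.ofReal (v k) with hw
  set F : (Fin d → ℤ) → ℝ≥0∞ := fun k => (‖a k‖₊ : ℝ≥0∞) ^ q * w k ^ q with hF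
  set G : (Fin d → ℤ) → ℝ≥0∞ := fun k => (‖b k‖₊ : ℝ≥0∞) ^ q * w k ^ q with hG
  set c : (Fin d → ℤ) → ℂ := fun k => ∑' j, a (k - j) * b j with hc
  have hnn : ∀ (z : ℂ) (k : Fin d → ℤ), 0 ≤ ‖z‖ ^ q * v k ^ q := fun z k =>
    mul_nonneg (Real.rpow_nonneg (norm_nonneg _) _) (Real.rpow_nonneg (hv0 k) _)
  have hterm : ∀ (x : (Fin d → ℤ) → ℂ) k, ENNReal.ofReal (‖x k‖ ^ q * v k ^ q) =
      (‖x k‖₊ : ℝ≥0∞) ^ q * w k ^ q := by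
    intro x k
    rw [ENNReal.ofReal_mul (Real.rpow_nonneg (norm_nonneg _) _), ← ENNReal.ofReal_rpow_of_nonneg (norm_nonneg _) hq0.le,
      ← ENNReal.ofReal_rpow_of_nonneg (hv0 k) hq0.le, ofReal_norm, enorm_eq_nnnorm]
  have hFsum : ∑' k, F k = ENNReal.ofReal (∑' k, ‖a k‖ ^ q * v k ^ q) := by
    rw [ENNReal.ofReal_tsum_of_nonneg (fun k => hnn (a k) k) ha]
    exact tsum_congr fun k => (hterm a k).symm
  have hGsum : ∑' k, G k = ENNReal.ofReal (∑' k, ‖b k‖ ^ q * v k ^ q) := by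
    rw [ENNReal.ofReal_tsum_of_nonneg (fun k => hnn (b k) k) hb]
    exact tsum_congr fun k => (hterm b k).symm
  -- pointwise bound
  have hpt : ∀ k, (‖c k‖₊ : ℝ≥0∞) ^ q * w k ^ q ≤ ∑' j, F (k - j) * G j := by
    intro k
    have h1 : (‖c k‖₊ : ℝ≥0∞) ^ q ≤ ∑' j, ((‖a (k - j)‖₊ : ℝ≥0∞) * ‖b j‖₊) ^ q := by
      calc (‖c k‖₊ : ℝ≥0∞) ^ q ≤ (∑' j, (‖a (k - j) * b j‖₊ : ℝ≥0∞)) ^ q := by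
            gcongr
            exact aux_nnnorm_tsum_le _
        _ ≤ ∑' j, (‖a (k - j) * b j‖₊ : ℝ≥0∞) ^ q :=
            aux_tsum_rpow_le _ hq0 hq1
        _ = ∑' j, ((‖a (k - j)‖₊ : ℝ≥0∞) * ‖b j‖₊) ^ q := by
            simp [nnnorm_mul]
    calc (‖c k‖₊ : ℝ≥0∞) ^ q * w k ^ q
        ≤ (∑' j, ((‖a (k - j)‖₊ : ℝ≥0∞) * ‖b j‖₊) ^ q) * w k ^ q := by gcongr
      _ = ∑' j, ((‖a (k - j)‖₊ : ℝ≥0∞) * ‖b j‖₊) ^ q * w k ^ q := by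
          rw [ENNReal.tsum_mul_right]
      _ ≤ ∑' j, F (k - j) * G j := by
          apply ENNReal.tsum_le_tsum
          intro j
          have hwk : w k ≤ w (k - j) * w j := by
            rw [hw]
            simp only
            rw [← ENNReal.ofReal_mul (hv0 _)]
            exact ENNReal.ofReal_le_ofReal (hsub k j)
          calc ((‖a (k - j)‖₊ : ℝ≥0∞) * ‖b j‖₊) ^ q * w k ^ q
              ≤ ((‖a (k - j)‖₊ : ℝ≥0∞) * ‖b j‖₊) ^ q * (w (k - j) * w j) ^ q := by gcongr
            _ = F (k - j) * G j := by
                rw [ENNReal.mul_rpow_of_nonneg _ _ hq0.le,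
                  ENNReal.mul_rpow_of_nonneg _ _ hq0.le, hF, hG]
                ring
  -- sum the bound
  have hkey : ∑' k, ((‖c k‖₊ : ℝ≥0∞) ^ q * w k ^ q) ≤ (∑' k, F k) * (∑' k, G k) := by
    calc ∑' k, ((‖c k‖₊ : ℝ≥0∞) ^ q * w k ^ q)
        ≤ ∑' k, ∑' j, F (k - j) * G j := ENNReal.tsum_le_tsum hpt
      _ = ∑' j, ∑' k, F (k - j) * G j := ENNReal.tsum_comm
      _ = ∑' j, (∑' k, F (k - j)) * G j := by
          refine tsum_congr fun j => ?_
          rw [ENNReal.tsum_mul_right]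
      _ = ∑' j, (∑' k, F k) * G j := by
          refine tsum_congr fun j => ?_
          congr 1
          exact (Equiv.subRight j).tsum_eq F
      _ = (∑' k, F k) * (∑' k, G k) := ENNReal.tsum_mul_left
  have hkey' : ∑' k, ENNReal.ofReal (‖c k‖ ^ q * v k ^ q) ≤
      ENNReal.ofReal ((∑' k, ‖a k‖ ^ q * v k ^ q) * (∑' k, ‖b k‖ ^ q * v k ^ q)) := by
    rw [ENNReal.ofReal_mul (tsum_nonneg fun k => hnn (a k) k), ← hFsum, ← hGsum]
    calc ∑' k, ENNReal.ofReal (‖c k‖ ^ q * v k ^ q)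
        = ∑' k, ((‖c k‖₊ : ℝ≥0∞) ^ q * w k ^ q) := tsum_congr fun k => hterm c k
      _ ≤ _ := hkey
  have hne : ∑' k, ENNReal.ofReal (‖c k‖ ^ q * v k ^ q) ≠ ∞ :=
    ne_top_of_le_ne_top ENNReal.ofReal_ne_top hkey'
  -- summability
  have hsum : Summable fun k => ‖c k‖ ^ q * v k ^ q := by
    have h2 : Summable fun k => (‖c k‖ ^ q * v k ^ q).toNNReal := by
      apply ENNReal.tsum_coe_ne_top_iff_summable.mp
      exact fun h => hne (by rw [← h]; exact tsum_congr fun k => rfl)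
    have := NNReal.summable_coe.mpr h2
    refine this.congr fun k => ?_
    exact Real.coe_toNNReal _ (hnn (c k) k)
  refine ⟨hsum, ?_⟩
  have hreal : ∑' k, ‖c k‖ ^ q * v k ^ q ≤
      (∑' k, ‖a k‖ ^ q * v k ^ q) * (∑' k, ‖b k‖ ^ q * v k ^ q) := by
    rw [← ENNReal.ofReal_le_ofReal_iff (mul_nonneg (tsum_nonneg fun k => hnn (a k) k) (tsum_nonneg fun k => hnn (b k) k)),
      ENNReal.ofReal_tsum_of_nonneg (fun k => hnn (c k) k) hsum]
    exact hkey'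
  calc (∑' k, ‖c k‖ ^ q * v k ^ q) ^ (1 / q)
      ≤ ((∑' k, ‖a k‖ ^ q * v k ^ q) * (∑' k, ‖b k‖ ^ q * v k ^ q)) ^ (1 / q) :=
        Real.rpow_le_rpow (tsum_nonneg fun k => hnn (c k) k) hreal (by positivity)
    _ = _ := Real.mul_rpow (tsum_nonneg fun k => hnn (a k) k)
        (tsum_nonneg fun k => hnn (b k) k)
end

section
/- Young's inequality in the quasi-Banach range: let 0 < r < 1, v a submultiplicative weight on ℤ^d, and m a v-moderate weight. If a ∈ ℓ^r_m(ℤ^d) and b ∈ ℓ^r_v(ℤ^d), then a∗b ∈ ℓ^r_m(ℤ^d) with ‖a∗b‖_{ℓ^r_m} ≤ C ‖a‖_{ℓ^r_m} ‖b‖_{ℓ^r_v} for a constant C depending only on m and v (and C = 1 when m ≡ v ≡ 1). -/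
open scoped BigOperators

private lemma finset_rpow_sum_le {ι : Type*} (s : Finset ι) (f : ι → ℝ) (hf : ∀ i, 0 ≤ f i)
    {r : ℝ} (hr0 : 0 < r) (hr1 : r ≤ 1) :
    (∑ i ∈ s, f i) ^ r ≤ ∑ i ∈ s, f i ^ r := by
  classical
  induction s using Finset.induction with
  | empty => simp [Real.zero_rpow hr0.ne']
  | @insert x s hx ih =>
    rw [Finset.sum_insert hx, Finset.sum_insert hx]
    have h2 : (f x + ∑ i ∈ s, f i) ^ r ≤ f x ^ r + (∑ i ∈ s, f i) ^ r := by
      have h := NNReal.rpow_add_le_add_rpow (⟨f x, hf x⟩ : NNReal)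
        (⟨∑ i ∈ s, f i, Finset.sum_nonneg fun i _ => hf i⟩ : NNReal) hr0.le hr1
      exact_mod_cast h
    linarith

private lemma summable_of_rpow_summable {ι : Type*} {f : ι → ℝ} (hf : ∀ i, 0 ≤ f i)
    {r : ℝ} (hr0 : 0 < r) (hr1 : r ≤ 1) (h : Summable fun i => f i ^ r) :
    Summable f := by
  have h0 : Filter.Tendsto (fun i => f i ^ r) Filter.cofinite (nhds 0) :=
    h.tendsto_cofinite_zero
  have hev : ∀ᶠ i in Filter.cofinite, ‖f i‖ ≤ f i ^ r := by
    filter_upwards [h0.eventually (gt_mem_nhds one_pos)] with i hi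
    rw [Real.norm_of_nonneg (hf i)]
    rcases eq_or_lt_of_le (hf i) with h0' | h0'
    · rw [← h0', Real.zero_rpow hr0.ne']
    · have hle1 : f i ≤ 1 := by
        by_contra hcon
        push_neg at hcon
        have : (1:ℝ) ^ r ≤ f i ^ r := Real.rpow_le_rpow zero_le_one hcon.le hr0.le
        rw [Real.one_rpow] at this
        linarith
      calc f i = f i ^ (1:ℝ) := (Real.rpow_one _).symm
        _ ≤ f i ^ r := Real.rpow_le_rpow_of_exponent_ge h0' hle1 hr1
  exact Summable.of_norm_bounded_eventually h hev

private lemma tsum_rpow_le {ι : Type*} {f : ι → ℝ} (hf : ∀ i, 0 ≤ f i)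
    {r : ℝ} (hr0 : 0 < r) (hr1 : r ≤ 1) (h : Summable fun i => f i ^ r) :
    (∑' i, f i) ^ r ≤ ∑' i, f i ^ r := by
  have hfs : Summable f := summable_of_rpow_summable hf hr0 hr1 h
  have hcont : Filter.Tendsto (fun s : Finset ι => (∑ i ∈ s, f i) ^ r)
      Filter.atTop (nhds ((∑' i, f i) ^ r)) := by
    exact ((Real.continuousAt_rpow_const _ r (Or.inr hr0.le)).tendsto).comp hfs.hasSum
  refine le_of_tendsto hcont (Filter.Eventually.of_forall fun s => ?_)
  calc (∑ i ∈ s, f i) ^ r ≤ ∑ i ∈ s, f i ^ r := finset_rpow_sum_le s f hf hr0 hr1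
    _ ≤ ∑' i, f i ^ r := Summable.sum_le_tsum s (fun i _ => Real.rpow_nonneg (hf i) r) h

private lemma norm_tsum_rpow_le {ι : Type*} (f : ι → ℂ) {r : ℝ} (hr0 : 0 < r) (hr1 : r ≤ 1)
    (h : Summable fun i => ‖f i‖ ^ r) :
    ‖∑' i, f i‖ ^ r ≤ ∑' i, ‖f i‖ ^ r := by
  have hn : Summable fun i => ‖f i‖ :=
    summable_of_rpow_summable (fun i => norm_nonneg _) hr0 hr1 h
  calc ‖∑' i, f i‖ ^ r ≤ (∑' i, ‖f i‖) ^ r := by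
        exact Real.rpow_le_rpow (norm_nonneg _) (norm_tsum_le_tsum_norm hn) hr0.le
    _ ≤ ∑' i, ‖f i‖ ^ r := tsum_rpow_le (fun i => norm_nonneg _) hr0 hr1 h

private def shearEquiv (ι : Type*) [AddGroup ι] : ι × ι ≃ ι × ι where
  toFun p := (p.1 - p.2, p.2)
  invFun p := (p.1 + p.2, p.2)
  left_inv p := by simp [Prod.ext_iff]
  right_inv p := by simp [Prod.ext_iff]

private lemma young_core {d : ℕ} {r : ℝ} (hr0 : 0 < r) (hr1 : r < 1)
    (v m : (Fin d → ℤ) → ℝ) (hv_pos : ∀ k, 0 < v k) (hm_pos : ∀ k, 0 < m k)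
    {C0 : ℝ} (hC0 : 0 < C0) (hmod : ∀ j k, m (j + k) ≤ C0 * v j * m k)
    (a b : (Fin d → ℤ) → ℂ)
    (ha : Summable (fun k => ‖a k‖ ^ r * m k ^ r))
    (hb : Summable (fun k => ‖b k‖ ^ r * v k ^ r)) :
    Summable (fun k => ‖∑' j, a (k - j) * b j‖ ^ r * m k ^ r) ∧
      (∑' k, ‖∑' j, a (k - j) * b j‖ ^ r * m k ^ r) ≤
        C0 ^ r * ((∑' k, ‖a k‖ ^ r * m k ^ r) * (∑' k, ‖b k‖ ^ r * v k ^ r)) := by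
  set A : (Fin d → ℤ) → ℝ := fun k => ‖a k‖ ^ r * m k ^ r with hA_def
  set B : (Fin d → ℤ) → ℝ := fun k => ‖b k‖ ^ r * v k ^ r with hB_def
  have hA0 : ∀ k, 0 ≤ A k := fun k =>
    mul_nonneg (Real.rpow_nonneg (norm_nonneg (a k)) r) (Real.rpow_nonneg (hm_pos k).le r)
  have hB0 : ∀ k, 0 ≤ B k := fun k =>
    mul_nonneg (Real.rpow_nonneg (norm_nonneg (b k)) r) (Real.rpow_nonneg (hv_pos k).le r)
  -- summability on the product
  have hprod : Summable (fun p : (Fin d → ℤ) × (Fin d → ℤ) => A p.1 * B p.2) :=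
    ha.mul_of_nonneg hb hA0 hB0
  have hF : Summable (fun p : (Fin d → ℤ) × (Fin d → ℤ) => A (p.1 - p.2) * B p.2) := by
    exact (Equiv.summable_iff (shearEquiv (Fin d → ℤ))).2 hprod
  have hFk : ∀ k, Summable (fun j => A (k - j) * B j) := fun k => hF.prod_factor k
  -- pointwise bound
  have key : ∀ k j, ‖a (k - j) * b j‖ ^ r * m k ^ r ≤ C0 ^ r * (A (k - j) * B j) := by
    intro k j
    have hmk : m k ≤ C0 * v j * m (k - j) := by
      have h := hmod j (k - j)
      have e1 : j + (k - j) = k := by abel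
      rwa [e1] at h
    have hbase : ‖a (k - j) * b j‖ * m k ≤
        C0 * ((‖a (k - j)‖ * m (k - j)) * (‖b j‖ * v j)) := by
      rw [norm_mul]
      have h1 := mul_le_mul_of_nonneg_left hmk
        (mul_nonneg (norm_nonneg (a (k - j))) (norm_nonneg (b j)))
      nlinarith [h1]
    calc ‖a (k - j) * b j‖ ^ r * m k ^ r
        = (‖a (k - j) * b j‖ * m k) ^ r :=
          (Real.mul_rpow (norm_nonneg _) (hm_pos k).le).symm
      _ ≤ (C0 * ((‖a (k - j)‖ * m (k - j)) * (‖b j‖ * v j))) ^ r := by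
          exact Real.rpow_le_rpow (mul_nonneg (norm_nonneg _) (hm_pos k).le) hbase hr0.le
      _ = C0 ^ r * (A (k - j) * B j) := by
          rw [Real.mul_rpow hC0.le
              (mul_nonneg (mul_nonneg (norm_nonneg _) (hm_pos _).le)
                (mul_nonneg (norm_nonneg _) (hv_pos _).le)),
            Real.mul_rpow (mul_nonneg (norm_nonneg _) (hm_pos _).le)
              (mul_nonneg (norm_nonneg _) (hv_pos _).le),
            Real.mul_rpow (norm_nonneg _) (hm_pos _).le,
            Real.mul_rpow (norm_nonneg _) (hv_pos _).le]
  -- per-k bound on the convolution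
  have Hk : ∀ k, ‖∑' j, a (k - j) * b j‖ ^ r * m k ^ r ≤
      C0 ^ r * ∑' j, A (k - j) * B j := by
    intro k
    have hsj : Summable (fun j => ‖a (k - j) * b j‖ ^ r) := by
      refine Summable.of_nonneg_of_le (fun j => Real.rpow_nonneg (norm_nonneg _) r)
        (fun j => ?_) (((hFk k).mul_left (C0 ^ r)).div_const (m k ^ r))
      rw [le_div_iff₀ (Real.rpow_pos_of_pos (hm_pos k) r)]
      exact key k j
    have hnorm : ‖∑' j, a (k - j) * b j‖ ^ r ≤ ∑' j, ‖a (k - j) * b j‖ ^ r :=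
      norm_tsum_rpow_le _ hr0 hr1.le hsj
    calc ‖∑' j, a (k - j) * b j‖ ^ r * m k ^ r
        ≤ (∑' j, ‖a (k - j) * b j‖ ^ r) * m k ^ r := by
          exact mul_le_mul_of_nonneg_right hnorm (Real.rpow_nonneg (hm_pos k).le r)
      _ = ∑' j, ‖a (k - j) * b j‖ ^ r * m k ^ r := by rw [tsum_mul_right]
      _ ≤ ∑' j, C0 ^ r * (A (k - j) * B j) := by
          refine Summable.tsum_le_tsum (fun j => key k j) (hsj.mul_right _) ((hFk k).mul_left _)
      _ = C0 ^ r * ∑' j, A (k - j) * B j := by rw [tsum_mul_left]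
  -- total sum of the dominating function
  have hGs : HasSum (fun k => ∑' j, A (k - j) * B j) (∑' p : (Fin d → ℤ) × (Fin d → ℤ), A (p.1 - p.2) * B p.2) :=
    HasSum.prod_fiberwise hF.hasSum (fun k => (hFk k).hasSum)
  have hGsum : Summable (fun k => ∑' j, A (k - j) * B j) := ⟨_, hGs⟩
  have hGval : (∑' k, ∑' j, A (k - j) * B j) =
      (∑' k, A k) * (∑' k, B k) := by
    rw [hGs.tsum_eq]
    have h1 : (∑' p : (Fin d → ℤ) × (Fin d → ℤ), A (p.1 - p.2) * B p.2) = ∑' p : (Fin d → ℤ) × (Fin d → ℤ), A p.1 * B p.2 := by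
      exact Equiv.tsum_eq (shearEquiv (Fin d → ℤ)) (fun p : (Fin d → ℤ) × (Fin d → ℤ) => A p.1 * B p.2)
    rw [h1, ← Summable.tsum_mul_tsum ha hb hprod]
  have hG0 : ∀ k, 0 ≤ ∑' j, A (k - j) * B j :=
    fun k => tsum_nonneg (fun j => mul_nonneg (hA0 _) (hB0 _))
  have hconv_pos : ∀ k, 0 ≤ ‖∑' j, a (k - j) * b j‖ ^ r * m k ^ r := fun k =>
    mul_nonneg (Real.rpow_nonneg (norm_nonneg _) r) (Real.rpow_nonneg (hm_pos k).le r)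
  have hsum : Summable (fun k => ‖∑' j, a (k - j) * b j‖ ^ r * m k ^ r) :=
    Summable.of_nonneg_of_le hconv_pos Hk (hGsum.mul_left _)
  refine ⟨hsum, ?_⟩
  calc (∑' k, ‖∑' j, a (k - j) * b j‖ ^ r * m k ^ r)
      ≤ ∑' k, C0 ^ r * ∑' j, A (k - j) * B j :=
        Summable.tsum_le_tsum Hk hsum (hGsum.mul_left _)
    _ = C0 ^ r * ((∑' k, A k) * (∑' k, B k)) := by rw [tsum_mul_left, hGval]

/-- Young's inequality in the quasi-Banach range `0 < r < 1`: for a submultiplicative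
weight `v` and a `v`-moderate weight `m` on `ℤ^d`, `ℓ^r_m ∗ ℓ^r_v ⊆ ℓ^r_m` with
`‖a∗b‖_{ℓ^r_m} ≤ C ‖a‖_{ℓ^r_m} ‖b‖_{ℓ^r_v}`, where `C` depends only on `m` and `v`,
and `C = 1` when `m ≡ v ≡ 1`. -/
theorem young_quasi (d : ℕ) (r : ℝ) (hr0 : 0 < r) (hr1 : r < 1)
    (v m : (Fin d → ℤ) → ℝ) (hv_pos : ∀ k, 0 < v k) (hm_pos : ∀ k, 0 < m k)
    (hsub : ∀ j k, v (j + k) ≤ v j * v k)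
    (Cm : ℝ) (hmod : ∀ j k, m (j + k) ≤ Cm * v j * m k) :
    (∃ C > 0, ∀ a b : (Fin d → ℤ) → ℂ,
        Summable (fun k => ‖a k‖ ^ r * m k ^ r) →
        Summable (fun k => ‖b k‖ ^ r * v k ^ r) →
        Summable (fun k => ‖∑' j, a (k - j) * b j‖ ^ r * m k ^ r) ∧
          (∑' k, ‖∑' j, a (k - j) * b j‖ ^ r * m k ^ r) ^ (1 / r) ≤
            C * (∑' k, ‖a k‖ ^ r * m k ^ r) ^ (1 / r) *
              (∑' k, ‖b k‖ ^ r * v k ^ r) ^ (1 / r)) ∧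
    ((∀ k, m k = 1) → (∀ k, v k = 1) → ∀ a b : (Fin d → ℤ) → ℂ,
        Summable (fun k => ‖a k‖ ^ r * m k ^ r) →
        Summable (fun k => ‖b k‖ ^ r * v k ^ r) →
        (∑' k, ‖∑' j, a (k - j) * b j‖ ^ r * m k ^ r) ^ (1 / r) ≤
          (∑' k, ‖a k‖ ^ r * m k ^ r) ^ (1 / r) *
            (∑' k, ‖b k‖ ^ r * v k ^ r) ^ (1 / r)) := by
  have hCm : 0 < Cm := by
    have h := hmod 0 0
    rw [add_zero] at h
    nlinarith [hm_pos 0, hv_pos 0, mul_pos (hv_pos 0) (hm_pos 0)]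
  have hnn : ∀ (w : (Fin d → ℤ) → ℝ), (∀ k, 0 < w k) → ∀ (c : (Fin d → ℤ) → ℂ),
      0 ≤ ∑' k, ‖c k‖ ^ r * w k ^ r := fun w hw c =>
    tsum_nonneg fun k => mul_nonneg (Real.rpow_nonneg (norm_nonneg _) r)
      (Real.rpow_nonneg (hw k).le r)
  constructor
  · refine ⟨Cm, hCm, fun a b ha hb => ?_⟩
    obtain ⟨hs, hle⟩ := young_core hr0 hr1 v m hv_pos hm_pos hCm hmod a b ha hb
    refine ⟨hs, ?_⟩
    have hL0 : 0 ≤ ∑' k, ‖∑' j, a (k - j) * b j‖ ^ r * m k ^ r := hnn m hm_pos _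
    have hSa := hnn m hm_pos a
    have hSb := hnn v hv_pos b
    calc (∑' k, ‖∑' j, a (k - j) * b j‖ ^ r * m k ^ r) ^ (1 / r)
        ≤ (Cm ^ r * ((∑' k, ‖a k‖ ^ r * m k ^ r) * (∑' k, ‖b k‖ ^ r * v k ^ r))) ^ (1 / r) :=
          Real.rpow_le_rpow hL0 hle (by positivity)
      _ = Cm * (∑' k, ‖a k‖ ^ r * m k ^ r) ^ (1 / r) *
            (∑' k, ‖b k‖ ^ r * v k ^ r) ^ (1 / r) := by
          rw [Real.mul_rpow (Real.rpow_nonneg hCm.le r) (mul_nonneg hSa hSb),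
            Real.mul_rpow hSa hSb, ← Real.rpow_mul hCm.le,
            mul_one_div_cancel hr0.ne', Real.rpow_one, mul_assoc]
  · intro hm1 hv1 a b ha hb
    have hmod1 : ∀ j k, m (j + k) ≤ 1 * v j * m k := by
      intro j k; simp [hm1, hv1]
    obtain ⟨hs, hle⟩ := young_core hr0 hr1 v m hv_pos hm_pos one_pos hmod1 a b ha hb
    rw [Real.one_rpow, one_mul] at hle
    have hL0 : 0 ≤ ∑' k, ‖∑' j, a (k - j) * b j‖ ^ r * m k ^ r := hnn m hm_pos _
    have hSa := hnn m hm_pos a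
    have hSb := hnn v hv_pos b
    calc (∑' k, ‖∑' j, a (k - j) * b j‖ ^ r * m k ^ r) ^ (1 / r)
        ≤ ((∑' k, ‖a k‖ ^ r * m k ^ r) * (∑' k, ‖b k‖ ^ r * v k ^ r)) ^ (1 / r) :=
          Real.rpow_le_rpow hL0 hle (by positivity)
      _ = _ := Real.mul_rpow hSa hSb
end

section
/- In a quasi-Banach algebra A whose quasi-norm is a q-norm (0 < q ≤ 1) with multiplicative constant C_P (‖xy‖ ≤ C_P‖x‖‖y‖) and unit e with ‖e‖ = 1: if x ∈ A satisfies ‖x‖ < 1/C_P, then e − x is invertible in A, its inverse s = ∑_{n≥0} x^n satisfies ‖s − e − x‖ ≤ C_P²‖x‖²/(1 − (C_P‖x‖)^q)^{1/q}, and |φ(x)| < 1 for every complex homomorphism φ : A → ℂ. -/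
/-- A quasi-Banach algebra structure on a complete metric ring `A`: the quasi-norm `N`
is a `q`-norm (`0 < q ≤ 1`), is multiplicative up to the constant `C_P ≥ 1`,
`‖e‖ = 1`, and the metric is induced by `N (x - y) ^ q`. -/
class QuasiBanachAlgebra (A : Type*) [Ring A] [Algebra ℂ A] [MetricSpace A] [CompleteSpace A]
    (N : A → ℝ) (q Cp : ℝ) : Prop where
  q_pos : 0 < q
  q_le_one : q ≤ 1
  one_le_Cp : 1 ≤ Cp
  nonneg : ∀ x, 0 ≤ N x
  eq_zero_iff : ∀ x, N x = 0 ↔ x = 0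
  smul_eq : ∀ (c : ℂ) (x : A), N (c • x) = ‖c‖ * N x
  add_pow_le : ∀ x y, N (x + y) ^ q ≤ N x ^ q + N y ^ q
  mul_le : ∀ x y, N (x * y) ≤ Cp * N x * N y
  norm_one : N 1 = 1
  dist_eq : ∀ x y, dist x y = N (x - y) ^ q

open Filter Finset

lemma qba_main {A : Type*} [Ring A] [Algebra ℂ A] [MetricSpace A] [CompleteSpace A]
    (N : A → ℝ) (q Cp : ℝ) [hQ : QuasiBanachAlgebra A N q Cp]
    (x : A) (hx : N x < 1 / Cp) :
    ∃ s : A, (1 - x) * s = 1 ∧ s * (1 - x) = 1 ∧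
      N (s - 1 - x) ≤ Cp ^ 2 * N x ^ 2 / (1 - (Cp * N x) ^ q) ^ (1 / q) := by
  have hq : 0 < q := hQ.q_pos
  have hCp : (0:ℝ) < Cp := lt_of_lt_of_le one_pos hQ.one_le_Cp
  have hNx : 0 ≤ N x := hQ.nonneg x
  have hr0 : 0 ≤ Cp * N x := mul_nonneg hCp.le hNx
  have hr1 : Cp * N x < 1 := by
    rw [lt_div_iff₀ hCp] at hx; linarith [hx]
  set r := (Cp * N x) ^ q with hrdef
  have hr_nonneg : 0 ≤ r := Real.rpow_nonneg hr0 q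
  have hr_lt : r < 1 := Real.rpow_lt_one hr0 hr1 hq
  have N_zero : N (0:A) = 0 := (hQ.eq_zero_iff 0).mpr rfl
  have N_neg : ∀ a : A, N (-a) = N a := by
    intro a
    rw [← neg_one_smul ℂ a, hQ.smul_eq]
    simp
  have hpow : ∀ n : ℕ, N (x ^ n) ≤ (Cp * N x) ^ n := by
    intro n
    induction n with
    | zero => simp [hQ.norm_one]
    | succ n ih =>
      calc N (x ^ (n+1)) = N (x * x ^ n) := by rw [pow_succ']
        _ ≤ Cp * N x * N (x ^ n) := hQ.mul_le _ _
        _ ≤ Cp * N x * (Cp * N x) ^ n := by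
            exact mul_le_mul_of_nonneg_left ih hr0
        _ = (Cp * N x) ^ (n+1) := (pow_succ' _ _).symm
  have hpowq : ∀ n : ℕ, N (x ^ n) ^ q ≤ r ^ n := by
    intro n
    calc N (x ^ n) ^ q ≤ ((Cp * N x) ^ n) ^ q :=
          Real.rpow_le_rpow (hQ.nonneg _) (hpow n) hq.le
      _ = r ^ n := by
          rw [← Real.rpow_natCast (Cp * N x) n, ← Real.rpow_mul hr0, hrdef,
            ← Real.rpow_natCast ((Cp * N x) ^ q) n, ← Real.rpow_mul hr0,
            mul_comm (n : ℝ) q]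
  set S : ℕ → A := fun m => ∑ i ∈ range m, x ^ i with hSdef
  have hcauchy : CauchySeq S := by
    apply cauchySeq_of_le_geometric r 1 hr_lt
    intro n
    have hstep : S n - S (n+1) = -(x ^ n) := by
      simp [hSdef, Finset.sum_range_succ]
    rw [hQ.dist_eq, hstep, N_neg, one_mul]
    exact hpowq n
  obtain ⟨s, hs⟩ := cauchySeq_tendsto_of_complete hcauchy
  have hmul_left : ∀ (y : A) (f : ℕ → A) (l : A), Tendsto f atTop (nhds l) →
      Tendsto (fun n => y * f n) atTop (nhds (y * l)) := by
    intro y f l hf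
    rw [tendsto_iff_dist_tendsto_zero] at hf ⊢
    apply squeeze_zero (fun n => dist_nonneg) (g := fun n => (Cp * N y) ^ q * dist (f n) l)
    · intro n
      rw [hQ.dist_eq, hQ.dist_eq]
      have h1 : y * f n - y * l = y * (f n - l) := (mul_sub _ _ _).symm
      rw [h1]
      calc N (y * (f n - l)) ^ q ≤ (Cp * N y * N (f n - l)) ^ q :=
            Real.rpow_le_rpow (hQ.nonneg _) (hQ.mul_le _ _) hq.le
        _ = (Cp * N y) ^ q * N (f n - l) ^ q :=
            Real.mul_rpow (mul_nonneg hCp.le (hQ.nonneg y)) (hQ.nonneg _)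
    · simpa using hf.const_mul ((Cp * N y) ^ q)
  have hmul_right : ∀ (y : A) (f : ℕ → A) (l : A), Tendsto f atTop (nhds l) →
      Tendsto (fun n => f n * y) atTop (nhds (l * y)) := by
    intro y f l hf
    rw [tendsto_iff_dist_tendsto_zero] at hf ⊢
    apply squeeze_zero (fun n => dist_nonneg) (g := fun n => (Cp * N y) ^ q * dist (f n) l)
    · intro n
      rw [hQ.dist_eq, hQ.dist_eq]
      have h1 : f n * y - l * y = (f n - l) * y := (sub_mul _ _ _).symm
      rw [h1]
      calc N ((f n - l) * y) ^ q ≤ (Cp * N (f n - l) * N y) ^ q :=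
            Real.rpow_le_rpow (hQ.nonneg _) (hQ.mul_le _ _) hq.le
        _ = (Cp * N y) ^ q * N (f n - l) ^ q := by
            rw [← Real.mul_rpow (mul_nonneg hCp.le (hQ.nonneg y)) (hQ.nonneg _)]
            ring_nf
    · simpa using hf.const_mul ((Cp * N y) ^ q)
  have key1 : ∀ m, (1 - x) * S m = 1 - x ^ m := by
    intro m
    have h := mul_geom_sum x m
    have h2 : (1 - x) = -(x - 1) := (neg_sub x 1).symm
    rw [h2, neg_mul, hSdef]
    simp only [h]
    exact neg_sub _ _
  have key2 : ∀ m, S m * (1 - x) = 1 - x ^ m := by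
    intro m
    have h := geom_sum_mul x m
    have h2 : (1 - x) = -(x - 1) := (neg_sub x 1).symm
    rw [h2, mul_neg, hSdef]
    simp only [h]
    exact neg_sub _ _
  have hxm : Tendsto (fun m : ℕ => 1 - x ^ m) atTop (nhds (1:A)) := by
    rw [tendsto_iff_dist_tendsto_zero]
    apply squeeze_zero (fun n => dist_nonneg) (g := fun m => r ^ m)
    · intro m
      rw [hQ.dist_eq]
      have : (1 : A) - x ^ m - 1 = -(x ^ m) := by abel
      rw [this, N_neg]
      exact hpowq m
    · exact tendsto_pow_atTop_nhds_zero_of_lt_one hr_nonneg hr_lt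
  have h1 : (1 - x) * s = 1 := by
    have t1 := hmul_left (1 - x) S s hs
    simp only [key1] at t1
    exact tendsto_nhds_unique t1 hxm
  have h2 : s * (1 - x) = 1 := by
    have t1 := hmul_right (1 - x) S s hs
    simp only [key2] at t1
    exact tendsto_nhds_unique t1 hxm
  refine ⟨s, h1, h2, ?_⟩
  have htri : ∀ (t : Finset ℕ) (f : ℕ → A), N (∑ i ∈ t, f i) ^ q ≤ ∑ i ∈ t, N (f i) ^ q := by
    intro t f
    induction t using Finset.cons_induction with
    | empty => simp [N_zero, Real.zero_rpow hq.ne']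
    | cons a t ha ih =>
      rw [Finset.sum_cons, Finset.sum_cons]
      exact le_trans (hQ.add_pow_le _ _) (by linarith)
  have hIco : ∀ m, 2 ≤ m → S m - 1 - x = ∑ i ∈ Ico 2 m, x ^ i := by
    intro m hm
    have hc : ∑ i ∈ Ico 0 2, x ^ i + ∑ i ∈ Ico 2 m, x ^ i = ∑ i ∈ Ico 0 m, x ^ i :=
      Finset.sum_Ico_consecutive _ (by norm_num) hm
    have h02 : ∑ i ∈ Ico 0 2, x ^ i = 1 + x := by
      rw [← Finset.range_eq_Ico]
      simp [Finset.sum_range_succ]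
    rw [hSdef]
    simp only [Finset.range_eq_Ico]
    rw [← hc, h02]
    abel
  have hgeom : ∀ m, ∑ i ∈ Ico 2 m, r ^ i ≤ r ^ 2 / (1 - r) := by
    intro m
    rcases le_or_gt 2 m with hm | hm
    · rw [Finset.sum_Ico_eq_sum_range]
      have : ∀ i, r ^ (2 + i) = r ^ 2 * r ^ i := fun i => pow_add r 2 i
      simp only [this, ← Finset.mul_sum]
      rw [div_eq_mul_inv]
      apply mul_le_mul_of_nonneg_left _ (by positivity)
      rw [geom_sum_eq hr_lt.ne]
      have h1 : 0 ≤ r ^ (m - 2) := by positivity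
      have h2 : (r ^ (m-2) - 1) / (r - 1) = (1 - r ^ (m-2)) / (1 - r) := by
        rw [div_eq_div_iff (by intro hc; rw [sub_eq_zero] at hc; exact hr_lt.ne hc : r - 1 ≠ 0)
          (by intro hc; linarith [sub_eq_zero.mp hc] : (1:ℝ) - r ≠ 0)]
        ring
      rw [h2, ← one_div]
      gcongr
      · linarith
    · have : Ico 2 m = ∅ := Finset.Ico_eq_empty (by omega)
      rw [this]
      simp only [Finset.sum_empty]
      apply div_nonneg (by positivity)
      linarith
  have sumbound : ∀ m, 2 ≤ m → N (S m - 1 - x) ^ q ≤ r ^ 2 / (1 - r) := by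
    intro m hm
    rw [hIco m hm]
    calc N (∑ i ∈ Ico 2 m, x ^ i) ^ q ≤ ∑ i ∈ Ico 2 m, N (x ^ i) ^ q := htri _ _
      _ ≤ ∑ i ∈ Ico 2 m, r ^ i := Finset.sum_le_sum (fun i _ => hpowq i)
      _ ≤ r ^ 2 / (1 - r) := hgeom m
  have hfin : N (s - 1 - x) ^ q ≤ r ^ 2 / (1 - r) := by
    have hdist0 : Tendsto (fun m => dist s (S m)) atTop (nhds 0) := by
      have := tendsto_iff_dist_tendsto_zero.mp hs
      simpa [dist_comm] using this
    have hlim : Tendsto (fun m => r ^ 2 / (1 - r) + dist s (S m)) atTop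
        (nhds (r ^ 2 / (1 - r))) := by
      simpa using (tendsto_const_nhds (x := r^2/(1-r)) (f := atTop)).add hdist0
    refine ge_of_tendsto hlim ?_
    filter_upwards [eventually_ge_atTop 2] with m hm
    have habc := hQ.add_pow_le (S m - 1 - x) (s - S m)
    have hsum : (S m - 1 - x) + (s - S m) = s - 1 - x := by abel
    rw [hsum] at habc
    calc N (s - 1 - x) ^ q ≤ N (S m - 1 - x) ^ q + N (s - S m) ^ q := habc
      _ ≤ r ^ 2 / (1 - r) + dist s (S m) := by
          refine add_le_add (sumbound m hm) (le_of_eq ?_)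
          rw [hQ.dist_eq]
  have ha : 0 ≤ N (s - 1 - x) := hQ.nonneg _
  have key : N (s - 1 - x) = (N (s - 1 - x) ^ q) ^ (1/q) := by
    rw [one_div, Real.rpow_rpow_inv ha hq.ne']
  rw [key]
  calc (N (s - 1 - x) ^ q) ^ (1/q) ≤ (r ^ 2 / (1 - r)) ^ (1/q) :=
        Real.rpow_le_rpow (Real.rpow_nonneg ha q) hfin (by positivity)
    _ = Cp ^ 2 * N x ^ 2 / (1 - r) ^ (1/q) := by
        rw [Real.div_rpow (by positivity) (by linarith : (0:ℝ) ≤ 1 - r)]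
        congr 1
        rw [hrdef, ← Real.rpow_natCast ((Cp * N x) ^ q) 2, ← Real.rpow_mul hr0,
          ← Real.rpow_mul hr0]
        have : q * (2:ℕ) * (1/q) = 2 := by field_simp; norm_num
        rw [this]
        rw [show ((2:ℝ) = ((2:ℕ):ℝ)) by norm_num, Real.rpow_natCast]
        rw [mul_pow]

/-- Neumann series in a quasi-Banach algebra: if `‖x‖ < 1/C_P` then `e - x` is
invertible, its inverse `s` satisfies
`‖s - e - x‖ ≤ C_P²‖x‖²/(1-(C_P‖x‖)^q)^{1/q}`, and `|φ(x)| < 1` for every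
complex homomorphism `φ`. -/
theorem neumann_quasiBanach (A : Type*) [Ring A] [Algebra ℂ A] [MetricSpace A]
    [CompleteSpace A] (N : A → ℝ) (q Cp : ℝ) [QuasiBanachAlgebra A N q Cp]
    (x : A) (hx : N x < 1 / Cp) :
    IsUnit (1 - x) ∧
      N (Ring.inverse (1 - x) - 1 - x) ≤
        Cp ^ 2 * N x ^ 2 / (1 - (Cp * N x) ^ q) ^ (1 / q) ∧
      ∀ φ : A →ₗ[ℂ] ℂ, (∀ a b, φ (a * b) = φ a * φ b) → φ ≠ 0 → ‖φ x‖ < 1 := by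
  have hQ : QuasiBanachAlgebra A N q Cp := inferInstance
  obtain ⟨s, h1, h2, h3⟩ := qba_main N q Cp x hx
  have hCp : (0:ℝ) < Cp := lt_of_lt_of_le one_pos hQ.one_le_Cp
  refine ⟨⟨⟨1 - x, s, h1, h2⟩, rfl⟩, ?_, ?_⟩
  · have hinv : Ring.inverse (1 - x) = s := by
      rw [show (1 - x) = ((⟨1 - x, s, h1, h2⟩ : Aˣ) : A) from rfl, Ring.inverse_unit]
      rfl
    rw [hinv]
    exact h3
  · intro φ hφmul hφne
    have hone : φ 1 = 1 := by
      obtain ⟨a, ha⟩ : ∃ a, φ a ≠ 0 := by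
        by_contra h
        push_neg at h
        exact hφne (LinearMap.ext h)
      have := hφmul a 1
      rw [mul_one] at this
      have h2' : φ a * φ 1 = φ a * 1 := by rw [← this, mul_one]
      exact mul_left_cancel₀ ha h2'
    by_contra h
    push_neg at h
    set lam := φ x with hlam_def
    have hlam : lam ≠ 0 := by
      intro h0
      rw [h0] at h
      simp at h
      linarith
    have hy : N (lam⁻¹ • x) < 1 / Cp := by
      rw [hQ.smul_eq]
      have hle : ‖lam⁻¹‖ ≤ 1 := by
        rw [norm_inv]
        rw [inv_le_one_iff₀]
        right
        exact h
      calc ‖lam⁻¹‖ * N x ≤ 1 * N x := mul_le_mul_of_nonneg_right hle (hQ.nonneg x)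
        _ = N x := one_mul _
        _ < 1 / Cp := hx
    obtain ⟨t, ht1, _, _⟩ := qba_main N q Cp (lam⁻¹ • x) hy
    have e1 : φ ((1 - lam⁻¹ • x) * t) = 1 := by rw [ht1, hone]
    rw [hφmul] at e1
    have e2 : φ (1 - lam⁻¹ • x) = 0 := by
      rw [map_sub, hone, map_smul]
      simp only [smul_eq_mul, ← hlam_def]
      rw [inv_mul_cancel₀ hlam]
      ring
    rw [e2, zero_mul] at e1
    exact one_ne_zero e1.symm
end

section
/- Gelfand–Mazur for quasi-Banach algebras: if A is a quasi-Banach algebra in which every nonzero element is invertible, then A is isomorphic to ℂ as an algebra (via an isometric isomorphism when ‖e‖ = 1). -/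
noncomputable def qm {A : Type*} (N : A → ℝ) (q : ℝ) (x : A) : ℝ := N x ^ q

section Basic
variable {A : Type*} [Ring A] [Algebra ℂ A] [MetricSpace A] [CompleteSpace A]
  (N : A → ℝ) (q Cp : ℝ) [h : QuasiBanachAlgebra A N q Cp]

include h

lemma qm_nonneg (x : A) : 0 ≤ qm N q x := Real.rpow_nonneg (h.nonneg x) q

lemma qm_zero : qm N q (0 : A) = 0 := by
  have : N (0:A) = 0 := (h.eq_zero_iff 0).2 rfl
  simp [qm, this, Real.zero_rpow (ne_of_gt h.q_pos)]

lemma qm_eq_zero_iff (x : A) : qm N q x = 0 ↔ x = 0 := by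
  rw [qm, Real.rpow_eq_zero (h.nonneg x) (ne_of_gt h.q_pos), h.eq_zero_iff]

lemma qm_pos {x : A} (hx : x ≠ 0) : 0 < qm N q x :=
  lt_of_le_of_ne (qm_nonneg N q Cp x) (fun e => hx ((qm_eq_zero_iff N q Cp x).1 e.symm))

lemma qm_one : qm N q (1 : A) = 1 := by simp [qm, h.norm_one]

lemma qm_add_le (x y : A) : qm N q (x + y) ≤ qm N q x + qm N q y := h.add_pow_le x y

lemma qm_smul (c : ℂ) (x : A) : qm N q (c • x) = ‖c‖ ^ q * qm N q x := by
  rw [qm, h.smul_eq, Real.mul_rpow (norm_nonneg c) (h.nonneg x)]; rfl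

lemma one_le_K : 1 ≤ Cp ^ q := Real.one_le_rpow h.one_le_Cp (le_of_lt h.q_pos)

lemma K_pos : 0 < Cp ^ q := lt_of_lt_of_le one_pos (one_le_K N q Cp)

lemma qm_mul_le (x y : A) : qm N q (x * y) ≤ Cp ^ q * qm N q x * qm N q y := by
  have h1 : N (x * y) ≤ Cp * N x * N y := h.mul_le x y
  have h2 : N (x*y) ^ q ≤ (Cp * N x * N y) ^ q :=
    Real.rpow_le_rpow (h.nonneg _) h1 (le_of_lt h.q_pos)
  calc qm N q (x*y) ≤ (Cp * N x * N y) ^ q := h2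
    _ = Cp ^ q * qm N q x * qm N q y := by
        rw [Real.mul_rpow (by
            have h3 := h.one_le_Cp; have h4 := h.nonneg x; positivity) (h.nonneg y),
          Real.mul_rpow (by
            have h3 := h.one_le_Cp; have h4 := h.nonneg x; positivity) (h.nonneg x)]
        rfl

lemma qm_dist (x y : A) : dist x y = qm N q (x - y) := h.dist_eq x y

lemma qm_sub_abs_le (x y : A) : |qm N q x - qm N q y| ≤ qm N q (x - y) := by
  rw [abs_sub_le_iff]
  constructor
  · have := qm_add_le N q Cp (x - y) y
    simp only [sub_add_cancel] at this; linarith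
  · have := qm_add_le N q Cp (y - x) x
    simp only [sub_add_cancel] at this
    have e : qm N q (y - x) = qm N q (x - y) := by
      have : y - x = (-1 : ℂ) • (x - y) := by simp [neg_sub]
      rw [this, qm_smul N q Cp]
      simp
    linarith

lemma qm_continuous : Continuous (qm N q) := by
  rw [Metric.continuous_iff]
  intro b ε hε
  refine ⟨ε, hε, fun a hab => ?_⟩
  have h1 : |qm N q a - qm N q b| ≤ qm N q (a - b) := qm_sub_abs_le N q Cp a b
  have h2 : dist a b = qm N q (a - b) := qm_dist N q Cp a b
  rw [Real.dist_eq]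
  calc |qm N q a - qm N q b| ≤ qm N q (a-b) := h1
    _ = dist a b := h2.symm
    _ < ε := hab

lemma qm_sum_le {ι : Type*} (s : Finset ι) (f : ι → A) :
    qm N q (∑ i ∈ s, f i) ≤ ∑ i ∈ s, qm N q (f i) := by
  classical
  induction s using Finset.induction_on with
  | empty => simp [qm_zero N q Cp]
  | insert a s hx ih =>
    rw [Finset.sum_insert hx, Finset.sum_insert hx]
    exact le_trans (qm_add_le N q Cp _ _) (by linarith)

lemma qm_natmul (c : ℕ) (z : A) : qm N q (z * (c : A)) = (c : ℝ) ^ q * qm N q z := by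
  have e1 : z * (c : A) = (c : ℂ) • z :=
    ((Nat.cast_commute c z).eq.symm.trans (nsmul_eq_mul c z).symm).trans
      (Nat.cast_smul_eq_nsmul ℂ c z).symm
  rw [e1, qm_smul N q Cp]
  norm_num

end Basic

section SpecR
open Filter Topology
variable {A : Type*} [Ring A] [Algebra ℂ A] [MetricSpace A] [CompleteSpace A]
  (N : A → ℝ) (q Cp : ℝ) [h : QuasiBanachAlgebra A N q Cp]

noncomputable def specR (N : A → ℝ) (q Cp : ℝ) (x : A) : ℝ :=
  ⨅ n : ℕ, (Cp ^ q * qm N q (x ^ (n + 1))) ^ (((n : ℝ) + 1)⁻¹)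

include h

lemma nontrivialA : (1 : A) ≠ 0 := by
  intro e
  have h1 := qm_one N q Cp
  rw [e, qm_zero N q Cp] at h1
  exact one_ne_zero h1.symm

lemma qm_pow_le (x : A) (n : ℕ) : qm N q (x ^ n) ≤ (Cp ^ q * qm N q x) ^ n := by
  induction n with
  | zero => simp [qm_one N q Cp]
  | succ n ih =>
    have h1 : qm N q (x ^ (n+1)) ≤ Cp ^ q * qm N q (x ^ n) * qm N q x := by
      rw [pow_succ]; exact qm_mul_le N q Cp _ _
    have hK := K_pos N q Cp
    have hnn := qm_nonneg N q Cp x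
    calc qm N q (x^(n+1)) ≤ Cp ^ q * qm N q (x ^ n) * qm N q x := h1
      _ = qm N q (x ^ n) * (Cp ^ q * qm N q x) := by ring
      _ ≤ (Cp^q * qm N q x)^n * (Cp ^ q * qm N q x) :=
          mul_le_mul_of_nonneg_right ih (mul_nonneg hK.le hnn)
      _ = (Cp^q * qm N q x)^(n+1) := (pow_succ _ n).symm

lemma specR_nonneg (x : A) : 0 ≤ specR N q Cp x :=
  le_ciInf fun n => Real.rpow_nonneg
    (mul_nonneg (le_of_lt (K_pos N q Cp)) (qm_nonneg N q Cp _)) _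

lemma specR_le (x : A) {n : ℕ} (hn : n ≠ 0) :
    specR N q Cp x ≤ (Cp ^ q * qm N q (x ^ n)) ^ ((n : ℝ)⁻¹) := by
  obtain ⟨m, rfl⟩ : ∃ m, n = m + 1 := ⟨n - 1, by omega⟩
  have hb : BddBelow (Set.range fun n : ℕ =>
      (Cp ^ q * qm N q (x ^ (n + 1))) ^ (((n : ℝ) + 1)⁻¹)) := by
    refine ⟨0, fun r hr => ?_⟩
    obtain ⟨k, rfl⟩ := hr
    exact Real.rpow_nonneg (mul_nonneg (le_of_lt (K_pos N q Cp)) (qm_nonneg N q Cp _)) _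
  have := ciInf_le hb m
  simpa [specR] using this

lemma specR_tendsto {x : A} (hx : IsUnit x) :
    Tendsto (fun n : ℕ => (Cp ^ q * qm N q (x ^ n)) ^ ((n : ℝ)⁻¹)) atTop
      (𝓝 (specR N q Cp x)) := by
  have hnt : Nontrivial A := ⟨⟨1, 0, nontrivialA N q Cp⟩⟩
  have hKpos := K_pos N q Cp
  have hpos : ∀ n : ℕ, 0 < Cp ^ q * qm N q (x ^ n) := fun n =>
    mul_pos hKpos (qm_pos N q Cp ((hx.pow n).ne_zero))
  set u : ℕ → ℝ := fun n => Real.log (Cp ^ q * qm N q (x ^ n)) with hu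
  have hsub : Subadditive u := by
    intro m n
    rw [← Real.log_mul (ne_of_gt (hpos m)) (ne_of_gt (hpos n))]
    apply Real.log_le_log (hpos _)
    have h1 : qm N q (x ^ (m + n)) ≤ Cp ^ q * qm N q (x ^ m) * qm N q (x ^ n) := by
      rw [pow_add]; exact qm_mul_le N q Cp _ _
    nlinarith [qm_nonneg N q Cp (x ^ (m+n)), one_le_K N q Cp, qm_nonneg N q Cp (x^m),
      qm_nonneg N q Cp (x^n)]
  -- lower bound for u n / n
  set y : A := ((hx.unit⁻¹ : Aˣ) : A) with hy
  have hxy1 : x * y = 1 := hx.mul_val_inv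
  have hyx1 : y * x = 1 := hx.val_inv_mul
  have hc : Commute x y := by unfold Commute SemiconjBy; rw [hxy1, hyx1]
  have hxy : ∀ n : ℕ, x ^ n * y ^ n = 1 := by
    intro n
    rw [← hc.mul_pow, hxy1, one_pow]
  have hypos : 0 < Cp ^ q * qm N q y :=
    mul_pos hKpos (qm_pos N q Cp (Units.ne_zero _))
  have hlow : ∀ n : ℕ, (Cp^q * qm N q y)⁻¹ ^ n ≤ Cp ^ q * qm N q (x ^ n) := by
    intro n
    have h1 : (1:ℝ) ≤ Cp ^ q * qm N q (x ^ n) * qm N q (y ^ n) := by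
      have := qm_mul_le N q Cp (x ^ n) (y ^ n)
      rw [hxy n, qm_one N q Cp] at this
      linarith
    have h2 : qm N q (y ^ n) ≤ (Cp ^ q * qm N q y) ^ n := qm_pow_le N q Cp y n
    have h3 : (1:ℝ) ≤ (Cp ^ q * qm N q (x ^ n)) * (Cp ^ q * qm N q y) ^ n := by
      nlinarith [hpos n, pow_nonneg (le_of_lt hypos) n, qm_nonneg N q Cp (y ^ n)]
    rw [inv_pow]
    rw [inv_le_iff_one_le_mul₀ (pow_pos hypos n)] at *
    linarith [h3]
  have hbdd : BddBelow (Set.range fun n : ℕ => u n / n) := by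
    refine ⟨min 0 (-Real.log (Cp ^ q * qm N q y)), fun r hr => ?_⟩
    obtain ⟨n, rfl⟩ := hr
    rcases Nat.eq_zero_or_pos n with rfl | hn
    · simp
    · have h1 : -((n:ℝ) * Real.log (Cp ^ q * qm N q y)) ≤ u n := by
        have := Real.log_le_log (pow_pos (inv_pos.2 hypos) n) (hlow n)
        rw [Real.log_pow, Real.log_inv] at this
        simpa [u] using this
      have hn' : (0:ℝ) < n := by exact_mod_cast hn
      refine le_trans (min_le_right _ _) ?_
      rw [le_div_iff₀ hn']
      calc -Real.log (Cp ^ q * qm N q y) * n = -((n:ℝ) * Real.log (Cp ^ q * qm N q y)) := by ring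
        _ ≤ u n := h1
  have hlim := hsub.tendsto_lim hbdd
  -- exp of limit
  have hexp : Tendsto (fun n : ℕ => Real.exp (u n / n)) atTop (𝓝 (Real.exp hsub.lim)) :=
    (Real.continuous_exp.continuousAt).tendsto.comp hlim
  have heq : ∀ n : ℕ, Real.exp (u n / n) = (Cp ^ q * qm N q (x ^ n)) ^ ((n : ℝ)⁻¹) := by
    intro n
    rcases Nat.eq_zero_or_pos n with rfl | hn
    · simp
    · rw [Real.rpow_def_of_pos (hpos n), div_eq_mul_inv]
  have hexp' : Tendsto (fun n : ℕ => (Cp ^ q * qm N q (x ^ n)) ^ ((n : ℝ)⁻¹)) atTop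
      (𝓝 (Real.exp hsub.lim)) := by
    refine hexp.congr (fun n => heq n)
  -- identify the limit with specR
  have hle1 : Real.exp hsub.lim ≤ specR N q Cp x := by
    apply le_ciInf
    intro n
    have h1 := hsub.lim_le_div hbdd (Nat.succ_ne_zero n)
    have h2 := Real.exp_le_exp.2 h1
    simp only [Nat.succ_eq_add_one] at h2
    rw [heq (n+1)] at h2
    push_cast at h2
    exact h2
  have hle2 : specR N q Cp x ≤ Real.exp hsub.lim := by
    refine ge_of_tendsto hexp' ?_
    filter_upwards [eventually_ge_atTop 1] with n hn
    exact specR_le N q Cp x (by omega)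
  rw [le_antisymm hle1 hle2] at hexp'
  exact hexp'

end SpecR

section SpecRCor
open Filter Topology
variable {A : Type*} [Ring A] [Algebra ℂ A] [MetricSpace A] [CompleteSpace A]
  (N : A → ℝ) (q Cp : ℝ) [h : QuasiBanachAlgebra A N q Cp]

lemma tendsto_crpow_inv_one {c : ℝ} (hc : 0 < c) :
    Tendsto (fun n : ℕ => c ^ ((n : ℝ)⁻¹)) atTop (𝓝 1) := by
  have h1 : Tendsto (fun n : ℕ => ((n : ℝ))⁻¹) atTop (𝓝 0) :=
    tendsto_inv_atTop_zero.comp tendsto_natCast_atTop_atTop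
  have h2 : Tendsto (fun n : ℕ => Real.exp (Real.log c * (n : ℝ)⁻¹)) atTop (𝓝 1) := by
    have := (h1.const_mul (Real.log c)).comp (tendsto_id (x := atTop))
    have h3 : Tendsto (fun n : ℕ => Real.log c * (n : ℝ)⁻¹) atTop (𝓝 0) := by
      simpa using h1.const_mul (Real.log c)
    simpa [Function.comp_def] using (Real.continuous_exp.continuousAt (x := 0)).tendsto.comp h3
  refine h2.congr fun n => ?_
  rw [Real.rpow_def_of_pos hc]

include h

lemma one_le_specR_mul {x y : A} (hx : IsUnit x) (hy : IsUnit y) (hxy : x * y = 1) :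
    1 ≤ specR N q Cp x * specR N q Cp y := by
  have hyx : y * x = 1 := by
    have h9 : y = (↑hx.unit⁻¹ : A) := by
      calc y = (↑hx.unit⁻¹ : A) * (x * y) := by rw [← mul_assoc, hx.val_inv_mul, one_mul]
        _ = (↑hx.unit⁻¹ : A) := by rw [hxy, mul_one]
    rw [h9, hx.val_inv_mul]
  have hc : Commute x y := by unfold Commute SemiconjBy; rw [hxy, hyx]
  have hpows : ∀ n : ℕ, x ^ n * y ^ n = 1 := fun n => by
    rw [← hc.mul_pow, hxy, one_pow]
  refine ge_of_tendsto ((specR_tendsto N q Cp hx).mul (specR_tendsto N q Cp hy)) ?_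
  filter_upwards [eventually_ge_atTop 1] with n hn
  have hK := K_pos N q Cp
  have h1 : (1:ℝ) ≤ (Cp ^ q * qm N q (x ^ n)) * (Cp ^ q * qm N q (y ^ n)) := by
    have h2 := qm_mul_le N q Cp (x ^ n) (y ^ n)
    rw [hpows n, qm_one N q Cp] at h2
    nlinarith [one_le_K N q Cp, qm_nonneg N q Cp (x ^ n), qm_nonneg N q Cp (y ^ n)]
  calc (1:ℝ) = 1 ^ ((n:ℝ)⁻¹) := (Real.one_rpow _).symm
    _ ≤ ((Cp ^ q * qm N q (x ^ n)) * (Cp ^ q * qm N q (y ^ n))) ^ ((n:ℝ)⁻¹) :=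
        Real.rpow_le_rpow zero_le_one h1 (by positivity)
    _ = (Cp ^ q * qm N q (x ^ n)) ^ ((n:ℝ)⁻¹) * (Cp ^ q * qm N q (y ^ n)) ^ ((n:ℝ)⁻¹) :=
        Real.mul_rpow (mul_nonneg (K_pos N q Cp).le (qm_nonneg N q Cp _)) (mul_nonneg (K_pos N q Cp).le (qm_nonneg N q Cp _))

lemma specR_pos {x : A} (hx : IsUnit x) : 0 < specR N q Cp x := by
  have h1 := one_le_specR_mul N q Cp hx hx.unit⁻¹.isUnit hx.mul_val_inv
  have h2 := specR_nonneg N q Cp x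
  have h3 := specR_nonneg N q Cp (↑hx.unit⁻¹ : A)
  nlinarith

lemma specR_pow {x : A} (hx : IsUnit x) {m : ℕ} (hm : m ≠ 0) :
    specR N q Cp (x ^ m) = specR N q Cp x ^ m := by
  have t1 := specR_tendsto N q Cp (hx.pow m)
  have hmn : Tendsto (fun n : ℕ => m * n) atTop atTop :=
    Filter.tendsto_atTop_atTop.2 fun b =>
      ⟨b, fun n hn => le_trans hn (Nat.le_mul_of_pos_left n (Nat.pos_of_ne_zero hm))⟩
  have t2 : Tendsto (fun n : ℕ =>
      ((Cp ^ q * qm N q (x ^ (m * n))) ^ (((m * n : ℕ) : ℝ)⁻¹)) ^ m) atTop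
      (𝓝 (specR N q Cp x ^ m)) :=
    ((specR_tendsto N q Cp hx).comp hmn).pow m
  have t3 : Tendsto (fun n : ℕ => (Cp ^ q * qm N q ((x ^ m) ^ n)) ^ ((n : ℝ)⁻¹)) atTop
      (𝓝 (specR N q Cp x ^ m)) := by
    refine t2.congr' ?_
    filter_upwards [eventually_ge_atTop 1] with n hn
    have hnn : 0 ≤ Cp ^ q * qm N q (x ^ (m * n)) :=
      mul_nonneg (K_pos N q Cp).le (qm_nonneg N q Cp _)
    rw [← pow_mul]
    rw [← Real.rpow_natCast ((Cp ^ q * qm N q (x ^ (m * n))) ^ (((m * n : ℕ) : ℝ)⁻¹)) m,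
      ← Real.rpow_mul hnn]
    congr 1
    have hm' : ((m:ℝ)) ≠ 0 := Nat.cast_ne_zero.2 hm
    have hn' : ((n:ℝ)) ≠ 0 := Nat.cast_ne_zero.2 (by omega)
    push_cast
    field_simp
  exact tendsto_nhds_unique t1 t3

lemma specR_mul_le {x y : A} (hc : Commute x y) (hx : IsUnit x) (hy : IsUnit y) :
    specR N q Cp (x * y) ≤ specR N q Cp x * specR N q Cp y := by
  refine le_of_tendsto_of_tendsto' (specR_tendsto N q Cp (hx.mul hy))
    ((specR_tendsto N q Cp hx).mul (specR_tendsto N q Cp hy)) fun n => ?_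
  have hK := K_pos N q Cp
  have h1 : Cp ^ q * qm N q ((x * y) ^ n) ≤
      (Cp ^ q * qm N q (x ^ n)) * (Cp ^ q * qm N q (y ^ n)) := by
    rw [hc.mul_pow]
    have h2 := qm_mul_le N q Cp (x ^ n) (y ^ n)
    nlinarith [qm_nonneg N q Cp (x ^ n), qm_nonneg N q Cp (y ^ n), one_le_K N q Cp,
      qm_nonneg N q Cp (x ^ n * y ^ n)]
  calc (Cp ^ q * qm N q ((x*y) ^ n)) ^ ((n:ℝ)⁻¹)
      ≤ ((Cp ^ q * qm N q (x ^ n)) * (Cp ^ q * qm N q (y ^ n))) ^ ((n:ℝ)⁻¹) :=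
        Real.rpow_le_rpow (mul_nonneg (K_pos N q Cp).le (qm_nonneg N q Cp _)) h1 (by positivity)
    _ = (Cp ^ q * qm N q (x ^ n)) ^ ((n:ℝ)⁻¹) * (Cp ^ q * qm N q (y ^ n)) ^ ((n:ℝ)⁻¹) :=
        Real.mul_rpow (mul_nonneg (K_pos N q Cp).le (qm_nonneg N q Cp _)) (mul_nonneg (K_pos N q Cp).le (qm_nonneg N q Cp _))

lemma specR_smul {x : A} (hx : IsUnit x) {c : ℂ} (hc : c ≠ 0) :
    specR N q Cp (c • x) = ‖c‖ ^ q * specR N q Cp x := by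
  have hcx : IsUnit (c • x) := by
    refine ⟨⟨c • x, c⁻¹ • (↑hx.unit⁻¹ : A), ?_, ?_⟩, rfl⟩
    · rw [smul_mul_smul_comm, mul_inv_cancel₀ hc, hx.mul_val_inv, one_smul]
    · rw [smul_mul_smul_comm, inv_mul_cancel₀ hc, hx.val_inv_mul, one_smul]
  have t1 := specR_tendsto N q Cp hcx
  have t2 : Tendsto (fun n : ℕ => ‖c‖ ^ q * (Cp ^ q * qm N q (x ^ n)) ^ ((n : ℝ)⁻¹)) atTop
      (𝓝 (‖c‖ ^ q * specR N q Cp x)) := (specR_tendsto N q Cp hx).const_mul _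
  have t3 : Tendsto (fun n : ℕ => (Cp ^ q * qm N q ((c • x) ^ n)) ^ ((n : ℝ)⁻¹)) atTop
      (𝓝 (‖c‖ ^ q * specR N q Cp x)) := by
    refine t2.congr' ?_
    filter_upwards [eventually_ge_atTop 1] with n hn
    have hn0 : n ≠ 0 := by omega
    have e1 : (c • x) ^ n = (c ^ n) • x ^ n := smul_pow c x n
    have e2 : qm N q ((c • x) ^ n) = (‖c‖ ^ q) ^ n * qm N q (x ^ n) := by
      rw [e1, qm_smul N q Cp, norm_pow]
      congr 1
      rw [← Real.rpow_natCast ‖c‖ n, ← Real.rpow_mul (norm_nonneg c), mul_comm,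
        Real.rpow_mul (norm_nonneg c), Real.rpow_natCast]
    rw [e2]
    have e3 : Cp ^ q * ((‖c‖ ^ q) ^ n * qm N q (x ^ n)) =
        (‖c‖ ^ q) ^ n * (Cp ^ q * qm N q (x ^ n)) := by ring
    rw [e3, Real.mul_rpow (by positivity) (mul_nonneg (K_pos N q Cp).le (qm_nonneg N q Cp _)),
      Real.pow_rpow_inv_natCast (by positivity) hn0]
  exact tendsto_nhds_unique t1 t3

lemma specR_one : specR N q Cp (1 : A) = 1 := by
  have h1 : specR N q Cp ((1:A) ^ 2) = specR N q Cp (1:A) ^ 2 :=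
    specR_pow N q Cp isUnit_one two_ne_zero
  rw [one_pow] at h1
  have h2 := specR_pos N q Cp (isUnit_one (M := A))
  nlinarith

lemma specR_le_qm (x : A) : specR N q Cp x ≤ Cp ^ q * qm N q x := by
  have := specR_le N q Cp x (n := 1) one_ne_zero
  simpa using this

lemma specR_exists_bound {x : A} (hx : IsUnit x) {a : ℝ} (ha : specR N q Cp x < a) :
    ∃ C : ℝ, 1 ≤ C ∧ ∀ k : ℕ, Cp ^ q * qm N q (x ^ k) ≤ C * a ^ k := by
  have ha0 : 0 < a := lt_of_le_of_lt (specR_nonneg N q Cp x) ha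
  have hev : ∀ᶠ n : ℕ in atTop, (Cp ^ q * qm N q (x ^ n)) ^ ((n : ℝ)⁻¹) < a :=
    (specR_tendsto N q Cp hx).eventually_lt_const ha
  obtain ⟨n0, hn0⟩ := eventually_atTop.1 hev
  set C : ℝ := 1 + ∑ j ∈ Finset.range (n0 + 1), (Cp ^ q * qm N q (x ^ j)) / a ^ j with hC
  have hterms : ∀ j, 0 ≤ (Cp ^ q * qm N q (x ^ j)) / a ^ j := fun j => by
    have := qm_nonneg N q Cp (x ^ j); have := (K_pos N q Cp).le; positivity
  have hC1 : 1 ≤ C := by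
    have : 0 ≤ ∑ j ∈ Finset.range (n0 + 1), (Cp ^ q * qm N q (x ^ j)) / a ^ j :=
      Finset.sum_nonneg fun j _ => hterms j
    simp only [hC]; linarith
  refine ⟨C, hC1, fun k => ?_⟩
  rcases lt_or_ge k (n0 + 1) with hk | hk
  · have h1 : (Cp ^ q * qm N q (x ^ k)) / a ^ k ≤
        ∑ j ∈ Finset.range (n0 + 1), (Cp ^ q * qm N q (x ^ j)) / a ^ j :=
      Finset.single_le_sum (fun j _ => hterms j) (Finset.mem_range.2 hk)
    have hak : (0:ℝ) < a ^ k := pow_pos ha0 k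
    rw [div_le_iff₀ hak] at h1
    calc Cp ^ q * qm N q (x ^ k)
        ≤ (∑ j ∈ Finset.range (n0 + 1), (Cp ^ q * qm N q (x ^ j)) / a ^ j) * a ^ k := h1
      _ ≤ C * a ^ k := by
          apply mul_le_mul_of_nonneg_right _ hak.le
          simp only [hC]; linarith
  · have hk0 : k ≠ 0 := by omega
    have h1 : (Cp ^ q * qm N q (x ^ k)) ^ ((k : ℝ)⁻¹) < a := hn0 k (by omega)
    have h2 : Cp ^ q * qm N q (x ^ k) ≤ a ^ k := by
      have h3 := pow_le_pow_left₀ (Real.rpow_nonneg (mul_nonneg (K_pos N q Cp).le (qm_nonneg N q Cp _)) _) h1.le k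
      rwa [Real.rpow_inv_natCast_pow (mul_nonneg (K_pos N q Cp).le (qm_nonneg N q Cp _)) hk0] at h3
    calc Cp ^ q * qm N q (x ^ k) ≤ a ^ k := h2
      _ ≤ C * a ^ k := le_mul_of_one_le_left (pow_pos ha0 k).le hC1

lemma specR_add_le {x y : A} (hc : Commute x y) (hx : IsUnit x) (hy : IsUnit y) :
    specR N q Cp (x + y) ≤ specR N q Cp x + specR N q Cp y := by
  refine le_of_forall_pos_le_add fun ε hε => ?_
  set a : ℝ := specR N q Cp x + ε / 2 with hadef
  set b : ℝ := specR N q Cp y + ε / 2 with hbdef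
  obtain ⟨Cx, hCx1, hCx⟩ := specR_exists_bound N q Cp hx (a := a) (by simp [hadef]; linarith)
  obtain ⟨Cy, hCy1, hCy⟩ := specR_exists_bound N q Cp hy (a := b) (by simp [hbdef]; linarith)
  have ha0 : 0 < a := lt_of_le_of_lt (specR_nonneg N q Cp x) (by simp [hadef]; linarith)
  have hb0 : 0 < b := lt_of_le_of_lt (specR_nonneg N q Cp y) (by simp [hbdef]; linarith)
  have hK := K_pos N q Cp
  have key : ∀ n : ℕ, Cp ^ q * qm N q ((x + y) ^ n) ≤ (Cx * Cy) * (a + b) ^ n := by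
    intro n
    have e1 : (x + y) ^ n = ∑ k ∈ Finset.range (n + 1), x ^ k * y ^ (n - k) * (n.choose k : A) :=
      hc.add_pow n
    have h1 : qm N q ((x + y) ^ n) ≤
        ∑ k ∈ Finset.range (n + 1), ((n.choose k : ℝ)) ^ q * qm N q (x ^ k * y ^ (n - k)) := by
      rw [e1]
      refine le_trans (qm_sum_le N q Cp _ _) (Finset.sum_le_sum fun k _ => ?_)
      rw [qm_natmul N q Cp]
    have h2 : ∀ k ∈ Finset.range (n + 1),
        Cp ^ q * (((n.choose k : ℝ)) ^ q * qm N q (x ^ k * y ^ (n - k))) ≤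
        (n.choose k : ℝ) * ((Cx * a ^ k) * (Cy * b ^ (n - k))) := by
      intro k hk
      have hch1 : (1:ℝ) ≤ (n.choose k : ℝ) := by
        have := Nat.choose_pos (Nat.lt_succ_iff.1 (Finset.mem_range.1 hk))
        exact_mod_cast this
      have hchq : ((n.choose k : ℝ)) ^ q ≤ (n.choose k : ℝ) := by
        have := Real.rpow_le_rpow_of_exponent_le hch1 h.q_le_one
        rwa [Real.rpow_one] at this
      have hm := qm_mul_le N q Cp (x ^ k) (y ^ (n - k))
      have hx' := hCx k
      have hy' := hCy (n - k)
      have hxk := qm_nonneg N q Cp (x ^ k)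
      have hyk := qm_nonneg N q Cp (y ^ (n - k))
      have hKk : (0:ℝ) < Cp ^ q := hK
      have step1 : Cp ^ q * qm N q (x ^ k * y ^ (n - k)) ≤
          (Cp ^ q * qm N q (x ^ k)) * (Cp ^ q * qm N q (y ^ (n - k))) := by
        nlinarith [one_le_K N q Cp, qm_nonneg N q Cp (x ^ k * y ^ (n-k))]
      have step2 : (Cp ^ q * qm N q (x ^ k)) * (Cp ^ q * qm N q (y ^ (n - k))) ≤
          (Cx * a ^ k) * (Cy * b ^ (n - k)) := by
        have h5 : 0 ≤ Cp ^ q * qm N q (x ^ k) := mul_nonneg hK.le hxk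
        have h6 : 0 ≤ Cx * a ^ k := le_trans h5 hx'
        exact mul_le_mul hx' hy' (mul_nonneg hK.le hyk) h6
      have hq0 : (0:ℝ) ≤ ((n.choose k : ℝ)) ^ q := Real.rpow_nonneg (by positivity) q
      have hnn : 0 ≤ Cp ^ q * qm N q (x ^ k * y ^ (n - k)) := mul_nonneg hK.le (qm_nonneg N q Cp _)
      calc Cp ^ q * (((n.choose k : ℝ)) ^ q * qm N q (x ^ k * y ^ (n - k)))
          = ((n.choose k : ℝ)) ^ q * (Cp ^ q * qm N q (x ^ k * y ^ (n - k))) := by ring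
        _ ≤ ((n.choose k : ℝ)) ^ q * ((Cx * a ^ k) * (Cy * b ^ (n - k))) := by
            apply mul_le_mul_of_nonneg_left (le_trans step1 step2) hq0
        _ ≤ (n.choose k : ℝ) * ((Cx * a ^ k) * (Cy * b ^ (n - k))) := by
            apply mul_le_mul_of_nonneg_right hchq
            positivity
    calc Cp ^ q * qm N q ((x + y) ^ n)
        ≤ Cp ^ q * ∑ k ∈ Finset.range (n + 1), ((n.choose k : ℝ)) ^ q *
            qm N q (x ^ k * y ^ (n - k)) := by
          apply mul_le_mul_of_nonneg_left h1 hK.le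
      _ = ∑ k ∈ Finset.range (n + 1), Cp ^ q * (((n.choose k : ℝ)) ^ q *
            qm N q (x ^ k * y ^ (n - k))) := Finset.mul_sum _ _ _
      _ ≤ ∑ k ∈ Finset.range (n + 1), (n.choose k : ℝ) * ((Cx * a ^ k) * (Cy * b ^ (n - k))) :=
          Finset.sum_le_sum h2
      _ = (Cx * Cy) * ∑ k ∈ Finset.range (n + 1), a ^ k * b ^ (n - k) * (n.choose k : ℝ) := by
          rw [Finset.mul_sum]; congr 1; funext k; ring
      _ = (Cx * Cy) * (a + b) ^ n := by rw [← add_pow]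
  have hCC : 0 < Cx * Cy := by nlinarith
  have tnd : Tendsto (fun n : ℕ => (Cx * Cy) ^ ((n : ℝ)⁻¹) * (a + b)) atTop (𝓝 (a + b)) := by
    have := (tendsto_crpow_inv_one hCC).mul_const (a + b)
    simpa using this
  have hfin : specR N q Cp (x + y) ≤ a + b := by
    refine ge_of_tendsto tnd ?_
    filter_upwards [eventually_ge_atTop 1] with n hn
    have hn0 : n ≠ 0 := by omega
    calc specR N q Cp (x + y) ≤ (Cp ^ q * qm N q ((x + y) ^ n)) ^ ((n : ℝ)⁻¹) :=
          specR_le N q Cp _ hn0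
      _ ≤ ((Cx * Cy) * (a + b) ^ n) ^ ((n : ℝ)⁻¹) :=
          Real.rpow_le_rpow (mul_nonneg (K_pos N q Cp).le (qm_nonneg N q Cp _)) (key n) (by positivity)
      _ = (Cx * Cy) ^ ((n : ℝ)⁻¹) * ((a + b) ^ n) ^ ((n : ℝ)⁻¹) :=
          Real.mul_rpow hCC.le (by positivity)
      _ = (Cx * Cy) ^ ((n : ℝ)⁻¹) * (a + b) := by
          rw [Real.pow_rpow_inv_natCast (by positivity) hn0]
  calc specR N q Cp (x + y) ≤ a + b := hfin
    _ = specR N q Cp x + specR N q Cp y + ε := by rw [hadef, hbdef]; ring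

end SpecRCor

section Helpers
open Polynomial
variable {A : Type*} [Ring A] [Algebra ℂ A]

lemma aeval_comm (w : A) (P Q : ℂ[X]) : Commute (aeval w P) (aeval w Q) := by
  unfold Commute SemiconjBy
  rw [← map_mul, ← map_mul, mul_comm]

lemma commute_ring_inverse_right {a b : A} (hb : IsUnit b) (hc : Commute a b) :
    Commute a (Ring.inverse b) := by
  have h1 : Commute a (hb.unit : A) := by rwa [hb.unit_spec]
  have h2 := h1.units_inv_right
  rwa [← Ring.inverse_unit hb.unit, hb.unit_spec] at h2

lemma isUnit_csmul {c : ℂ} (hc : c ≠ 0) {x : A} (hx : IsUnit x) : IsUnit (c • x) := by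
  refine ⟨⟨c • x, c⁻¹ • (↑hx.unit⁻¹ : A), ?_, ?_⟩, rfl⟩
  · rw [smul_mul_smul_comm, mul_inv_cancel₀ hc, hx.mul_val_inv, one_smul]
  · rw [smul_mul_smul_comm, inv_mul_cancel₀ hc, hx.val_inv_mul, one_smul]

lemma aeval_X_sub_C (w : A) (r : ℂ) : aeval w (X - C r) = w - r • 1 := by
  rw [map_sub, aeval_X, aeval_C, Algebra.algebraMap_eq_smul_one]

end Helpers

section NoRoot
open Polynomial
variable {A : Type*} [Ring A] [Algebra ℂ A] [MetricSpace A] [CompleteSpace A]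
  (N : A → ℝ) (q Cp : ℝ) [h : QuasiBanachAlgebra A N q Cp]

include h

lemma smul_one_ne_zero' {c : ℂ} (hc : c ≠ 0) : (c • 1 : A) ≠ 0 := by
  intro he
  have h1 : qm N q (c • (1:A)) = ‖c‖ ^ q * qm N q (1:A) := qm_smul N q Cp c 1
  rw [he, qm_zero N q Cp, qm_one N q Cp, mul_one] at h1
  have : ‖c‖ ^ q ≠ 0 := by
    have : (0:ℝ) < ‖c‖ := norm_pos_iff.2 hc
    positivity
  exact this h1.symm

lemma aeval_ne_zero_of_no_scalar (hA : ∀ y : A, y ≠ 0 → IsUnit y) {w : A}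
    (hw : ∀ c : ℂ, w - c • 1 ≠ 0) {P : ℂ[X]} (hP : P ≠ 0) : aeval w P ≠ 0 := by
  suffices H : ∀ n (P : ℂ[X]), P.natDegree = n → P ≠ 0 → aeval w P ≠ 0 from H _ P rfl hP
  intro n
  induction n using Nat.strong_induction_on with
  | _ n ih =>
    intro P hdeg hP0
    by_cases hd : P.natDegree = 0
    · have hc : P = C (P.coeff 0) := Polynomial.eq_C_of_natDegree_eq_zero hd
      have hc0 : P.coeff 0 ≠ 0 := fun e => hP0 (by rw [hc, e, map_zero])
      rw [hc, aeval_C, Algebra.algebraMap_eq_smul_one]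
      exact smul_one_ne_zero' N q Cp hc0
    · have hdp : 0 < P.degree := natDegree_pos_iff_degree_pos.1 (Nat.pos_of_ne_zero hd)
      obtain ⟨r, hr⟩ := Complex.exists_root hdp
      obtain ⟨Q, hQ⟩ := (dvd_iff_isRoot.2 hr)
      have hQ0 : Q ≠ 0 := fun e => hP0 (by rw [hQ, e, mul_zero])
      have hXC : (X - C r : ℂ[X]) ≠ 0 := X_sub_C_ne_zero r
      have hdQ : Q.natDegree < n := by
        have := Polynomial.natDegree_mul hXC hQ0
        rw [← hQ, natDegree_X_sub_C] at this
        omega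
      intro hzero
      rw [hQ, map_mul, aeval_X_sub_C] at hzero
      have hun : IsUnit (w - r • 1) := hA _ (hw r)
      have hQz : aeval w Q = 0 := by
        have := congrArg (fun z => Ring.inverse (w - r • 1) * z) hzero
        simpa [← mul_assoc, Ring.inverse_mul_cancel _ hun] using this
      exact ih Q.natDegree hdQ Q rfl hQ0 hQz

end NoRoot

section Main
open Polynomial Filter Topology
variable {A : Type*} [Ring A] [Algebra ℂ A] [MetricSpace A] [CompleteSpace A]
  (N : A → ℝ) (q Cp : ℝ) [h : QuasiBanachAlgebra A N q Cp]

include h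

lemma exists_scalar (hA : ∀ y : A, y ≠ 0 → IsUnit y) (x : A) : ∃ c : ℂ, x = c • 1 := by
  by_contra h0
  push_neg at h0
  have hq0 : q ≠ 0 := ne_of_gt h.q_pos
  have hK := K_pos N q Cp
  have hsub : ∀ c : ℂ, x - c • 1 ≠ 0 := fun c => sub_ne_zero.mpr (h0 c)
  have hu : ∀ c : ℂ, IsUnit (x - c • 1) := fun c => hA _ (hsub c)
  set z : ℂ → A := fun c => Ring.inverse (x - c • 1) with hzdef
  have hz : ∀ c, IsUnit (z c) := fun c => isUnit_ringInverse.2 (hu c)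
  have hmulz : ∀ c, (x - c • 1) * z c = 1 := fun c => Ring.mul_inverse_cancel _ (hu c)
  have hzmul : ∀ c, z c * (x - c • 1) = 1 := fun c => Ring.inverse_mul_cancel _ (hu c)
  have haev : ∀ c : ℂ, x - c • 1 = aeval x (X - C c) := fun c => (aeval_X_sub_C x c).symm
  have hcommu : ∀ c d : ℂ, Commute (x - c • 1) (x - d • 1) := fun c d => by
    rw [haev c, haev d]; exact aeval_comm x _ _
  have hcommz : ∀ c d : ℂ, Commute (z c) (z d) := fun c d =>
    (hcommu c d).ringInverse_ringInverse
  set s : ℂ → ℝ := fun c => specR N q Cp (z c) with hsdef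
  have spos : ∀ c, 0 < s c := fun c => specR_pos N q Cp (hz c)
  -- resolvent identity
  have hres : ∀ c d : ℂ, z c - z d = (c - d) • (z c * z d) := by
    intro c d
    have e1 : (x - d • 1) - (x - c • 1) = (c - d) • 1 := by
      rw [sub_smul]; abel
    calc z c - z d
        = z c * ((x - d • 1) * z d) - (z c * (x - c • 1)) * z d := by
          rw [hmulz d, hzmul c, mul_one, one_mul]
      _ = z c * ((x - d • 1) * z d) - z c * ((x - c • 1) * z d) := by rw [mul_assoc]
      _ = z c * (((x - d • 1) - (x - c • 1)) * z d) := by rw [← mul_sub, ← sub_mul]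
      _ = z c * (((c - d) • 1) * z d) := by rw [e1]
      _ = (c - d) • (z c * z d) := by
          rw [smul_mul_assoc, one_mul, mul_smul_comm]
  -- growth inequality
  have hges : ∀ c d : ℂ, s c ≤ s d + ‖c - d‖ ^ q * (s c * s d) := by
    intro c d
    rcases eq_or_ne c d with rfl | hcd
    · have h1 : (0:ℝ) ≤ ‖c - c‖ ^ q * (s c * s c) := by
        have h2 := (spos c).le
        have h3 : (0:ℝ) ≤ ‖c - c‖ ^ q := Real.rpow_nonneg (norm_nonneg _) q
        positivity
      linarith
    · have hcd0 : c - d ≠ 0 := sub_ne_zero.mpr hcd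
      have e1 : z c = z d + (c - d) • (z c * z d) := sub_eq_iff_eq_add'.1 (hres c d)
      have hzu2 : IsUnit (z c * z d) := (hz c).mul (hz d)
      have hsm : IsUnit ((c - d) • (z c * z d)) := isUnit_csmul hcd0 hzu2
      have hcom : Commute (z d) ((c - d) • (z c * z d)) :=
        ((hcommz d c).mul_right (Commute.refl (z d))).smul_right _
      have hrn : (0:ℝ) ≤ ‖c - d‖ ^ q := Real.rpow_nonneg (norm_nonneg _) q
      calc s c = specR N q Cp (z d + (c - d) • (z c * z d)) := by rw [hsdef]; simp only [← e1]
        _ ≤ specR N q Cp (z d) + specR N q Cp ((c - d) • (z c * z d)) :=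
            specR_add_le N q Cp hcom (hz d) hsm
        _ = s d + ‖c - d‖ ^ q * specR N q Cp (z c * z d) := by
            rw [specR_smul N q Cp hzu2 hcd0]
        _ ≤ s d + ‖c - d‖ ^ q * (s c * s d) := by
            have h1 := specR_mul_le N q Cp (hcommz c d) (hz c) (hz d)
            have := mul_le_mul_of_nonneg_left h1 hrn
            linarith
  -- continuity of s
  have scont : Continuous s := by
    rw [Metric.continuous_iff]
    intro d ε hε
    have hsd := spos d
    set β : ℝ := min (1/(2*(s d) + 2)) (ε/(2*(s d)*(s d) + 1)) with hβ
    have hβpos : 0 < β := lt_min (by positivity) (by positivity)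
    refine ⟨β ^ (q⁻¹ : ℝ), Real.rpow_pos_of_pos hβpos _, fun c hc => ?_⟩
    rw [dist_eq_norm] at hc
    have hlt : ‖c - d‖ ^ q < β := by
      have := Real.rpow_lt_rpow (norm_nonneg _) hc h.q_pos
      rwa [Real.rpow_inv_rpow hβpos.le hq0] at this
    have hrn : (0:ℝ) ≤ ‖c - d‖ ^ q := Real.rpow_nonneg (norm_nonneg _) q
    have hβ1 : β ≤ 1/(2*(s d)+2) := min_le_left _ _
    have hβ2 : β ≤ ε/(2*(s d)*(s d)+1) := min_le_right _ _
    have h1 : ‖c - d‖ ^ q * s d ≤ 1/2 := by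
      have h2 := mul_le_mul_of_nonneg_right (le_trans hlt.le hβ1) hsd.le
      have h3 : 1/(2*(s d)+2) * s d ≤ 1/2 := by
        rw [div_mul_eq_mul_div, div_le_div_iff₀ (by positivity) (by norm_num)]
        nlinarith
      linarith
    have hsc2 : s c ≤ 2 * s d := by
      have hg := hges c d
      nlinarith [spos c, mul_le_mul_of_nonneg_right h1 (spos c).le]
    have hbound : ‖c - d‖ ^ q * (2*(s d)*(s d)) < ε := by
      have hsd2 : (0:ℝ) ≤ 2*(s d)*(s d) := mul_nonneg (by linarith) hsd.le
      have h5a : ‖c - d‖ ^ q * (2*(s d)*(s d)) ≤ β * (2*(s d)*(s d)) :=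
        mul_le_mul_of_nonneg_right hlt.le hsd2
      have h5 : ‖c - d‖ ^ q * (2*(s d)*(s d)) < β * (2*(s d)*(s d) + 1) := by
        nlinarith
      have h6 : β * (2*(s d)*(s d)+1) ≤ ε := by
        have h7 := mul_le_mul_of_nonneg_right hβ2
          (by positivity : (0:ℝ) ≤ 2*(s d)*(s d)+1)
        rwa [div_mul_cancel₀ _ (by positivity : (2*(s d)*(s d)+1 : ℝ) ≠ 0)] at h7
      linarith
    rw [Real.dist_eq, abs_sub_lt_iff]
    constructor
    · have hg := hges c d
      nlinarith [mul_le_mul_of_nonneg_left hsc2 (mul_nonneg hrn hsd.le)]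
    · have hg := hges d c
      rw [norm_sub_rev] at hg
      nlinarith [mul_le_mul_of_nonneg_left hsc2 (mul_nonneg hrn hsd.le)]
  -- decay at infinity
  have hdecay : ∀ c : ℂ, 2*(Cp^q * qm N q x + 1) ≤ ‖c‖^q → s c ≤ 2*Cp^q / ‖c‖^q := by
    intro c hhc
    have hqx := qm_nonneg N q Cp x
    have hc0 : c ≠ 0 := by
      intro e
      rw [e] at hhc
      simp only [norm_zero, Real.zero_rpow hq0] at hhc
      nlinarith
    have hcq : (0:ℝ) < ‖c‖^q := Real.rpow_pos_of_pos (norm_pos_iff.2 hc0) q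
    set y : A := 1 - c⁻¹ • x with hy
    have hxy : (-c) • y = x - c • 1 := by
      rw [hy, smul_sub, smul_smul, neg_mul, mul_inv_cancel₀ hc0, neg_smul, neg_smul, one_smul]
      abel
    have hyu : IsUnit y := by
      have h1 : y = (-c)⁻¹ • (x - c • 1) := by
        rw [← hxy, inv_smul_smul₀ (neg_ne_zero.2 hc0)]
      rw [h1]
      exact isUnit_csmul (inv_ne_zero (neg_ne_zero.2 hc0)) (hu c)
    set b : A := Ring.inverse y with hb
    have hyb : y * b = 1 := Ring.mul_inverse_cancel _ hyu
    have hb1 : b = 1 + (c⁻¹ • x) * b := by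
      have h1 : (1 - c⁻¹ • x) * b = 1 := hyb
      rw [sub_mul, one_mul] at h1
      exact (eq_add_of_sub_eq h1)
    have hnormci : ‖(c:ℂ)⁻¹‖ ^ q = (‖c‖^q)⁻¹ := by
      rw [norm_inv, ← Real.inv_rpow (norm_nonneg c)]
    have hqb : qm N q b ≤ 2 := by
      have h2 : qm N q b ≤ 1 + Cp^q * ((‖c‖^q)⁻¹ * qm N q x) * qm N q b := by
        calc qm N q b = qm N q (1 + (c⁻¹ • x) * b) := by rw [← hb1]
          _ ≤ qm N q 1 + qm N q ((c⁻¹ • x) * b) := qm_add_le N q Cp _ _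
          _ ≤ 1 + Cp^q * qm N q (c⁻¹ • x) * qm N q b := by
              rw [qm_one N q Cp]
              linarith [qm_mul_le N q Cp (c⁻¹ • x) b]
          _ = 1 + Cp^q * ((‖c‖^q)⁻¹ * qm N q x) * qm N q b := by
              rw [qm_smul N q Cp, hnormci]
      have h3 : Cp^q * ((‖c‖^q)⁻¹ * qm N q x) ≤ 1/2 := by
        have e2 : Cp^q * ((‖c‖^q)⁻¹ * qm N q x) = (Cp^q * qm N q x) / ‖c‖^q := by
          rw [div_eq_mul_inv]; ring
        rw [e2, div_le_iff₀ hcq]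
        nlinarith
      have hqb0 := qm_nonneg N q Cp b
      nlinarith [mul_le_mul_of_nonneg_right h3 hqb0]
    have hzc : z c = (-c)⁻¹ • b := by
      have h1 : (x - c • 1) * ((-c)⁻¹ • b) = 1 := by
        rw [← hxy, smul_mul_smul_comm, mul_inv_cancel₀ (neg_ne_zero.2 hc0), hyb, one_smul]
      calc z c = z c * ((x - c • 1) * ((-c)⁻¹ • b)) := by rw [h1, mul_one]
        _ = (z c * (x - c • 1)) * ((-c)⁻¹ • b) := by rw [mul_assoc]
        _ = (-c)⁻¹ • b := by rw [hzmul c, one_mul]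
    have hqz : qm N q (z c) ≤ 2 * (‖c‖^q)⁻¹ := by
      rw [hzc, qm_smul N q Cp]
      have e3 : ‖(-c)⁻¹‖ ^ q = (‖c‖^q)⁻¹ := by
        rw [norm_inv, norm_neg, ← Real.inv_rpow (norm_nonneg c)]
      rw [e3]
      have h4 := inv_nonneg.2 hcq.le
      nlinarith
    calc s c ≤ Cp^q * qm N q (z c) := specR_le_qm N q Cp (z c)
      _ ≤ Cp^q * (2*(‖c‖^q)⁻¹) := mul_le_mul_of_nonneg_left hqz hK.le
      _ = 2*Cp^q/‖c‖^q := by rw [div_eq_mul_inv]; ring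
  -- maximum attained
  set a : ℝ := s 0 with ha
  have ha0 : 0 < a := spos 0
  set B : ℝ := max (2*(Cp^q * qm N q x + 1)) (2*Cp^q/a + 1) with hB
  have hBpos : 0 < B :=
    lt_of_lt_of_le (by nlinarith [qm_nonneg N q Cp x]) (le_max_left _ _)
  set Rad : ℝ := B ^ (q⁻¹ : ℝ) with hRad
  have hRadpos : 0 < Rad := Real.rpow_pos_of_pos hBpos _
  have hout : ∀ c : ℂ, Rad < ‖c‖ → s c < a := by
    intro c hcR
    have h1 : B < ‖c‖^q := by
      have h2 := Real.rpow_lt_rpow hRadpos.le hcR h.q_pos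
      rwa [hRad, Real.rpow_inv_rpow hBpos.le hq0] at h2
    have h2 : s c ≤ 2*Cp^q/‖c‖^q := hdecay c (le_trans (le_max_left _ _) h1.le)
    have h3 : 2*Cp^q/a + 1 < ‖c‖^q := lt_of_le_of_lt (le_max_right _ _) h1
    have hcq : (0:ℝ) < ‖c‖^q := lt_trans hBpos h1
    have h4 : 2*Cp^q/‖c‖^q < a := by
      rw [div_lt_iff₀ hcq]
      have h5 : 2*Cp^q/a < ‖c‖^q := by linarith
      rw [div_lt_iff₀ ha0] at h5
      nlinarith
    linarith
  obtain ⟨c₀, hc₀D, hc₀max⟩ := (isCompact_closedBall (0:ℂ) Rad).exists_isMaxOn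
    ⟨0, Metric.mem_closedBall_self hRadpos.le⟩ scont.continuousOn
  set t : ℝ := s c₀ with htdef
  have hat : a ≤ t := hc₀max (Metric.mem_closedBall_self hRadpos.le)
  have htmax : ∀ c, s c ≤ t := by
    intro c
    by_cases hcD : c ∈ Metric.closedBall (0:ℂ) Rad
    · exact hc₀max hcD
    · have h1 : Rad < ‖c‖ := by
        rw [Metric.mem_closedBall, dist_zero_right] at hcD
        linarith [not_le.1 hcD]
      linarith [hout c h1]
  have htpos : 0 < t := lt_of_lt_of_le ha0 hat
  -- the set where s = t is clopen
  set E : Set ℂ := {c | s c = t} with hE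
  have hEne : E.Nonempty := ⟨c₀, rfl⟩
  have hEclosed : IsClosed E := isClosed_eq scont continuous_const
  have hEopen : IsOpen E := by
    rw [Metric.isOpen_iff]
    intro d hd
    refine ⟨(t⁻¹) ^ (q⁻¹ : ℝ), Real.rpow_pos_of_pos (inv_pos.2 htpos) _, fun c hc => ?_⟩
    rw [Metric.mem_ball, dist_eq_norm] at hc
    set μ : ℂ := c - d with hμ
    rcases eq_or_ne μ 0 with hμ0 | hμ0
    · have hcd : c = d := by
        have := sub_eq_zero.1 hμ0
        exact this
      rw [hcd]; exact hd
    · have hμq : ‖μ‖ ^ q < t⁻¹ := by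
        have h2 := Real.rpow_lt_rpow (norm_nonneg _) hc h.q_pos
        rwa [Real.rpow_inv_rpow (inv_pos.2 htpos).le hq0] at h2
      set β : ℝ := ‖μ‖^q * t with hβ
      have hβ0 : 0 ≤ β := mul_nonneg (Real.rpow_nonneg (norm_nonneg _) q) htpos.le
      have hβ1 : β < 1 := by
        have h2 := mul_lt_mul_of_pos_right hμq htpos
        rwa [inv_mul_cancel₀ (ne_of_gt htpos)] at h2
      have hsd : s d = t := hd
      set w : A := x - d • 1 with hw
      have hwu : IsUnit w := hu d
      have key : ∀ m : ℕ, t ≤ s (d + μ) * (1 + β ^ (m+1)) := by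
        intro m
        set n : ℕ := m + 1 with hn
        have hn0 : n ≠ 0 := Nat.succ_ne_zero m
        set ζ : ℂ := Complex.exp (2 * Real.pi * Complex.I / n) with hζ
        have hζprim : IsPrimitiveRoot ζ n := Complex.isPrimitiveRoot_exp n hn0
        have hfact : (X ^ n - C (μ^n) : ℂ[X]) = ∏ i ∈ Finset.range n, (X - C (ζ^i * μ)) :=
          X_pow_sub_C_eq_prod hζprim (Nat.pos_of_ne_zero hn0) rfl
        have hlin : ∀ j : ℕ, aeval w (X - C (ζ^j * μ)) = x - (d + ζ^j*μ) • 1 := by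
          intro j
          rw [aeval_X_sub_C, hw, add_smul]
          abel
        set g : ℕ → A := fun k => aeval w (∏ i ∈ Finset.range (k+1), (X - C (ζ^i * μ))) with hg
        have claim : ∀ k : ℕ, IsUnit (g k) ∧
            specR N q Cp (Ring.inverse (g k)) ≤ s (d + μ) * t ^ k := by
          intro k
          induction k with
          | zero =>
            have e0 : g 0 = x - (d + μ) • 1 := by
              show aeval w (∏ i ∈ Finset.range (0+1), (X - C (ζ^i * μ))) = x - (d + μ) • 1
              rw [zero_add, Finset.range_one, Finset.prod_singleton, hlin 0, pow_zero, one_mul]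
            rw [e0]
            exact ⟨hu (d+μ), by rw [pow_zero, mul_one]⟩
          | succ k ih =>
            have estep : g (k+1) = g k * (x - (d + ζ^(k+1)*μ) • 1) := by
              show aeval w (∏ i ∈ Finset.range (k+1+1), (X - C (ζ^i * μ))) =
                aeval w (∏ i ∈ Finset.range (k+1), (X - C (ζ^i * μ))) *
                  (x - (d + ζ^(k+1)*μ) • 1)
              rw [Finset.prod_range_succ, map_mul, hlin (k+1)]
            have hux : IsUnit (x - (d + ζ^(k+1)*μ) • 1) := hu _
            have hcgl : Commute (g k) (x - (d + ζ^(k+1)*μ) • 1) := by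
              rw [hg, ← hlin (k+1)]
              exact aeval_comm w _ _
            refine ⟨by rw [estep]; exact ih.1.mul hux, ?_⟩
            rw [estep, Ring.mul_inverse_rev' hcgl]
            have hinv1 : IsUnit (Ring.inverse (x - (d + ζ^(k+1)*μ) • 1)) :=
              isUnit_ringInverse.2 hux
            have hinv2 : IsUnit (Ring.inverse (g k)) := isUnit_ringInverse.2 ih.1
            have hcom2 : Commute (Ring.inverse (x - (d+ζ^(k+1)*μ)•1)) (Ring.inverse (g k)) :=
              hcgl.symm.ringInverse_ringInverse
            have h1 := specR_mul_le N q Cp hcom2 hinv1 hinv2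
            have h2 : specR N q Cp (Ring.inverse (x - (d+ζ^(k+1)*μ)•1)) ≤ t :=
              htmax (d + ζ^(k+1)*μ)
            have h3 := ih.2
            have hs0 : 0 ≤ specR N q Cp (Ring.inverse (g k)) := specR_nonneg N q Cp _
            calc specR N q Cp (Ring.inverse (x - (d+ζ^(k+1)*μ)•1) * Ring.inverse (g k))
                ≤ specR N q Cp (Ring.inverse (x - (d+ζ^(k+1)*μ)•1)) *
                    specR N q Cp (Ring.inverse (g k)) := h1
              _ ≤ t * (s (d+μ) * t ^ k) := mul_le_mul h2 h3 hs0 htpos.le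
              _ = s (d+μ) * t ^ (k+1) := by ring
        set v : A := w ^ n - (μ^n) • 1 with hv
        have hvaev : v = aeval w (X^n - C (μ^n)) := by
          rw [map_sub, map_pow, aeval_X, aeval_C, Algebra.algebraMap_eq_smul_one, hv]
        have e4 : n - 1 + 1 = n := by omega
        have hvg : v = g (n - 1) := by
          show v = aeval w (∏ i ∈ Finset.range (n - 1 + 1), (X - C (ζ^i * μ)))
          rw [e4, ← hfact]
          exact hvaev
        obtain ⟨hvu', hvbound'⟩ := claim (n-1)
        have hvu : IsUnit v := by rw [hvg]; exact hvu'
        have hvbound : specR N q Cp (Ring.inverse v) ≤ s (d+μ) * t ^ (n-1) := by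
          rw [hvg]; exact hvbound'
        have hwwi : w * z d = 1 := hmulz d
        have hwiw : z d * w = 1 := hzmul d
        have hcwwi : Commute w (z d) := by
          unfold Commute SemiconjBy
          rw [hwwi, hwiw]
        have hwpow : w^n * (z d)^n = 1 := by rw [← hcwwi.mul_pow, hwwi, one_pow]
        have hvwi : v * (z d)^n = 1 - (μ^n) • (z d)^n := by
          rw [hv, sub_mul, hwpow, smul_mul_assoc, one_mul]
        have hwin : (z d)^n = Ring.inverse v * (1 - (μ^n) • (z d)^n) := by
          rw [← hvwi, ← mul_assoc, Ring.inverse_mul_cancel _ hvu, one_mul]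
        have hsm1 : IsUnit ((1:A) - (μ^n) • (z d)^n) := by
          rw [← hvwi]; exact hvu.mul ((hz d).pow n)
        have hcvw : Commute v w := by
          rw [hvaev]
          nth_rewrite 2 [show w = aeval w (X : ℂ[X]) from (Polynomial.aeval_X w).symm]
          exact aeval_comm w _ _
        have hcvwi : Commute v (z d) := commute_ring_inverse_right hwu hcvw
        have hcIV : Commute (Ring.inverse v) ((1:A) - (μ^n) • (z d)^n) := by
          rw [← hvwi]
          have h1 : Commute (Ring.inverse v) v :=
            (commute_ring_inverse_right hvu (Commute.refl v)).symm
          have h2 : Commute (z d) (Ring.inverse v) :=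
            commute_ring_inverse_right hvu hcvwi.symm
          exact h1.mul_right ((h2.symm).pow_right n)
        have hwn : specR N q Cp ((z d)^n) = t^n := by
          rw [specR_pow N q Cp (hz d) hn0]
          congr 1
        have hT : t^n ≤ (s (d+μ) * t^(n-1)) * (1 + β^n) := by
          have h2 := specR_mul_le N q Cp hcIV (isUnit_ringInverse.2 hvu) hsm1
          rw [← hwin] at h2
          have h3 : specR N q Cp ((1:A) - (μ^n) • (z d)^n) ≤ 1 + β^n := by
            have h4 : (1 : A) - (μ^n) • (z d)^n = 1 + (-(μ^n)) • (z d)^n := by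
              rw [neg_smul]; abel
            rw [h4]
            have hμn : (-(μ^n)) ≠ 0 := neg_ne_zero.2 (pow_ne_zero n hμ0)
            have h5 := specR_add_le N q Cp (Commute.one_left _) isUnit_one
              (isUnit_csmul hμn ((hz d).pow n))
            rw [specR_one N q Cp, specR_smul N q Cp ((hz d).pow n) hμn] at h5
            have h6 : ‖-(μ^n)‖^q * specR N q Cp ((z d)^n) = β^n := by
              rw [norm_neg, norm_pow, hwn, hβ, mul_pow]
              congr 1
              rw [← Real.rpow_natCast ‖μ‖ n, ← Real.rpow_mul (norm_nonneg μ), mul_comm (n:ℝ) q,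
                Real.rpow_mul (norm_nonneg μ), Real.rpow_natCast]
            rw [h6] at h5
            exact h5
          calc t^n = specR N q Cp ((z d)^n) := hwn.symm
            _ ≤ specR N q Cp (Ring.inverse v) *
                specR N q Cp ((1:A) - (μ^n) • (z d)^n) := h2
            _ ≤ (s (d+μ) * t^(n-1)) * (1 + β^n) := by
                apply mul_le_mul hvbound h3 (specR_nonneg N q Cp _)
                exact mul_nonneg (spos _).le (pow_nonneg htpos.le _)
        have htn : t^n = t * t^(n-1) := by
          conv_lhs => rw [show n = 1 + (n-1) by omega]
          rw [pow_add, pow_one]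
        have h7 : t * t^(n-1) ≤ (s (d+μ) * (1 + β^n)) * t^(n-1) := by
          rw [← htn]
          calc t^n ≤ (s (d+μ) * t^(n-1)) * (1+β^n) := hT
            _ = (s (d+μ) * (1+β^n)) * t^(n-1) := by ring
        have h8 := (mul_le_mul_iff_left₀ (pow_pos htpos (n-1))).1 h7
        exact h8
      -- pass to the limit
      have hlim : Tendsto (fun m : ℕ => s (d+μ) * (1 + β^(m+1))) atTop (𝓝 (s (d+μ))) := by
        have h1 : Tendsto (fun m : ℕ => β^(m+1)) atTop (𝓝 0) :=
          (tendsto_pow_atTop_nhds_zero_of_lt_one hβ0 hβ1).comp (tendsto_add_atTop_nat 1)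
        have h2 : Tendsto (fun m : ℕ => 1 + β^(m+1)) atTop (𝓝 1) := by
          simpa using tendsto_const_nhds.add h1
        simpa using tendsto_const_nhds.mul h2
      have hts : t ≤ s (d + μ) := ge_of_tendsto hlim (Eventually.of_forall key)
      have heq : s (d + μ) = t := le_antisymm (htmax _) hts
      show s c = t
      rw [show c = d + μ by rw [hμ]; ring]
      exact heq
  -- conclude via connectedness
  have hclopen : IsClopen E := ⟨hEclosed, hEopen⟩
  have hEuniv : E = Set.univ := hclopen.eq_univ hEne
  have hcc : ∀ c : ℂ, s c = t := fun c => by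
    have : c ∈ E := by rw [hEuniv]; trivial
    exact this
  have hbigc : Rad < ‖((Rad + 1 : ℝ) : ℂ)‖ := by
    rw [Complex.norm_real, Real.norm_eq_abs, abs_of_pos (by linarith)]
    linarith
  have := hout _ hbigc
  rw [hcc ((Rad + 1 : ℝ) : ℂ)] at this
  linarith

end Main

/-- Gelfand–Mazur for quasi-Banach algebras: if every nonzero element of `A` is
invertible, then `A` is isomorphic to `ℂ` via an isometric algebra isomorphism. -/
theorem gelfand_mazur_quasiBanach (A : Type*) [Ring A] [Algebra ℂ A] [MetricSpace A]
    [CompleteSpace A] (N : A → ℝ) (q Cp : ℝ) [QuasiBanachAlgebra A N q Cp]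
    (hA : ∀ x : A, x ≠ 0 → IsUnit x) :
    ∃ f : A ≃ₐ[ℂ] ℂ, ∀ x : A, ‖f x‖ = N x := by
  have hinst := (inferInstance : QuasiBanachAlgebra A N q Cp)
  have hnt : Nontrivial A := ⟨⟨1, 0, nontrivialA N q Cp⟩⟩
  have hbij : Function.Bijective (Algebra.ofId ℂ A) := by
    constructor
    · intro a b hab
      apply (algebraMap ℂ A).injective
      rwa [← Algebra.ofId_apply, ← Algebra.ofId_apply]
    · intro y
      obtain ⟨c, hc⟩ := exists_scalar N q Cp hA y
      exact ⟨c, by rw [Algebra.ofId_apply, Algebra.algebraMap_eq_smul_one, hc]⟩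
  let e := AlgEquiv.ofBijective (Algebra.ofId ℂ A) hbij
  refine ⟨e.symm, fun x => ?_⟩
  have hx : x = (e.symm x) • 1 := by
    conv_lhs => rw [← e.apply_symm_apply x]
    rw [show e (e.symm x) = Algebra.ofId ℂ A (e.symm x) from rfl,
      Algebra.ofId_apply, Algebra.algebraMap_eq_smul_one]
  conv_rhs => rw [hx]
  rw [hinst.smul_eq, hinst.norm_one, mul_one]
end

section
/- For a ∈ ℓ^1(ℤ^d), the convolution operator C_a : b ↦ a∗b is invertible on ℓ²(ℤ^d) if and only if the Fourier series 𝓕a(ξ) = ∑_{n∈ℤ^d} a(n) e^{2πi n·ξ} does not vanish at any ξ ∈ 𝕋^d. -/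
open MeasureTheory Complex Submodule Set
open scoped Real ENNReal ComplexConjugate

noncomputable section
namespace WienerTorus

variable {d : ℕ}

instance fact1 : Fact ((0:ℝ) < 1) := ⟨one_pos⟩

abbrev Torus (d : ℕ) := Fin d → AddCircle (1:ℝ)

instance : IsProbabilityMeasure (volume : Measure (AddCircle (1:ℝ))) :=
  ⟨by rw [AddCircle.measure_univ]; simp⟩

def chr (n : Fin d → ℤ) : C(Torus d, ℂ) where
  toFun x := ∏ i, fourier (n i) (x i)
  continuous_toFun := continuous_finset_prod _ fun i _ =>
    (map_continuous (fourier (n i))).comp (continuous_apply i)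

lemma chr_apply (n : Fin d → ℤ) (x : Torus d) : chr n x = ∏ i, fourier (n i) (x i) := rfl

lemma chr_add (m n : Fin d → ℤ) (x : Torus d) : chr (m + n) x = chr m x * chr n x := by
  simp_rw [chr_apply, ← Finset.prod_mul_distrib]
  exact Finset.prod_congr rfl fun i _ => fourier_add

lemma chr_zero (x : Torus d) : chr 0 x = 1 := by simp [chr_apply, fourier_zero]

lemma chr_neg (n : Fin d → ℤ) (x : Torus d) : chr (-n) x = conj (chr n x) := by
  simp_rw [chr_apply, map_prod]
  exact Finset.prod_congr rfl fun i _ => fourier_neg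

lemma integral_fourier_circle (k : ℤ) :
    ∫ x : AddCircle (1:ℝ), fourier k x = if k = 0 then 1 else 0 := by
  split_ifs with h
  · subst h
    have : ⇑(fourier (T := 1) 0) = fun _ => (1:ℂ) := by ext1; exact fourier_zero
    rw [this, integral_const, probReal_univ]; simp
  · exact integral_eq_zero_of_add_right_eq_neg (fourier_add_half_inv_index h one_pos)

def chrLp (n : Fin d → ℤ) : Lp ℂ 2 (volume : Measure (Torus d)) :=
  ContinuousMap.toLp (E := ℂ) 2 volume ℂ (chr n)

theorem orthonormal_chrLp : Orthonormal ℂ (chrLp (d := d)) := by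
  rw [orthonormal_iff_ite]
  intro m n
  rw [chrLp, chrLp, ContinuousMap.inner_toLp volume (chr m) (chr n)]
  have h1 : ∀ x : Torus d, conj (chr m x) * chr n x = ∏ i, fourier (n i - m i) (x i) := by
    intro x
    rw [← chr_neg, ← chr_add, chr_apply]
    refine Finset.prod_congr rfl fun i _ => ?_
    congr 1
    simp [sub_eq_neg_add]
  simp_rw [mul_comm _ (conj _), h1]
  rw [MeasureTheory.integral_fintype_prod_volume_eq_prod (ι := Fin d)
    (f := fun i (y : AddCircle (1:ℝ)) => fourier (n i - m i) y)]
  simp_rw [integral_fourier_circle, sub_eq_zero]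
  by_cases h : m = n
  · simp [h]
  · obtain ⟨i, hi⟩ : ∃ i, m i ≠ n i := by
      by_contra hc; push_neg at hc; exact h (funext hc)
    rw [if_neg h]
    exact Finset.prod_eq_zero (Finset.mem_univ i) (by simp [Ne.symm hi])

/-- The star subalgebra generated by the characters. -/
def chrSubalgebra (d : ℕ) : StarSubalgebra ℂ C(Torus d, ℂ) where
  toSubalgebra := Algebra.adjoin ℂ (range chr)
  star_mem' := by
    show Algebra.adjoin ℂ (range (chr (d := d))) ≤ star (Algebra.adjoin ℂ (range (chr (d := d))))
    refine Algebra.adjoin_le ?_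
    rintro - ⟨n, rfl⟩
    exact Algebra.subset_adjoin ⟨-n, ContinuousMap.ext fun x => chr_neg n x⟩

theorem chrSubalgebra_coe :
    Subalgebra.toSubmodule (chrSubalgebra d).toSubalgebra = span ℂ (range (chr (d := d))) := by
  apply Algebra.adjoin_eq_span_of_subset
  refine Subset.trans ?_ Submodule.subset_span
  intro x hx
  refine Submonoid.closure_induction (fun _ => id) ⟨0, ?_⟩ ?_ hx
  · ext1 z; exact chr_zero z
  · rintro - - - - ⟨m, rfl⟩ ⟨n, rfl⟩
    exact ⟨m + n, ContinuousMap.ext fun z => chr_add m n z⟩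

lemma chr_single (i : Fin d) (z : Torus d) :
    chr (Pi.single i 1) z = AddCircle.toCircle (z i) := by
  rw [chr_apply, Finset.prod_eq_single i
    (fun j _ hj => by rw [Pi.single_eq_of_ne hj]; exact fourier_zero)
    (fun hi => absurd (Finset.mem_univ i) hi)]
  rw [Pi.single_eq_same]
  exact fourier_one

theorem chrSubalgebra_separatesPoints : (chrSubalgebra d).SeparatesPoints := by
  intro x y hxy
  obtain ⟨i, hi⟩ : ∃ i, x i ≠ y i := by
    by_contra hc; push_neg at hc; exact hxy (funext hc)
  refine ⟨_, ⟨chr (Pi.single i 1), Algebra.subset_adjoin ⟨_, rfl⟩, rfl⟩, ?_⟩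
  dsimp only
  rw [chr_single, chr_single]
  contrapose! hi
  rw [Circle.coe_inj] at hi
  exact AddCircle.injective_toCircle one_ne_zero hi

theorem chrSubalgebra_closure_eq_top : (chrSubalgebra d).topologicalClosure = ⊤ :=
  ContinuousMap.starSubalgebra_topologicalClosure_eq_top_of_separatesPoints (chrSubalgebra d)
    chrSubalgebra_separatesPoints

theorem span_chr_closure_eq_top :
    (span ℂ (range (chr (d := d)))).topologicalClosure = ⊤ := by
  rw [← chrSubalgebra_coe]
  exact congr_arg (Subalgebra.toSubmodule <| StarSubalgebra.toSubalgebra ·)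
    chrSubalgebra_closure_eq_top

theorem span_chrLp_closure_eq_top :
    (span ℂ (range (chrLp (d := d)))).topologicalClosure = ⊤ := by
  convert (ContinuousMap.toLp_denseRange ℂ (volume : Measure (Torus d)) ℂ
      (by norm_num : (2:ℝ≥0∞) ≠ ∞)).topologicalClosure_map_submodule span_chr_closure_eq_top
  · rfl
  erw [map_span, range_comp]
  simp only [ContinuousLinearMap.coe_coe]

def torusBasis (d : ℕ) : HilbertBasis (Fin d → ℤ) ℂ (Lp ℂ 2 (volume : Measure (Torus d))) :=
  HilbertBasis.mk orthonormal_chrLp (span_chrLp_closure_eq_top).ge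

lemma torusBasis_apply (n : Fin d → ℤ) : torusBasis d n = chrLp n := by
  rw [torusBasis, HilbertBasis.coe_mk]


section Symbol

variable (a : (Fin d → ℤ) → ℂ)

lemma norm_chr_apply (n : Fin d → ℤ) (x : Torus d) : ‖chr n x‖ = 1 := by
  rw [chr_apply, norm_prod]
  simp [fourier_apply, Circle.norm_coe]

lemma norm_chr (n : Fin d → ℤ) : ‖chr n‖ = 1 := by
  apply le_antisymm
  · exact (ContinuousMap.norm_le _ zero_le_one).2 fun x => (norm_chr_apply n x).le
  · obtain ⟨x⟩ : Nonempty (Torus d) := inferInstance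
    calc (1:ℝ) = ‖chr n x‖ := (norm_chr_apply n x).symm
    _ ≤ ‖chr n‖ := ContinuousMap.norm_coe_le_norm _ x

lemma conj_chr_mul_self (n : Fin d → ℤ) (x : Torus d) : conj (chr n x) * chr n x = 1 := by
  rw [mul_comm, Complex.mul_conj]
  rw [Complex.normSq_eq_norm_sq, norm_chr_apply]
  norm_num

lemma conj_chr_mul (k n : Fin d → ℤ) (x : Torus d) :
    conj (chr k x) * chr n x = conj (chr (k - n) x) := by
  have h : chr k x = chr (k - n) x * chr n x := by
    rw [← chr_add]; congr 1; simp
  rw [h, map_mul, mul_assoc, conj_chr_mul_self, mul_one]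

lemma summable_smul_chr (ha : Summable fun k => ‖a k‖) :
    Summable fun n => a n • chr (d := d) n := by
  apply Summable.of_norm
  simpa only [norm_smul, norm_chr, mul_one] using ha

def symbol : C(Torus d, ℂ) := ∑' n, a n • chr n

lemma symbol_apply (ha : Summable fun k => ‖a k‖) (x : Torus d) :
    symbol a x = ∑' n, a n * chr n x := by
  have h := (ContinuousMap.evalCLM (M := ℂ) ℂ x).map_tsum (summable_smul_chr a ha)
  simpa [symbol, ContinuousMap.evalCLM] using h

end Symbol

section Mul

lemma memLp_mul (φ : C(Torus d, ℂ)) (g : Lp ℂ 2 (volume : Measure (Torus d))) :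
    MemLp (fun x => φ x * g x) 2 (volume : Measure (Torus d)) := by
  have h1 : MemLp (⇑φ) ∞ (volume : Measure (Torus d)) :=
    memLp_top_of_bound φ.continuous.aestronglyMeasurable ‖φ‖
      (Filter.Eventually.of_forall fun x => φ.norm_coe_le_norm x)
  exact MemLp.smul (E := ℂ) (𝕜 := ℂ) (p := ∞) (q := 2) (r := 2) (Lp.memLp g) h1

def mulLp (φ : C(Torus d, ℂ)) (g : Lp ℂ 2 (volume : Measure (Torus d))) :
    Lp ℂ 2 (volume : Measure (Torus d)) :=
  (memLp_mul φ g).toLp (fun x => φ x * g x)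

lemma coeFn_mulLp (φ : C(Torus d, ℂ)) (g : Lp ℂ 2 (volume : Measure (Torus d))) :
    mulLp φ g =ᵐ[volume] fun x => φ x * g x :=
  MemLp.coeFn_toLp _

lemma mulLp_add (φ : C(Torus d, ℂ)) (g h : Lp ℂ 2 (volume : Measure (Torus d))) :
    mulLp φ (g + h) = mulLp φ g + mulLp φ h := by
  apply Lp.ext
  filter_upwards [coeFn_mulLp φ (g + h), coeFn_mulLp φ g, coeFn_mulLp φ h,
    Lp.coeFn_add g h, Lp.coeFn_add (mulLp φ g) (mulLp φ h)] with x h1 h2 h3 h4 h5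
  rw [h1, h5]
  simp only [Pi.add_apply, h2, h3, h4]
  ring

lemma mulLp_smul (φ : C(Torus d, ℂ)) (c : ℂ) (g : Lp ℂ 2 (volume : Measure (Torus d))) :
    mulLp φ (c • g) = c • mulLp φ g := by
  apply Lp.ext
  filter_upwards [coeFn_mulLp φ (c • g), coeFn_mulLp φ g,
    Lp.coeFn_smul c g, Lp.coeFn_smul c (mulLp φ g)] with x h1 h2 h3 h4
  rw [h1, h4]
  simp only [Pi.smul_apply, h2, h3, smul_eq_mul]
  ring

lemma norm_mulLp_le (φ : C(Torus d, ℂ)) (g : Lp ℂ 2 (volume : Measure (Torus d))) :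
    ‖mulLp φ g‖ ≤ ‖φ‖ * ‖g‖ := by
  rw [mulLp, Lp.norm_toLp]
  have h1 : eLpNorm (fun x => φ x * g x) 2 (volume : Measure (Torus d))
      ≤ eLpNorm ((‖φ‖ : ℂ) • ⇑g) 2 (volume : Measure (Torus d)) := by
    apply eLpNorm_mono_ae
    refine Filter.Eventually.of_forall fun x => ?_
    rw [Pi.smul_apply, smul_eq_mul, norm_mul, norm_mul, Complex.norm_real, norm_norm]
    exact mul_le_mul_of_nonneg_right (φ.norm_coe_le_norm x) (norm_nonneg _)
  have h2 : eLpNorm ((‖φ‖ : ℂ) • ⇑g) 2 (volume : Measure (Torus d))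
      = (‖(‖φ‖ : ℂ)‖₊ : ℝ≥0∞) * eLpNorm (⇑g) 2 (volume : Measure (Torus d)) := by
    rw [eLpNorm_const_smul, enorm_eq_nnnorm]
  have hne : eLpNorm ((‖φ‖ : ℂ) • ⇑g) 2 (volume : Measure (Torus d)) ≠ ∞ := by
    rw [h2]; exact ENNReal.mul_ne_top ENNReal.coe_ne_top (Lp.eLpNorm_ne_top g)
  calc (eLpNorm (fun x => φ x * g x) 2 (volume : Measure (Torus d))).toReal
      ≤ (eLpNorm ((‖φ‖ : ℂ) • ⇑g) 2 (volume : Measure (Torus d))).toReal :=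
        ENNReal.toReal_mono hne h1
    _ = ‖(‖φ‖ : ℂ)‖ * ‖g‖ := by
        rw [h2, ENNReal.toReal_mul, ENNReal.coe_toReal, coe_nnnorm, ← Lp.norm_def]
    _ = ‖φ‖ * ‖g‖ := by simp

def mulCLM (φ : C(Torus d, ℂ)) :
    Lp ℂ 2 (volume : Measure (Torus d)) →L[ℂ] Lp ℂ 2 (volume : Measure (Torus d)) :=
  LinearMap.mkContinuous
    { toFun := mulLp φ
      map_add' := mulLp_add φ
      map_smul' := fun c g => mulLp_smul φ c g } ‖φ‖ (norm_mulLp_le φ)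

lemma mulCLM_apply (φ : C(Torus d, ℂ)) (g : Lp ℂ 2 (volume : Measure (Torus d))) :
    mulCLM φ g = mulLp φ g := rfl

end Mul

section Repr

variable (a : (Fin d → ℤ) → ℂ)

lemma inner_chrLp (j : Fin d → ℤ) (g : Lp ℂ 2 (volume : Measure (Torus d))) :
    (inner ℂ (chrLp j) g : ℂ) = ∫ x, conj (chr j x) * g x := by
  rw [chrLp, MeasureTheory.L2.inner_def]
  apply integral_congr_ae
  filter_upwards [ContinuousMap.coeFn_toLp (p := 2) (𝕜 := ℂ) (volume : Measure (Torus d))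
    (chr j)] with x hx
  rw [RCLike.inner_apply', hx]

theorem repr_mul_symbol (ha : Summable fun k => ‖a k‖)
    (g : Lp ℂ 2 (volume : Measure (Torus d))) (k : Fin d → ℤ) :
    (torusBasis d).repr (mulLp (symbol a) g) k
      = ∑' j, a (k - j) * (torusBasis d).repr g j := by
  classical
  rw [HilbertBasis.repr_apply_apply, torusBasis_apply]
  have hgi : Integrable (⇑g) (volume : Measure (Torus d)) := memLp_one_iff_integrable.1
    ((Lp.memLp g).mono_exponent (by norm_num))
  have key : (inner ℂ (chrLp k) (mulLp (symbol a) g) : ℂ)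
      = ∫ x, ∑' n, a n * (conj (chr (k - n) x) * g x) := by
    rw [chrLp, MeasureTheory.L2.inner_def]
    apply integral_congr_ae
    filter_upwards [ContinuousMap.coeFn_toLp (p := 2) (𝕜 := ℂ)
      (volume : Measure (Torus d)) (chr k), coeFn_mulLp (symbol a) g] with x hx1 hx2
    rw [RCLike.inner_apply', hx1, hx2, symbol_apply a ha, ← tsum_mul_right, ← tsum_mul_left]
    refine tsum_congr fun n => ?_
    rw [← conj_chr_mul k n x]
    ring
  have hmeas : ∀ n, AEStronglyMeasurable
      (fun x : Torus d => a n * (conj (chr (k - n) x) * g x)) (volume : Measure (Torus d)) := by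
    intro n
    exact (((map_continuous (chr (k - n))).star.aestronglyMeasurable).mul
      (Lp.aestronglyMeasurable g)).const_mul (a n)
  have hpt : ∀ n (x : Torus d),
      (‖a n * (conj (chr (k - n) x) * g x)‖₊ : ℝ≥0∞) = ‖a n‖₊ * ‖g x‖₊ := by
    intro n x
    have h1 : ‖conj (chr (k - n) x)‖₊ = 1 := by
      apply NNReal.eq
      simpa using norm_chr_apply (k - n) x
    rw [nnnorm_mul, nnnorm_mul, h1, one_mul, ENNReal.coe_mul]
  have hsum : ∑' n, ∫⁻ x, (‖a n * (conj (chr (k - n) x) * g x)‖₊ : ℝ≥0∞)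
      ∂(volume : Measure (Torus d)) ≠ ∞ := by
    simp_rw [hpt]
    have h2 : ∀ n : Fin d → ℤ, ∫⁻ x, (‖a n‖₊ : ℝ≥0∞) * ‖g x‖₊ ∂(volume : Measure (Torus d))
        = (‖a n‖₊ : ℝ≥0∞) * ∫⁻ x, (‖g x‖₊ : ℝ≥0∞) ∂(volume : Measure (Torus d)) :=
      fun n => lintegral_const_mul' _ _ ENNReal.coe_ne_top
    simp_rw [h2]
    rw [ENNReal.tsum_mul_right]
    exact ENNReal.mul_ne_top
      (ENNReal.tsum_coe_ne_top_iff_summable.2 (NNReal.summable_coe.1 (by simpa using ha)))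
      hgi.2.ne
  rw [key, integral_tsum hmeas hsum]
  calc ∑' n, ∫ x, a n * (conj (chr (k - n) x) * g x) ∂(volume : Measure (Torus d))
      = ∑' n, a n * ((torusBasis d).repr g (k - n)) := by
        refine tsum_congr fun n => ?_
        rw [integral_const_mul, ← inner_chrLp, HilbertBasis.repr_apply_apply, torusBasis_apply]
    _ = ∑' j, a (k - j) * (torusBasis d).repr g j := by
        rw [← (Equiv.subLeft k).tsum_eq (fun j => a (k - j) * (torusBasis d).repr g j)]
        exact tsum_congr fun n => by rw [Equiv.subLeft_apply, sub_sub_cancel]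

end Repr

section Inverse

variable (a : (Fin d → ℤ) → ℂ)

lemma symbol_coe (ha : Summable fun k => ‖a k‖) (ξ : Fin d → ℝ) :
    symbol a (fun i => (ξ i : AddCircle (1:ℝ)))
      = ∑' n, a n * Complex.exp (2 * π * Complex.I * (∑ i, (n i : ℂ) * (ξ i : ℂ))) := by
  rw [symbol_apply a ha]
  refine tsum_congr fun n => ?_
  congr 1
  rw [chr_apply]
  have h : ∀ i : Fin d, fourier (n i) ((ξ i : ℝ) : AddCircle (1:ℝ))
      = Complex.exp (2 * π * Complex.I * ((n i : ℂ) * (ξ i : ℂ))) := by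
    intro i
    rw [fourier_coe_apply]
    congr 1
    push_cast
    ring
  simp_rw [h, ← Complex.exp_sum]
  congr 1
  rw [Finset.mul_sum]

/-- inverse symbol -/
def invSymbol (h : ∀ x : Torus d, symbol a x ≠ 0) : C(Torus d, ℂ) where
  toFun x := (symbol a x)⁻¹
  continuous_toFun := (map_continuous (symbol a)).inv₀ h

lemma mulLp_mulLp (φ ψ : C(Torus d, ℂ)) (h : ∀ x, φ x * ψ x = 1)
    (g : Lp ℂ 2 (volume : Measure (Torus d))) : mulLp φ (mulLp ψ g) = g := by
  apply Lp.ext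
  filter_upwards [coeFn_mulLp φ (mulLp ψ g), coeFn_mulLp ψ g] with x h1 h2
  rw [h1, h2, ← mul_assoc, h x, one_mul]

/-- The multiplication operator by a nonvanishing continuous symbol, as a CLE. -/
def mulCLE (h : ∀ x : Torus d, symbol a x ≠ 0) :
    Lp ℂ 2 (volume : Measure (Torus d)) ≃L[ℂ] Lp ℂ 2 (volume : Measure (Torus d)) :=
  ContinuousLinearEquiv.equivOfInverse (mulCLM (symbol a)) (mulCLM (invSymbol a h))
    (fun g => mulLp_mulLp (invSymbol a h) (symbol a) (fun x => by
      show (symbol a x)⁻¹ * symbol a x = 1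
      exact inv_mul_cancel₀ (h x)) g)
    (fun g => mulLp_mulLp (symbol a) (invSymbol a h) (fun x => mul_inv_cancel₀ (h x)) g)

/-- The convolution operator as a CLE, given nonvanishing symbol. -/
def convCLE (h : ∀ x : Torus d, symbol a x ≠ 0) :
    lp (fun _ : (Fin d → ℤ) => ℂ) 2 ≃L[ℂ] lp (fun _ : (Fin d → ℤ) => ℂ) 2 :=
  (((torusBasis d).repr.symm.toContinuousLinearEquiv.trans (mulCLE a h)).trans
    (torusBasis d).repr.toContinuousLinearEquiv)

lemma convCLE_apply (ha : Summable fun k => ‖a k‖) (h : ∀ x : Torus d, symbol a x ≠ 0)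
    (b : lp (fun _ : (Fin d → ℤ) => ℂ) 2) (k : Fin d → ℤ) :
    (convCLE a h b : ∀ _ : (Fin d → ℤ), ℂ) k = ∑' j, a (k - j) * b j := by
  have h1 : convCLE a h b = (torusBasis d).repr (mulLp (symbol a) ((torusBasis d).repr.symm b)) :=
    rfl
  rw [h1, repr_mul_symbol a ha ((torusBasis d).repr.symm b) k]
  simp_rw [LinearIsometryEquiv.apply_symm_apply]

end Inverse

section Forward

variable (a : (Fin d → ℤ) → ℂ)

lemma norm_mulLp_le_of_ae (φ : C(Torus d, ℂ)) (g : Lp ℂ 2 (volume : Measure (Torus d)))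
    (c : ℝ) (hc : 0 ≤ c)
    (hae : ∀ᵐ x ∂(volume : Measure (Torus d)), ‖φ x * g x‖ ≤ c * ‖g x‖) :
    ‖mulLp φ g‖ ≤ c * ‖g‖ := by
  rw [mulLp, Lp.norm_toLp]
  have h1 : eLpNorm (fun x => φ x * g x) 2 (volume : Measure (Torus d))
      ≤ eLpNorm ((c : ℂ) • ⇑g) 2 (volume : Measure (Torus d)) := by
    apply eLpNorm_mono_ae
    filter_upwards [hae] with x hx
    have hrw : ‖((c : ℂ) • ⇑g) x‖ = c * ‖(g : Torus d → ℂ) x‖ := by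
      rw [Pi.smul_apply, smul_eq_mul, norm_mul, Complex.norm_real, Real.norm_eq_abs,
        _root_.abs_of_nonneg hc]
    rw [hrw]
    exact hx
  have h2 : eLpNorm ((c : ℂ) • ⇑g) 2 (volume : Measure (Torus d))
      = (‖(c : ℂ)‖₊ : ℝ≥0∞) * eLpNorm (⇑g) 2 (volume : Measure (Torus d)) := by
    rw [eLpNorm_const_smul, enorm_eq_nnnorm]
  have hne : eLpNorm ((c : ℂ) • ⇑g) 2 (volume : Measure (Torus d)) ≠ ∞ := by
    rw [h2]; exact ENNReal.mul_ne_top ENNReal.coe_ne_top (Lp.eLpNorm_ne_top g)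
  calc (eLpNorm (fun x => φ x * g x) 2 (volume : Measure (Torus d))).toReal
      ≤ (eLpNorm ((c : ℂ) • ⇑g) 2 (volume : Measure (Torus d))).toReal :=
        ENNReal.toReal_mono hne h1
    _ = ‖(c : ℂ)‖ * ‖g‖ := by
        rw [h2, ENNReal.toReal_mul, ENNReal.coe_toReal, coe_nnnorm, ← Lp.norm_def]
    _ = c * ‖g‖ := by rw [Complex.norm_real, Real.norm_eq_abs, _root_.abs_of_nonneg hc]

theorem nonvanishing_of_invertible (ha : Summable fun k => ‖a k‖)
    (T : lp (fun _ : (Fin d → ℤ) => ℂ) 2 ≃L[ℂ] lp (fun _ : (Fin d → ℤ) => ℂ) 2)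
    (hT : ∀ (b : lp (fun _ : (Fin d → ℤ) => ℂ) 2) (k : Fin d → ℤ),
      (T b : ∀ _ : (Fin d → ℤ), ℂ) k = ∑' j, a (k - j) * b j)
    (x₀ : Torus d) : symbol a x₀ ≠ 0 := by
  intro hx₀
  have hkey : ∀ g : Lp ℂ 2 (volume : Measure (Torus d)),
      (torusBasis d).repr (mulLp (symbol a) g) = T ((torusBasis d).repr g) := by
    intro g
    apply lp.ext
    funext k
    rw [repr_mul_symbol a ha g k, hT]
  set C : ℝ := ‖(T.symm : lp (fun _ : (Fin d → ℤ) => ℂ) 2 →L[ℂ]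
      lp (fun _ : (Fin d → ℤ) => ℂ) 2)‖ with hCdef
  have hC : 0 ≤ C := norm_nonneg _
  have hbound : ∀ g : Lp ℂ 2 (volume : Measure (Torus d)),
      ‖g‖ ≤ C * ‖mulLp (symbol a) g‖ := by
    intro g
    have h2 : g = (torusBasis d).repr.symm
        (T.symm ((torusBasis d).repr (mulLp (symbol a) g))) := by
      rw [hkey, ContinuousLinearEquiv.symm_apply_apply, LinearIsometryEquiv.symm_apply_apply]
    calc ‖g‖ = ‖T.symm ((torusBasis d).repr (mulLp (symbol a) g))‖ := by
          conv_lhs => rw [h2]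
          exact LinearIsometryEquiv.norm_map _ _
      _ ≤ C * ‖(torusBasis d).repr (mulLp (symbol a) g)‖ :=
          ContinuousLinearMap.le_opNorm
            (T.symm : lp (fun _ : (Fin d → ℤ) => ℂ) 2 →L[ℂ] lp (fun _ : (Fin d → ℤ) => ℂ) 2) _
      _ = C * ‖mulLp (symbol a) g‖ := by rw [LinearIsometryEquiv.norm_map]
  set ε : ℝ := (C + 1)⁻¹ with hεdef
  have hε : 0 < ε := by positivity
  set U : Set (Torus d) := {x | ‖symbol a x‖ < ε} with hUdef
  have hU : IsOpen U := isOpen_lt (continuous_norm.comp (map_continuous (symbol a)))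
    continuous_const
  have hx₀U : x₀ ∈ U := by simp [hUdef, hx₀, hε]
  have hμU : 0 < (volume : Measure (Torus d)) U := hU.measure_pos _ ⟨x₀, hx₀U⟩
  have hμUne : (volume : Measure (Torus d)) U ≠ ∞ := measure_ne_top _ _
  set g : Lp ℂ 2 (volume : Measure (Torus d)) :=
    indicatorConstLp 2 hU.measurableSet hμUne (1 : ℂ) with hgdef
  have hgnorm : 0 < ‖g‖ := by
    rw [hgdef, norm_indicatorConstLp (by norm_num) (by norm_num)]
    have h3 : 0 < ((volume : Measure (Torus d)) U).toReal :=
      ENNReal.toReal_pos hμU.ne' hμUne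
    simp only [norm_one, one_mul]
    positivity
  have hb : ‖mulLp (symbol a) g‖ ≤ ε * ‖g‖ := by
    apply norm_mulLp_le_of_ae _ _ _ hε.le
    filter_upwards [indicatorConstLp_coeFn (p := 2) (μ := (volume : Measure (Torus d)))
      (s := U) (hs := hU.measurableSet) (hμs := hμUne) (c := (1:ℂ))] with x hx
    rw [hx]
    by_cases hxU : x ∈ U
    · rw [Set.indicator_of_mem hxU]
      simp only [mul_one, norm_one]
      exact le_of_lt (by simpa [hUdef] using hxU)
    · rw [Set.indicator_of_notMem hxU]
      simp
  have hfinal : ‖g‖ ≤ C * (ε * ‖g‖) :=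
    le_trans (hbound g) (mul_le_mul_of_nonneg_left hb hC)
  have hCε : C * ε < 1 := by
    rw [hεdef]
    rw [mul_inv_lt_iff₀ (by positivity)]
    linarith
  nlinarith

end Forward
end WienerTorus

open scoped BigOperators Real

/-- Wiener's lemma type characterization: for `a ∈ ℓ¹(ℤ^d)`, the convolution operator
`C_a : b ↦ a ∗ b` is invertible on `ℓ²(ℤ^d)` if and only if the Fourier series
`𝓕a(ξ) = ∑ₙ a(n) e^{2πi n·ξ}` does not vanish at any point of the torus. -/
theorem conv_invertible_iff_fourier_nonvanishing (d : ℕ)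
    (a : (Fin d → ℤ) → ℂ) (ha : Summable fun k => ‖a k‖) :
    (∃ T : lp (fun _ : (Fin d → ℤ) => ℂ) 2 ≃L[ℂ] lp (fun _ : (Fin d → ℤ) => ℂ) 2,
        ∀ (b : lp (fun _ : (Fin d → ℤ) => ℂ) 2) (k : Fin d → ℤ),
          (T b : ∀ _ : (Fin d → ℤ), ℂ) k = ∑' j, a (k - j) * b j) ↔
      ∀ ξ : Fin d → ℝ,
        (∑' n : Fin d → ℤ, a n * Complex.exp (2 * π * Complex.I * (∑ i, (n i : ℂ) * (ξ i : ℂ)))) ≠ 0 := by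
  constructor
  · rintro ⟨T, hT⟩ ξ
    rw [← WienerTorus.symbol_coe a ha ξ]
    exact WienerTorus.nonvanishing_of_invertible a ha T hT _
  · intro hξ
    have h : ∀ x : WienerTorus.Torus d, WienerTorus.symbol a x ≠ 0 := by
      intro x
      obtain ⟨ξ, rfl⟩ : ∃ ξ : Fin d → ℝ, (fun i => ((ξ i : ℝ) : AddCircle (1:ℝ))) = x := by
        have hsurj := fun i => Quotient.exists_rep (x i)
        choose ξ hξ' using hsurj
        exact ⟨ξ, funext hξ'⟩
      rw [WienerTorus.symbol_coe a ha ξ]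
      exact hξ ξ
    exact ⟨WienerTorus.convCLE a h, WienerTorus.convCLE_apply a ha h⟩
end
end

section
/- Let B = ℓ^q_{v_s}(ℤ^{2d}), 0 < q ≤ 1, s ≥ 0, and for a matrix A = (a_{λ,μ})_{λ,μ∈ℤ^{2d}} define d_A(μ) = sup_λ |a_{λ,λ−μ}|. The class C_B of matrices A with d_A ∈ B is a quasi-Banach algebra under matrix multiplication with quasi-norm ‖A‖_{C_B} = ‖d_A‖_B: in particular, if A, B ∈ C_B then AB ∈ C_B and ‖AB‖_{C_B} ≤ ‖A‖_{C_B}‖B‖_{C_B}. -/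
open scoped BigOperators

lemma enn_tsum_rpow_le {ι : Type*} (z : ι → ENNReal) {q : ℝ} (hq0 : 0 < q) (hq1 : q ≤ 1) :
    (∑' i, z i) ^ q ≤ ∑' i, z i ^ q := by
  have hfin : ∀ F : Finset ι, (∑ i ∈ F, z i) ^ q ≤ ∑ i ∈ F, z i ^ q := by
    intro F
    induction F using Finset.cons_induction with
    | empty => simp [ENNReal.zero_rpow_of_pos hq0]
    | cons a F ha ih =>
      rw [Finset.sum_cons, Finset.sum_cons]
      exact le_trans (ENNReal.rpow_add_le_add_rpow _ _ hq0.le hq1) (add_le_add le_rfl ih)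
  have h1 : ∑' i, z i ≤ (∑' i, z i ^ q) ^ (1 / q) := by
    rw [ENNReal.tsum_eq_iSup_sum]
    apply iSup_le
    intro F
    have h2 : (∑ i ∈ F, z i) ^ q ≤ ∑' i, z i ^ q :=
      le_trans (hfin F) (ENNReal.sum_le_tsum F)
    calc ∑ i ∈ F, z i = ((∑ i ∈ F, z i) ^ q) ^ (1 / q) := by
          rw [← ENNReal.rpow_mul, mul_one_div, div_self hq0.ne', ENNReal.rpow_one]
      _ ≤ (∑' i, z i ^ q) ^ (1 / q) := ENNReal.rpow_le_rpow h2 (by positivity)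
  calc (∑' i, z i) ^ q ≤ ((∑' i, z i ^ q) ^ (1 / q)) ^ q := ENNReal.rpow_le_rpow h1 hq0.le
    _ = ∑' i, z i ^ q := by
        rw [← ENNReal.rpow_mul, one_div, inv_mul_cancel₀ hq0.ne', ENNReal.rpow_one]

/-- The matrix class `C_B`, `B = ℓ^q_{v_s}(ℤ^{2d})`, `0 < q ≤ 1`, `s ≥ 0`, is a
quasi-Banach algebra under matrix multiplication: if `d_A, d_B ∈ B`, where
`d_A(μ) = sup_λ |a_{λ,λ-μ}|`, then the product matrix satisfies `d_{AB} ∈ B` and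
`‖AB‖_{C_B} ≤ ‖A‖_{C_B} ‖B‖_{C_B}`. -/
theorem matrix_class_algebra (d : ℕ) (q s : ℝ) (hq0 : 0 < q) (hq1 : q ≤ 1) (hs : 0 ≤ s)
    (v : (Fin (2 * d) → ℤ) → ℝ)
    (hv : ∀ k, v k = (1 + ‖(fun i => (k i : ℝ) : Fin (2 * d) → ℝ)‖) ^ s)
    (A B : (Fin (2 * d) → ℤ) → (Fin (2 * d) → ℤ) → ℂ)
    (hAbdd : ∀ μ, BddAbove (Set.range fun lam => ‖A lam (lam - μ)‖))
    (hBbdd : ∀ μ, BddAbove (Set.range fun lam => ‖B lam (lam - μ)‖))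
    (hA : Summable fun μ => (⨆ lam, ‖A lam (lam - μ)‖) ^ q * v μ ^ q)
    (hB : Summable fun μ => (⨆ lam, ‖B lam (lam - μ)‖) ^ q * v μ ^ q)
    (P : (Fin (2 * d) → ℤ) → (Fin (2 * d) → ℤ) → ℂ)
    (hP : ∀ lam μ, P lam μ = ∑' ν, A lam ν * B ν μ) :
    (∀ μ, BddAbove (Set.range fun lam => ‖P lam (lam - μ)‖)) ∧
      Summable (fun μ => (⨆ lam, ‖P lam (lam - μ)‖) ^ q * v μ ^ q) ∧
      (∑' μ, (⨆ lam, ‖P lam (lam - μ)‖) ^ q * v μ ^ q) ^ (1 / q) ≤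
        (∑' μ, (⨆ lam, ‖A lam (lam - μ)‖) ^ q * v μ ^ q) ^ (1 / q) *
          (∑' μ, (⨆ lam, ‖B lam (lam - μ)‖) ^ q * v μ ^ q) ^ (1 / q) := by
  classical
  set dA : (Fin (2 * d) → ℤ) → ℝ := fun μ => ⨆ lam, ‖A lam (lam - μ)‖ with hdA_def
  set dB : (Fin (2 * d) → ℤ) → ℝ := fun μ => ⨆ lam, ‖B lam (lam - μ)‖ with hdB_def
  set dP : (Fin (2 * d) → ℤ) → ℝ := fun μ => ⨆ lam, ‖P lam (lam - μ)‖ with hdP_def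
  -- basic facts about v
  have hv1 : ∀ k, 1 ≤ v k := by
    intro k; rw [hv k]
    exact Real.one_le_rpow (le_add_of_nonneg_right (norm_nonneg _)) hs
  have hv0 : ∀ k, 0 ≤ v k := fun k => le_trans zero_le_one (hv1 k)
  have hvsub : ∀ κ μ, v μ ≤ v κ * v (μ - κ) := by
    intro κ μ
    rw [hv, hv, hv, ← Real.mul_rpow (by positivity) (by positivity)]
    have hbase : 1 + ‖(fun i => (μ i : ℝ) : Fin (2 * d) → ℝ)‖ ≤
        (1 + ‖(fun i => (κ i : ℝ) : Fin (2 * d) → ℝ)‖) *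
        (1 + ‖(fun i => ((μ - κ) i : ℝ) : Fin (2 * d) → ℝ)‖) := by
      have htri : ‖(fun i => (μ i : ℝ) : Fin (2 * d) → ℝ)‖ ≤
          ‖(fun i => (κ i : ℝ) : Fin (2 * d) → ℝ)‖ +
          ‖(fun i => ((μ - κ) i : ℝ) : Fin (2 * d) → ℝ)‖ := by
        have he : (fun i => (μ i : ℝ) : Fin (2 * d) → ℝ) =
            (fun i => (κ i : ℝ)) + fun i => ((μ - κ) i : ℝ) := by
          funext i; simp only [Pi.add_apply, Pi.sub_apply]; push_cast; ring
        rw [he]; exact norm_add_le _ _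
      nlinarith [norm_nonneg (fun i => (κ i : ℝ) : Fin (2 * d) → ℝ),
        norm_nonneg (fun i => ((μ - κ) i : ℝ) : Fin (2 * d) → ℝ),
        norm_nonneg (fun i => (μ i : ℝ) : Fin (2 * d) → ℝ)]
    exact Real.rpow_le_rpow (by positivity) hbase hs
  -- basic facts about dA, dB
  have hdA_le : ∀ μ lam, ‖A lam (lam - μ)‖ ≤ dA μ := fun μ lam => le_ciSup (hAbdd μ) lam
  have hdB_le : ∀ μ lam, ‖B lam (lam - μ)‖ ≤ dB μ := fun μ lam => le_ciSup (hBbdd μ) lam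
  have hdA0 : ∀ μ, 0 ≤ dA μ := fun μ => Real.iSup_nonneg fun lam => norm_nonneg _
  have hdB0 : ∀ μ, 0 ≤ dB μ := fun μ => Real.iSup_nonneg fun lam => norm_nonneg _
  have hdP0 : ∀ μ, 0 ≤ dP μ := fun μ => Real.iSup_nonneg fun lam => norm_nonneg _
  have hxA0 : ∀ μ, 0 ≤ dA μ * v μ := fun μ => mul_nonneg (hdA0 μ) (hv0 μ)
  have hxB0 : ∀ μ, 0 ≤ dB μ * v μ := fun μ => mul_nonneg (hdB0 μ) (hv0 μ)
  have hxP0 : ∀ μ, 0 ≤ dP μ * v μ := fun μ => mul_nonneg (hdP0 μ) (hv0 μ)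
  -- summability in product form
  have hxA : Summable (fun μ => (dA μ * v μ) ^ q) :=
    hA.congr fun μ => (Real.mul_rpow (hdA0 μ) (hv0 μ)).symm
  have hxB : Summable (fun μ => (dB μ * v μ) ^ q) :=
    hB.congr fun μ => (Real.mul_rpow (hdB0 μ) (hv0 μ)).symm
  set TA : ℝ := ∑' μ, (dA μ * v μ) ^ q with hTA_def
  set TB : ℝ := ∑' μ, (dB μ * v μ) ^ q with hTB_def
  have hTA0 : 0 ≤ TA := tsum_nonneg fun μ => Real.rpow_nonneg (hxA0 μ) q
  have hTB0 : 0 ≤ TB := tsum_nonneg fun μ => Real.rpow_nonneg (hxB0 μ) q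
  -- uniform bounds
  have hboundA : ∀ μ, dA μ * v μ ≤ TA ^ (1 / q) := by
    intro μ
    have h1 : (dA μ * v μ) ^ q ≤ TA :=
      Summable.le_tsum hxA μ fun ν _ => Real.rpow_nonneg (hxA0 ν) q
    calc dA μ * v μ = ((dA μ * v μ) ^ q) ^ q⁻¹ :=
          (Real.rpow_rpow_inv (hxA0 μ) hq0.ne').symm
      _ ≤ TA ^ q⁻¹ := Real.rpow_le_rpow (Real.rpow_nonneg (hxA0 μ) q) h1 (by positivity)
      _ = TA ^ (1 / q) := by rw [one_div]
  have hboundB : ∀ μ, dB μ * v μ ≤ TB ^ (1 / q) := by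
    intro μ
    have h1 : (dB μ * v μ) ^ q ≤ TB :=
      Summable.le_tsum hxB μ fun ν _ => Real.rpow_nonneg (hxB0 ν) q
    calc dB μ * v μ = ((dB μ * v μ) ^ q) ^ q⁻¹ :=
          (Real.rpow_rpow_inv (hxB0 μ) hq0.ne').symm
      _ ≤ TB ^ q⁻¹ := Real.rpow_le_rpow (Real.rpow_nonneg (hxB0 μ) q) h1 (by positivity)
      _ = TB ^ (1 / q) := by rw [one_div]
  have hMB0 : (0:ℝ) ≤ TB ^ (1 / q) := Real.rpow_nonneg hTB0 _
  -- ℓ^q ⊆ ℓ^1 : summability of dA * v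
  have hsumA1 : Summable (fun μ => dA μ * v μ) := by
    refine Summable.of_nonneg_of_le hxA0 ?_ (hxA.mul_right ((TA ^ (1 / q)) ^ (1 - q)))
    intro μ
    calc dA μ * v μ = (dA μ * v μ) ^ (q + (1 - q)) := by norm_num
      _ = (dA μ * v μ) ^ q * (dA μ * v μ) ^ (1 - q) :=
          Real.rpow_add' (hxA0 μ) (by norm_num)
      _ ≤ (dA μ * v μ) ^ q * (TA ^ (1 / q)) ^ (1 - q) := by
          apply mul_le_mul_of_nonneg_left _ (Real.rpow_nonneg (hxA0 μ) q)
          exact Real.rpow_le_rpow (hxA0 μ) (hboundA μ) (by linarith)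
  -- convolution bound on P
  have hconv_sum : ∀ μ, Summable (fun κ => dA κ * dB (μ - κ)) := by
    intro μ
    refine Summable.of_nonneg_of_le (fun κ => mul_nonneg (hdA0 κ) (hdB0 _)) ?_
      (hsumA1.mul_right (TB ^ (1 / q)))
    intro κ
    have h1 : dB (μ - κ) ≤ TB ^ (1 / q) :=
      le_trans (le_mul_of_one_le_right (hdB0 _) (hv1 _)) (hboundB _)
    have h2 : dA κ ≤ dA κ * v κ := le_mul_of_one_le_right (hdA0 _) (hv1 _)
    exact mul_le_mul h2 h1 (hdB0 _) (hxA0 κ)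
  set c : (Fin (2 * d) → ℤ) → ℝ := fun μ => ∑' κ, dA κ * dB (μ - κ) with hc_def
  have hc0 : ∀ μ, 0 ≤ c μ := fun μ => tsum_nonneg fun κ => mul_nonneg (hdA0 κ) (hdB0 _)
  have hcv0 : ∀ μ, 0 ≤ c μ * v μ := fun μ => mul_nonneg (hc0 μ) (hv0 μ)
  have hPle : ∀ μ lam, ‖P lam (lam - μ)‖ ≤ c μ := by
    intro μ lam
    rw [hP]
    have hsummand : ∀ κ, ‖A lam (lam - κ) * B (lam - κ) (lam - μ)‖ ≤ dA κ * dB (μ - κ) := by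
      intro κ
      rw [norm_mul]
      have h2 : ‖B (lam - κ) (lam - μ)‖ ≤ dB (μ - κ) := by
        have := hdB_le (μ - κ) (lam - κ)
        rwa [sub_sub_sub_cancel_right] at this
      exact mul_le_mul (hdA_le κ lam) h2 (norm_nonneg _) (hdA0 κ)
    have hnormsum : Summable (fun κ => ‖A lam (lam - κ) * B (lam - κ) (lam - μ)‖) :=
      Summable.of_nonneg_of_le (fun κ => norm_nonneg _) hsummand (hconv_sum μ)
    have hsum2 : Summable (fun ν => ‖A lam ν * B ν (lam - μ)‖) := by
      rw [← (Equiv.subLeft lam).summable_iff]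
      simpa [Function.comp_def, Equiv.subLeft] using hnormsum
    calc ‖∑' ν, A lam ν * B ν (lam - μ)‖ ≤ ∑' ν, ‖A lam ν * B ν (lam - μ)‖ :=
          norm_tsum_le_tsum_norm hsum2
      _ = ∑' κ, ‖A lam (lam - κ) * B (lam - κ) (lam - μ)‖ :=
          ((Equiv.subLeft lam).tsum_eq _).symm
      _ ≤ ∑' κ, dA κ * dB (μ - κ) := Summable.tsum_le_tsum hsummand hnormsum (hconv_sum μ)
  have hbddP : ∀ μ, BddAbove (Set.range fun lam => ‖P lam (lam - μ)‖) := by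
    intro μ
    refine ⟨c μ, ?_⟩
    rintro x ⟨lam, rfl⟩
    exact hPle μ lam
  have hdP_le : ∀ μ, dP μ ≤ c μ := fun μ => ciSup_le (hPle μ)
  -- the weighted convolution sum
  have hw0 : ∀ μ κ, (0:ℝ) ≤ dA κ * v κ * (dB (μ - κ) * v (μ - κ)) :=
    fun μ κ => mul_nonneg (hxA0 κ) (hxB0 _)
  have hwsum : ∀ μ, Summable (fun κ => dA κ * v κ * (dB (μ - κ) * v (μ - κ))) := by
    intro μ
    refine Summable.of_nonneg_of_le (hw0 μ) ?_ (hsumA1.mul_right (TB ^ (1 / q)))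
    intro κ
    exact mul_le_mul_of_nonneg_left (hboundB _) (hxA0 κ)
  have hcv_le : ∀ μ, c μ * v μ ≤ ∑' κ, dA κ * v κ * (dB (μ - κ) * v (μ - κ)) := by
    intro μ
    rw [hc_def]
    simp only
    rw [← tsum_mul_right]
    apply Summable.tsum_le_tsum ?_ ((hconv_sum μ).mul_right _) (hwsum μ)
    intro κ
    calc dA κ * dB (μ - κ) * v μ ≤ dA κ * dB (μ - κ) * (v κ * v (μ - κ)) :=
          mul_le_mul_of_nonneg_left (hvsub κ μ) (mul_nonneg (hdA0 κ) (hdB0 _))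
      _ = dA κ * v κ * (dB (μ - κ) * v (μ - κ)) := by ring
  -- pass to ENNReal
  set fa : (Fin (2 * d) → ℤ) → ENNReal := fun μ => ENNReal.ofReal ((dA μ * v μ) ^ q) with hfa_def
  set fb : (Fin (2 * d) → ℤ) → ENNReal := fun μ => ENNReal.ofReal ((dB μ * v μ) ^ q) with hfb_def
  have hfa_sum : ∑' μ, fa μ = ENNReal.ofReal TA :=
    (ENNReal.ofReal_tsum_of_nonneg (fun μ => Real.rpow_nonneg (hxA0 μ) q) hxA).symm
  have hfb_sum : ∑' μ, fb μ = ENNReal.ofReal TB :=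
    (ENNReal.ofReal_tsum_of_nonneg (fun μ => Real.rpow_nonneg (hxB0 μ) q) hxB).symm
  have hkey : ∀ μ, ENNReal.ofReal ((c μ * v μ) ^ q) ≤ ∑' κ, fa κ * fb (μ - κ) := by
    intro μ
    have h1 : (c μ * v μ) ^ q ≤ (∑' κ, dA κ * v κ * (dB (μ - κ) * v (μ - κ))) ^ q :=
      Real.rpow_le_rpow (hcv0 μ) (hcv_le μ) hq0.le
    have h2 : ENNReal.ofReal ((∑' κ, dA κ * v κ * (dB (μ - κ) * v (μ - κ))) ^ q) =
        (∑' κ, ENNReal.ofReal (dA κ * v κ) * ENNReal.ofReal (dB (μ - κ) * v (μ - κ))) ^ q := by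
      rw [← ENNReal.ofReal_rpow_of_nonneg (tsum_nonneg (hw0 μ)) hq0.le,
        ENNReal.ofReal_tsum_of_nonneg (hw0 μ) (hwsum μ)]
      congr 1
      exact tsum_congr fun κ => ENNReal.ofReal_mul (hxA0 κ)
    have h3 : (∑' κ, ENNReal.ofReal (dA κ * v κ) * ENNReal.ofReal (dB (μ - κ) * v (μ - κ))) ^ q ≤
        ∑' κ, fa κ * fb (μ - κ) := by
      refine le_trans (enn_tsum_rpow_le _ hq0 hq1) (le_of_eq (tsum_congr fun κ => ?_))
      rw [ENNReal.mul_rpow_of_nonneg _ _ hq0.le, hfa_def, hfb_def]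
      simp only
      rw [ENNReal.ofReal_rpow_of_nonneg (hxA0 κ) hq0.le,
        ENNReal.ofReal_rpow_of_nonneg (hxB0 _) hq0.le]
    exact le_trans (ENNReal.ofReal_le_ofReal h1) (le_trans (le_of_eq h2) h3)
  -- sum the key bound
  have hdouble : ∑' μ, ∑' κ, fa κ * fb (μ - κ) = ENNReal.ofReal TA * ENNReal.ofReal TB := by
    rw [ENNReal.tsum_comm]
    calc ∑' κ, ∑' μ, fa κ * fb (μ - κ)
        = ∑' κ, fa κ * ∑' μ, fb (μ - κ) := tsum_congr fun κ => ENNReal.tsum_mul_left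
      _ = ∑' κ, fa κ * ∑' μ, fb μ := by
          refine tsum_congr fun κ => ?_
          congr 1
          exact (Equiv.subRight κ).tsum_eq _
      _ = (∑' κ, fa κ) * ∑' μ, fb μ := ENNReal.tsum_mul_right
      _ = ENNReal.ofReal TA * ENNReal.ofReal TB := by rw [hfa_sum, hfb_sum]
  have hEN : ∑' μ, ENNReal.ofReal ((c μ * v μ) ^ q) ≤ ENNReal.ofReal (TA * TB) := by
    calc ∑' μ, ENNReal.ofReal ((c μ * v μ) ^ q) ≤ ∑' μ, ∑' κ, fa κ * fb (μ - κ) :=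
          ENNReal.tsum_le_tsum hkey
      _ = ENNReal.ofReal TA * ENNReal.ofReal TB := hdouble
      _ = ENNReal.ofReal (TA * TB) := (ENNReal.ofReal_mul hTA0).symm
  -- summability of (c * v) ^ q
  have hcq_sum : Summable (fun μ => (c μ * v μ) ^ q) := by
    have hne : ∑' μ, ENNReal.ofReal ((c μ * v μ) ^ q) ≠ ⊤ :=
      ne_top_of_le_ne_top ENNReal.ofReal_ne_top hEN
    have := ENNReal.summable_toReal hne
    refine this.congr fun μ => ?_
    rw [ENNReal.toReal_ofReal (Real.rpow_nonneg (hcv0 μ) q)]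
  -- summability goal
  have hsumP : Summable (fun μ => (dP μ * v μ) ^ q) := by
    refine Summable.of_nonneg_of_le (fun μ => Real.rpow_nonneg (hxP0 μ) q) ?_ hcq_sum
    intro μ
    exact Real.rpow_le_rpow (hxP0 μ)
      (mul_le_mul_of_nonneg_right (hdP_le μ) (hv0 μ)) hq0.le
  have hsumP' : Summable (fun μ => dP μ ^ q * v μ ^ q) :=
    hsumP.congr fun μ => Real.mul_rpow (hdP0 μ) (hv0 μ)
  refine ⟨hbddP, hsumP', ?_⟩
  -- final inequality
  have hTP : ∑' μ, dP μ ^ q * v μ ^ q = ∑' μ, (dP μ * v μ) ^ q :=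
    tsum_congr fun μ => (Real.mul_rpow (hdP0 μ) (hv0 μ)).symm
  have hstep1 : ∑' μ, (dP μ * v μ) ^ q ≤ ∑' μ, (c μ * v μ) ^ q := by
    apply Summable.tsum_le_tsum ?_ hsumP hcq_sum
    intro μ
    exact Real.rpow_le_rpow (hxP0 μ)
      (mul_le_mul_of_nonneg_right (hdP_le μ) (hv0 μ)) hq0.le
  have hstep2 : ∑' μ, (c μ * v μ) ^ q ≤ TA * TB := by
    have h1 : ENNReal.ofReal (∑' μ, (c μ * v μ) ^ q) ≤ ENNReal.ofReal (TA * TB) := by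
      rw [ENNReal.ofReal_tsum_of_nonneg (fun μ => Real.rpow_nonneg (hcv0 μ) q) hcq_sum]
      exact hEN
    exact (ENNReal.ofReal_le_ofReal_iff (mul_nonneg hTA0 hTB0)).mp h1
  have hfinal : ∑' μ, dP μ ^ q * v μ ^ q ≤ TA * TB := by
    rw [hTP]; exact le_trans hstep1 hstep2
  calc (∑' μ, dP μ ^ q * v μ ^ q) ^ (1 / q) ≤ (TA * TB) ^ (1 / q) :=
        Real.rpow_le_rpow (tsum_nonneg fun μ =>
          mul_nonneg (Real.rpow_nonneg (hdP0 μ) q) (Real.rpow_nonneg (hv0 μ) q))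
          hfinal (by positivity)
    _ = TA ^ (1 / q) * TB ^ (1 / q) := Real.mul_rpow hTA0 hTB0
    _ = (∑' μ, dA μ ^ q * v μ ^ q) ^ (1 / q) * (∑' μ, dB μ ^ q * v μ ^ q) ^ (1 / q) := by
        rw [hTA_def, hTB_def]
        congr 2
        · exact tsum_congr fun μ => Real.mul_rpow (hdA0 μ) (hv0 μ)
        · exact tsum_congr fun μ => Real.mul_rpow (hdB0 μ) (hv0 μ)
end

section
/- Let B = ℓ^q_{v_s}(ℤ^{2d}), 0 < q ≤ 1, s ≥ 0, and let Y be a solid quasi-Banach sequence space on ℤ^{2d} with B ∗ Y ⊆ Y (with norm estimate constant 1). Then every matrix A ∈ C_B acts boundedly on Y with ‖Ac‖_Y ≤ ‖A‖_{C_B}‖c‖_Y for all c ∈ Y. -/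
open scoped BigOperators

set_option maxHeartbeats 4000000

/-- Coercion of a real tsum into `ℂ` (valid also in the non-summable junk case). -/
lemma aux_tsum_ofReal {ι : Type*} (f : ι → ℝ) :
    ∑' i, ((f i : ℝ) : ℂ) = ((∑' i, f i : ℝ) : ℂ) := by
  by_cases hf : Summable f
  · exact (ContinuousLinearMap.map_tsum Complex.ofRealCLM hf).symm
  · have h2 : ¬ Summable (fun i => ((f i : ℝ) : ℂ)) := by
      intro h
      apply hf
      have := h.map Complex.reCLM Complex.reCLM.continuous
      simpa [Function.comp_def] using this
    rw [tsum_eq_zero_of_not_summable hf, tsum_eq_zero_of_not_summable h2, Complex.ofReal_zero]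

/-- `ℓ^q ⊆ ℓ¹` for `0 < q ≤ 1` (nonnegative terms). -/
lemma aux_summable_of_rpow {ι : Type*} {q : ℝ} (hq0 : 0 < q) (hq1 : q ≤ 1)
    {f : ι → ℝ} (hf : ∀ i, 0 ≤ f i) (h : Summable fun i => f i ^ q) : Summable f := by
  have hev : {i | ¬ f i ^ q < 1}.Finite := by
    have h1 : ∀ᶠ i in Filter.cofinite, f i ^ q < 1 :=
      (h.tendsto_cofinite_zero).eventually_lt_const one_pos
    simpa [Filter.eventually_cofinite] using h1
  rw [← summable_subtype_and_compl (s := {i | ¬ f i ^ q < 1})]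
  constructor
  · simpa [Function.comp_def] using hev.summable f
  · have hcs : Summable fun x : ↥({i | ¬ f i ^ q < 1}ᶜ) => f (x : ι) ^ q := by
      have := h.subtype {i | ¬ f i ^ q < 1}ᶜ; simp only [Function.comp_def] at this; exact this
    apply Summable.of_nonneg_of_le (fun b => hf _) (fun b => ?_) hcs
    have hb : f (b : ι) ^ q < 1 := by
      have := b.2
      simpa [Set.mem_compl_iff] using this
    have hb1 : f (b : ι) < 1 := by
      by_contra hcon
      push_neg at hcon
      exact absurd (Real.one_le_rpow hcon hq0.le) (not_le.mpr hb)
    rcases eq_or_lt_of_le (hf (b : ι)) with h0 | h0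
    · rw [← h0, Real.zero_rpow hq0.ne']
    · calc f (b : ι) = f (b : ι) ^ (1 : ℝ) := (Real.rpow_one _).symm
        _ ≤ f (b : ι) ^ q := Real.rpow_le_rpow_of_exponent_ge h0 hb1.le hq1

/-- Finiteness of balls in `ℤ^k`. -/
lemma aux_ball_finite (k : ℕ) (L : ℝ) :
    {μ : Fin k → ℤ | ‖(fun i => (μ i : ℝ) : Fin k → ℝ)‖ ≤ L}.Finite := by
  apply (Set.finite_Icc (fun _ : Fin k => -⌈L⌉) (fun _ => ⌈L⌉)).subset
  intro μ hμ
  simp only [Set.mem_setOf_eq] at hμ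
  constructor <;> intro i
  · have h1 : |(μ i : ℝ)| ≤ L := by
      have := norm_le_pi_norm (fun j => (μ j : ℝ)) i
      simpa [Real.norm_eq_abs] using this.trans hμ
    have h2 : -(⌈L⌉ : ℝ) ≤ (μ i : ℝ) := by
      have := (abs_le.mp h1).1
      have hL := Int.le_ceil L
      linarith
    exact_mod_cast h2
  · have h1 : |(μ i : ℝ)| ≤ L := by
      have := norm_le_pi_norm (fun j => (μ j : ℝ)) i
      simpa [Real.norm_eq_abs] using this.trans hμ
    have h2 : (μ i : ℝ) ≤ (⌈L⌉ : ℝ) := by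
      have := (abs_le.mp h1).2
      have hL := Int.le_ceil L
      linarith
    exact_mod_cast h2

/-- Boundedness of `C_B` matrices on solid sequence spaces: let `B = ℓ^q_{v_s}(ℤ^{2d})`
and `Y` a solid quasi-Banach sequence space with `B ∗ Y ⊆ Y` (with constant 1). Then
every `A ∈ C_B` acts boundedly on `Y` with `‖Ac‖_Y ≤ ‖A‖_{C_B} ‖c‖_Y`. -/
theorem matrix_class_acts_on_solid (d : ℕ) (q s : ℝ) (hq0 : 0 < q) (hq1 : q ≤ 1) (hs : 0 ≤ s)
    (v : (Fin (2 * d) → ℤ) → ℝ)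
    (hv : ∀ k, v k = (1 + ‖(fun i => (k i : ℝ) : Fin (2 * d) → ℝ)‖) ^ s)
    (Y : Set ((Fin (2 * d) → ℤ) → ℂ)) (NY : ((Fin (2 * d) → ℤ) → ℂ) → ℝ)
    -- `Y` is solid:
    (hsolid : ∀ c c' : (Fin (2 * d) → ℤ) → ℂ, c' ∈ Y → (∀ lam, ‖c lam‖ ≤ ‖c' lam‖) →
      c ∈ Y ∧ NY c ≤ NY c')
    -- `B ∗ Y ⊆ Y` with norm estimate constant 1:
    (hBY : ∀ b : (Fin (2 * d) → ℤ) → ℂ, Summable (fun μ => ‖b μ‖ ^ q * v μ ^ q) →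
      ∀ c ∈ Y, (fun lam => ∑' μ, b (lam - μ) * c μ) ∈ Y ∧
        NY (fun lam => ∑' μ, b (lam - μ) * c μ) ≤
          (∑' μ, ‖b μ‖ ^ q * v μ ^ q) ^ (1 / q) * NY c)
    (A : (Fin (2 * d) → ℤ) → (Fin (2 * d) → ℤ) → ℂ)
    (hAbdd : ∀ μ, BddAbove (Set.range fun lam => ‖A lam (lam - μ)‖))
    (hA : Summable fun μ => (⨆ lam, ‖A lam (lam - μ)‖) ^ q * v μ ^ q) :
    ∀ c ∈ Y, (fun lam => ∑' μ, A lam μ * c μ) ∈ Y ∧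
      NY (fun lam => ∑' μ, A lam μ * c μ) ≤
        (∑' μ, (⨆ lam, ‖A lam (lam - μ)‖) ^ q * v μ ^ q) ^ (1 / q) * NY c := by
  classical
  intro c hc
  set b : (Fin (2 * d) → ℤ) → ℝ := fun μ => ⨆ lam, ‖A lam (lam - μ)‖ with hbdef
  -- cast to reals
  set Wc : (Fin (2 * d) → ℤ) → (Fin (2 * d) → ℝ) := fun k i => (k i : ℝ) with hWdef
  have hW_sub : ∀ x y : (Fin (2 * d) → ℤ), Wc (x - y) = Wc x - Wc y := by
    intro x y; funext i
    simp only [hWdef, Pi.sub_apply]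
    push_cast
    ring
  have hv' : ∀ k : (Fin (2 * d) → ℤ), v k = (1 + ‖Wc k‖) ^ s := hv
  have hv1 : ∀ k : (Fin (2 * d) → ℤ), 1 ≤ v k := by
    intro k; rw [hv' k]
    exact Real.one_le_rpow (by linarith [norm_nonneg (Wc k)]) hs
  have hv0 : ∀ k : (Fin (2 * d) → ℤ), 0 < v k := fun k => lt_of_lt_of_le one_pos (hv1 k)
  have hvkey : ∀ x y z : (Fin (2 * d) → ℤ), ‖Wc x‖ ≤ ‖Wc y‖ + ‖Wc z‖ → v x ≤ v y * v z := by
    intro x y z hxyz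
    calc v x = (1 + ‖Wc x‖) ^ s := hv' x
      _ ≤ ((1 + ‖Wc y‖) * (1 + ‖Wc z‖)) ^ s := by
          apply Real.rpow_le_rpow (by positivity) ?_ hs
          nlinarith [norm_nonneg (Wc y), norm_nonneg (Wc z)]
      _ = (1 + ‖Wc y‖) ^ s * (1 + ‖Wc z‖) ^ s :=
          Real.mul_rpow (by positivity) (by positivity)
      _ = v y * v z := by rw [← hv' y, ← hv' z]
  have hvsub : ∀ a b : (Fin (2 * d) → ℤ), v (a - b) ≤ v a * v b := by
    intro a b'
    apply hvkey
    rw [hW_sub]; exact norm_sub_le _ _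
  have hvmul : ∀ lam μ : (Fin (2 * d) → ℤ), v μ ≤ v (lam - μ) * v lam := by
    intro lam μ
    apply hvkey
    have h2 : Wc μ = Wc (lam - μ) - (Wc lam - Wc μ - Wc μ) - Wc μ + Wc lam - Wc (lam - μ) := by ring
    have h3 : Wc μ = Wc lam - Wc (lam - μ) := by
      rw [hW_sub]; ring
    rw [h3]
    have := norm_sub_le (Wc lam) (Wc (lam - μ))
    calc ‖Wc lam - Wc (lam - μ)‖ ≤ ‖Wc lam‖ + ‖Wc (lam - μ)‖ := norm_sub_le _ _
      _ = ‖Wc (lam - μ)‖ + ‖Wc lam‖ := by ring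
  have hbnn : ∀ μ : (Fin (2 * d) → ℤ), 0 ≤ b μ := by
    intro μ
    exact le_trans (norm_nonneg (A 0 (0 - μ))) (le_ciSup (hAbdd μ) 0)
  have hble : ∀ lam μ : (Fin (2 * d) → ℤ), ‖A lam μ‖ ≤ b (lam - μ) := by
    intro lam μ
    have h1 := le_ciSup (hAbdd (lam - μ)) lam
    rw [sub_sub_cancel] at h1
    exact h1
  set S0 : ℝ := ∑' μ, b μ ^ q * v μ ^ q with hSdef
  have hterm_nn : ∀ μ : (Fin (2 * d) → ℤ), 0 ≤ b μ ^ q * v μ ^ q := fun μ =>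
    mul_nonneg (Real.rpow_nonneg (hbnn μ) _) (Real.rpow_nonneg (hv0 μ).le _)
  have hSnn : 0 ≤ S0 := tsum_nonneg hterm_nn
  have hSpow_nn : 0 ≤ S0 ^ (1 / q) := Real.rpow_nonneg hSnn _
  -- h function
  set h : (Fin (2 * d) → ℤ) → ℝ := fun lam => ∑' μ, ‖A lam μ‖ * ‖c μ‖ with hhdef
  have hhnn : ∀ lam, 0 ≤ h lam := fun lam => tsum_nonneg (fun μ => by positivity)
  have hTle : ∀ lam, ‖∑' μ, A lam μ * c μ‖ ≤ h lam := by
    intro lam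
    by_cases hsum : Summable (fun μ => A lam μ * c μ)
    · have hns : Summable (fun μ => ‖A lam μ * c μ‖) := summable_norm_iff.mpr hsum
      calc ‖∑' μ, A lam μ * c μ‖ ≤ ∑' μ, ‖A lam μ * c μ‖ := norm_tsum_le_tsum_norm hns
        _ = h lam := by
            rw [hhdef]; exact tsum_congr (fun μ => norm_mul _ _)
    · rw [tsum_eq_zero_of_not_summable hsum]
      simpa using hhnn lam
  -- NY is nonneg on Y
  have hNYnn : ∀ y ∈ Y, 0 ≤ NY y := by
    intro y hy
    set b2 : (Fin (2 * d) → ℤ) → ℂ := fun ν => if ν = 0 then (2 : ℂ) else 0 with hb2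
    have hv01 : v 0 = 1 := by
      rw [hv' 0]
      have : Wc (0 : (Fin (2 * d) → ℤ)) = 0 := by funext i; simp [hWdef]
      rw [this, norm_zero, add_zero, Real.one_rpow]
    have hcost : (fun μ => ‖b2 μ‖ ^ q * v μ ^ q) =
        fun μ : (Fin (2 * d) → ℤ) => if μ = 0 then (2 : ℝ) ^ q * v 0 ^ q else 0 := by
      funext μ
      by_cases hμ : μ = 0
      · subst hμ; simp [hb2, Complex.norm_ofNat]
      · simp [hb2, hμ, Real.zero_rpow hq0.ne']
    have hsum2 : Summable (fun μ => ‖b2 μ‖ ^ q * v μ ^ q) := by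
      rw [hcost]
      exact summable_of_ne_finset_zero (s := {(0 : (Fin (2 * d) → ℤ))}) (by intro μ hμ; simp at hμ; simp [hμ])
    obtain ⟨hmem2, hle2⟩ := hBY b2 hsum2 y hy
    have hF2 : (fun lam => ∑' μ, b2 (lam - μ) * y μ) = fun lam => (2 : ℂ) * y lam := by
      funext lam
      rw [tsum_eq_single lam]
      · simp [hb2]
      · intro μ hμ
        have : lam - μ ≠ 0 := sub_ne_zero.mpr (Ne.symm hμ)
        simp [hb2, this]
    have hcost2 : (∑' μ, ‖b2 μ‖ ^ q * v μ ^ q) = (2 : ℝ) ^ q := by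
      rw [hcost, tsum_ite_eq (0 : (Fin (2 * d) → ℤ)) (fun _ => (2 : ℝ) ^ q * v 0 ^ q), hv01, Real.one_rpow, mul_one]
    have hpow2 : ((2 : ℝ) ^ q) ^ (1 / q) = 2 := by
      rw [← Real.rpow_mul (by norm_num : (0:ℝ) ≤ 2), mul_one_div_cancel hq0.ne', Real.rpow_one]
    rw [hF2] at hmem2 hle2
    rw [hcost2, hpow2] at hle2
    have hsolid2 := hsolid y (fun lam => (2 : ℂ) * y lam) hmem2 (by
      intro lam
      rw [norm_mul]
      have : ‖(2 : ℂ)‖ = 2 := by norm_num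
      rw [this]
      nlinarith [norm_nonneg (y lam)])
    nlinarith [hsolid2.2, hle2]
  -- the finishing move
  have finish : ∀ F : (Fin (2 * d) → ℤ) → ℂ, F ∈ Y → NY F ≤ S0 ^ (1 / q) * NY c →
      (∀ lam, h lam ≤ ‖F lam‖) →
      (fun lam => ∑' μ, A lam μ * c μ) ∈ Y ∧
        NY (fun lam => ∑' μ, A lam μ * c μ) ≤ S0 ^ (1 / q) * NY c := by
    intro F hFmem hFNY hFpt
    have := hsolid (fun lam => ∑' μ, A lam μ * c μ) F hFmem
      (fun lam => (hTle lam).trans (hFpt lam))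
    exact ⟨this.1, this.2.trans hFNY⟩
  by_cases hP : ∀ K : ℝ, ∃ μ : (Fin (2 * d) → ℤ), K * v μ < ‖c μ‖
  · -- Case B : c has arbitrarily v-large values
    by_cases hS0 : S0 = 0
    · -- degenerate: A = 0
      have hb0 : ∀ μ : (Fin (2 * d) → ℤ), b μ = 0 := by
        intro μ
        have h1 : b μ ^ q * v μ ^ q ≤ S0 := Summable.le_tsum hA μ (fun j _ => hterm_nn j)
        rw [hS0] at h1
        have h2 : b μ ^ q * v μ ^ q = 0 := le_antisymm h1 (hterm_nn μ)
        have hvq : 0 < v μ ^ q := Real.rpow_pos_of_pos (hv0 μ) _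
        have hbq : b μ ^ q = 0 := by
          rcases mul_eq_zero.mp h2 with h3 | h3
          · exact h3
          · exact absurd h3 hvq.ne'
        by_contra hne
        have hpos : 0 < b μ := lt_of_le_of_ne (hbnn μ) (Ne.symm hne)
        have := Real.rpow_pos_of_pos hpos q
        rw [hbq] at this
        exact lt_irrefl 0 this
      have hA0 : ∀ lam μ : (Fin (2 * d) → ℤ), A lam μ = 0 := by
        intro lam μ
        have h1 := hble lam μ
        rw [hb0] at h1
        exact norm_le_zero_iff.mp h1
      have hT0 : (fun lam => ∑' μ, A lam μ * c μ) = fun _ : (Fin (2 * d) → ℤ) => (0 : ℂ) := by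
        funext lam
        have : (fun μ : (Fin (2 * d) → ℤ)  => A lam μ * c μ) = fun _ => (0 : ℂ) := by
          funext μ; rw [hA0]; exact zero_mul _
        rw [this, tsum_zero]
      have hzfun : (fun μ : (Fin (2 * d) → ℤ) => ‖(0 : ℂ)‖ ^ q * v μ ^ q) =
          fun _ : (Fin (2 * d) → ℤ) => (0 : ℝ) := by
        funext μ
        rw [norm_zero, Real.zero_rpow hq0.ne', zero_mul]
      have hsum0 : Summable (fun μ : (Fin (2 * d) → ℤ) => ‖(0 : ℂ)‖ ^ q * v μ ^ q) := by
        rw [hzfun]; exact summable_zero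
      obtain ⟨hmem0, hle0⟩ := hBY (fun _ => (0 : ℂ)) hsum0 c hc
      have hF0 : (fun lam : (Fin (2 * d) → ℤ) => ∑' μ : (Fin (2 * d) → ℤ), (0 : ℂ) * c μ) =
          fun _ : (Fin (2 * d) → ℤ) => (0 : ℂ) := by
        funext lam
        have : (fun μ : (Fin (2 * d) → ℤ) => (0 : ℂ) * c μ) = fun _ => (0 : ℂ) := by
          funext μ; exact zero_mul _
        rw [this, tsum_zero]
      rw [hF0] at hmem0 hle0
      rw [hT0]
      refine ⟨hmem0, le_trans hle0 ?_⟩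
      apply mul_le_mul_of_nonneg_right ?_ (hNYnn c hc)
      apply Real.rpow_le_rpow ?_ ?_ (by positivity)
      · exact tsum_nonneg (fun μ => mul_nonneg (Real.rpow_nonneg (norm_nonneg _) _)
          (Real.rpow_nonneg (hv0 μ).le _))
      · refine le_trans (le_of_eq ?_) hSnn
        rw [tsum_congr (fun μ : Fin (2 * d) → ℤ =>
          (by simp [Real.zero_rpow hq0.ne'] :
            ‖(0 : ℂ)‖ ^ q * v μ ^ q = 0)), tsum_zero]
    · have hSpos : 0 < S0 := lt_of_le_of_ne hSnn (Ne.symm hS0)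
      -- infinite index set
      haveI hInf : Infinite (Fin (2 * d) → ℤ) := by
        rcases finite_or_infinite (Fin (2 * d) → ℤ) with hfin | hinf
        · exfalso
          obtain ⟨μ₀, hμ₀⟩ := Finite.exists_max (fun μ : Fin (2 * d) → ℤ => ‖c μ‖)
          obtain ⟨μ₁, hμ₁⟩ := hP ‖c μ₀‖
          have h1 : ‖c μ₀‖ ≤ ‖c μ₀‖ * v μ₁ := le_mul_of_one_le_right (norm_nonneg _) (hv1 μ₁)
          have h2 := hμ₀ μ₁
          linarith
        · exact hinf
      haveI hEnc : Encodable (Fin (2 * d) → ℤ) := Encodable.ofCountable _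
      haveI hDen : Denumerable (Fin (2 * d) → ℤ) := Denumerable.ofEncodableOfInfinite _
      set E : (Fin (2 * d) → ℤ) ≃ ℕ := Denumerable.eqv (Fin (2 * d) → ℤ) with hEdef
      -- existence of far, v-large points
      have hpickex : ∀ R L : ℝ, ∃ μ : Fin (2 * d) → ℤ, R * v μ < ‖c μ‖ ∧ L ≤ ‖Wc μ‖ := by
        intro R L
        have hfin := aux_ball_finite (2 * d) L
        set B0 : ℝ := ∑ μ ∈ hfin.toFinset, ‖c μ‖ with hB0
        have hB0nn : 0 ≤ B0 := Finset.sum_nonneg (fun μ _ => norm_nonneg _)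
        have hB0ge : ∀ μ : Fin (2 * d) → ℤ, ‖Wc μ‖ ≤ L → ‖c μ‖ ≤ B0 := by
          intro μ hμ
          apply Finset.single_le_sum (fun ν _ => norm_nonneg (c ν))
          rw [Set.Finite.mem_toFinset]
          exact hμ
        obtain ⟨μ, hμ⟩ := hP (max R B0)
        refine ⟨μ, lt_of_le_of_lt
          (mul_le_mul_of_nonneg_right (le_max_left _ _) (hv0 μ).le) hμ, ?_⟩
        by_contra hcon
        push_neg at hcon
        have h1 : ‖c μ‖ ≤ B0 := hB0ge μ hcon.le
        have h2 : B0 ≤ max R B0 := le_max_right _ _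
        have h3 : max R B0 ≤ max R B0 * v μ :=
          le_mul_of_one_le_right (le_trans hB0nn h2) (hv1 μ)
        linarith
      choose pick hpick1 hpick2 using hpickex
      -- the recursive construction of the concentration points
      set Rb : ℕ → ℝ := fun n =>
        max 1 (h (E.symm n) * v (E.symm n) * (2 * 2 ^ n / S0) ^ (1 / q)) with hRbdef
      set Lb : ℕ → ℝ → ℝ := fun n a => 4 * (1 + ‖Wc (E.symm n)‖ + (n : ℝ) + a) with hLbdef
      set step : ℕ → ℝ → ((Fin (2 * d) → ℤ) × ℝ) := fun n a =>
        (pick (Rb n) (Lb n a),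
          a + ‖Wc (pick (Rb n) (Lb n a))‖ + ‖Wc (E.symm n)‖) with hstepdef
      set M : ℕ → ((Fin (2 * d) → ℤ) × ℝ) := fun n =>
        Nat.rec (step 0 0) (fun n ih => step (n + 1) ih.2) n with hMdef
      set MM : ℕ → (Fin (2 * d) → ℤ) := fun n => (M n).1 with hMMdef
      set pA : ℕ → ℝ := fun n => Nat.rec (0 : ℝ) (fun m _ => (M m).2) n with hpAdef
      have hM0 : M 0 = step 0 0 := rfl
      have hMs : ∀ n, M (n + 1) = step (n + 1) (M n).2 := fun _ => rfl
      have hpA0 : pA 0 = 0 := rfl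
      have hpAs : ∀ n, pA (n + 1) = (M n).2 := fun _ => rfl
      have hMn : ∀ n, M n = step n (pA n) := by
        intro n
        cases n with
        | zero => rw [hpA0]; exact hM0
        | succ k => rw [hpAs k]
      have hMM_R : ∀ n, Rb n * v (MM n) < ‖c (MM n)‖ := by
        intro n
        simp only [hMMdef, hMn, hstepdef]
        exact hpick1 _ _
      have hMM_L : ∀ n, Lb n (pA n) ≤ ‖Wc (MM n)‖ := by
        intro n
        simp only [hMMdef, hMn, hstepdef]
        exact hpick2 _ _
      have hAC : ∀ n, (M n).2 = pA n + ‖Wc (MM n)‖ + ‖Wc (E.symm n)‖ := by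
        intro n
        simp only [hMMdef, hMn, hstepdef]
      have hpAnn : ∀ n, 0 ≤ pA n := by
        intro n
        induction n with
        | zero => rw [hpA0]
        | succ m ih =>
          rw [hpAs, hAC m]
          have := norm_nonneg (Wc (MM m))
          have := norm_nonneg (Wc (E.symm m))
          linarith
      have hprev : ∀ n m, m < n → ‖Wc (MM m)‖ + ‖Wc (E.symm m)‖ ≤ pA n := by
        intro n
        induction n with
        | zero => intro m hm; exact absurd hm (Nat.not_lt_zero m)
        | succ k ih =>
          intro m hm
          rw [hpAs, hAC k]
          rcases Nat.lt_succ_iff_lt_or_eq.mp hm with hml | hml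
          · have := ih m hml
            have := norm_nonneg (Wc (MM k))
            have := norm_nonneg (Wc (E.symm k))
            linarith
          · subst hml
            linarith [hpAnn m]
      have hKEY : ∀ m n, m < n →
          4 + 4 * ‖Wc (E.symm n)‖ + 4 * (n : ℝ) + 3 * ‖Wc (MM m)‖ + 4 * ‖Wc (E.symm m)‖ ≤
            ‖Wc (MM n)‖ - ‖Wc (MM m)‖ := by
        intro m n hmn
        have h1 := hMM_L n
        simp only [hLbdef] at h1
        have h2 := hprev n m hmn
        linarith
      have hnormdiff : ∀ a b x y : Fin (2 * d) → ℤ, a - b = x - y →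
          ‖Wc a‖ - ‖Wc b‖ ≤ ‖Wc x‖ + ‖Wc y‖ := by
        intro a b' x y hxy
        calc ‖Wc a‖ - ‖Wc b'‖ ≤ ‖Wc a - Wc b'‖ := norm_sub_norm_le _ _
          _ = ‖Wc (a - b')‖ := by rw [hW_sub]
          _ = ‖Wc (x - y)‖ := by rw [hxy]
          _ = ‖Wc x - Wc y‖ := by rw [hW_sub]
          _ ≤ ‖Wc x‖ + ‖Wc y‖ := norm_sub_le _ _
      have hdiff : ∀ m n, m < n → MM n - MM m ≠ E.symm n - E.symm m := by
        intro m n hmn heq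
        have h1 := hnormdiff (MM n) (MM m) (E.symm n) (E.symm m) heq
        have h2 := hKEY m n hmn
        have h3 := norm_nonneg (Wc (E.symm n))
        have h4 := norm_nonneg (Wc (E.symm m))
        have h5 := norm_nonneg (Wc (MM m))
        have h6 : (0:ℝ) ≤ (n : ℝ) := Nat.cast_nonneg n
        linarith
      set ι : ℕ → (Fin (2 * d) → ℤ) := fun n => E.symm n - MM n with hιdef
      have hinj1 : Function.Injective ι := by
        intro m n hmn
        by_contra hne
        rcases Ne.lt_or_gt hne with hlt | hlt
        · apply hdiff m n hlt
          simp only [hιdef] at hmn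
          linear_combination hmn
        · apply hdiff n m hlt
          simp only [hιdef] at hmn
          linear_combination -hmn
      have hCpos : ∀ n, 0 < ‖c (MM n)‖ := by
        intro n
        have h1 := hMM_R n
        have h2 : (1:ℝ) ≤ Rb n := le_max_left _ _
        nlinarith [hv0 (MM n)]
      set g0 : ℕ → ℝ := fun n => h (E.symm n) / ‖c (MM n)‖ with hg0def
      have hg0nn : ∀ n, 0 ≤ g0 n := fun n => div_nonneg (hhnn _) (hCpos n).le
      set β : (Fin (2 * d) → ℤ) → ℝ := Function.extend ι g0 0 with hβdef
      have hβι : ∀ n, β (ι n) = g0 n := fun n => hinj1.extend_apply _ _ _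
      have hβ0 : ∀ x, x ∉ Set.range ι → β x = 0 := by
        intro x hx
        rw [hβdef, Function.extend_apply' _ _ _ (by simpa [Set.mem_range] using hx)]
        rfl
      have hβnn : ∀ x, 0 ≤ β x := by
        intro x
        by_cases hx : x ∈ Set.range ι
        · obtain ⟨n, rfl⟩ := hx
          rw [hβι]; exact hg0nn n
        · rw [hβ0 x hx]
      set βC : (Fin (2 * d) → ℤ) → ℂ := fun x => ((β x : ℝ) : ℂ) with hβCdef
      set FC : (Fin (2 * d) → ℤ) → ℝ := fun x => ‖βC x‖ ^ q * v x ^ q with hFCdef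
      have hFCeq : ∀ x, FC x = β x ^ q * v x ^ q := by
        intro x
        simp only [hFCdef, hβCdef]
        rw [Complex.norm_real, Real.norm_eq_abs, abs_of_nonneg (hβnn x)]
      have hFC0 : ∀ x ∉ Set.range ι, FC x = 0 := by
        intro x hx
        rw [hFCeq, hβ0 x hx, Real.zero_rpow hq0.ne', zero_mul]
      have hFCι : ∀ n, FC (ι n) = g0 n ^ q * v (ι n) ^ q := by
        intro n; rw [hFCeq, hβι]
      -- cost bound for each concentration point
      have hcostb : ∀ n, g0 n ^ q * v (ι n) ^ q ≤ S0 / 2 / 2 ^ n := by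
        intro n
        rcases eq_or_lt_of_le (hhnn (E.symm n)) with hz | hz
        · simp only [hg0def]
          rw [← hz, zero_div, Real.zero_rpow hq0.ne', zero_mul]
          positivity
        · have hRbpos : 0 < Rb n := lt_of_lt_of_le one_pos (le_max_left _ _)
          have hvι : v (ι n) ≤ v (E.symm n) * v (MM n) := hvsub _ _
          have hCge := hMM_R n
          have hRv : 0 < Rb n * v (MM n) := mul_pos hRbpos (hv0 _)
          have hg0vι : g0 n * v (ι n) ≤ h (E.symm n) * v (E.symm n) / Rb n := by
            have step1 : g0 n ≤ h (E.symm n) / (Rb n * v (MM n)) := by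
              simp only [hg0def]
              exact div_le_div_of_nonneg_left (hhnn _) hRv hCge.le
            have step2 : g0 n * v (ι n) ≤
                (h (E.symm n) / (Rb n * v (MM n))) * (v (E.symm n) * v (MM n)) :=
              mul_le_mul step1 hvι (hv0 _).le (by positivity)
            refine step2.trans (le_of_eq ?_)
            rw [div_mul_eq_mul_div, div_eq_div_iff hRv.ne' hRbpos.ne']
            ring
          have ht : (0:ℝ) < (2 * 2 ^ n / S0) ^ (1 / q) :=
            Real.rpow_pos_of_pos (by positivity) _
          have hhv : 0 < h (E.symm n) * v (E.symm n) := mul_pos hz (hv0 _)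
          have step3 : h (E.symm n) * v (E.symm n) / Rb n ≤
              1 / (2 * 2 ^ n / S0) ^ (1 / q) := by
            rw [div_le_div_iff₀ hRbpos ht]
            have h4 : h (E.symm n) * v (E.symm n) * (2 * 2 ^ n / S0) ^ (1 / q) ≤ Rb n :=
              le_max_right _ _
            linarith
          have step4 : (1 / (2 * 2 ^ n / S0) ^ (1 / q)) ^ q = S0 / 2 / 2 ^ n := by
            rw [Real.div_rpow zero_le_one ht.le, Real.one_rpow,
              ← Real.rpow_mul (by positivity : (0:ℝ) ≤ 2 * 2 ^ n / S0),
              one_div_mul_cancel hq0.ne', Real.rpow_one, one_div_div, div_div]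
          calc g0 n ^ q * v (ι n) ^ q = (g0 n * v (ι n)) ^ q :=
              (Real.mul_rpow (hg0nn n) (hv0 _).le).symm
            _ ≤ (h (E.symm n) * v (E.symm n) / Rb n) ^ q :=
              Real.rpow_le_rpow (mul_nonneg (hg0nn n) (hv0 _).le) hg0vι hq0.le
            _ ≤ (1 / (2 * 2 ^ n / S0) ^ (1 / q)) ^ q :=
              Real.rpow_le_rpow (by positivity) step3 hq0.le
            _ = S0 / 2 / 2 ^ n := step4
      -- summability of the cost
      have hsuppFC : Function.support FC ⊆ Set.range ι := by
        intro x hx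
        by_contra hcon
        exact hx (hFC0 x hcon)
      have hmaj : Summable (fun n : ℕ => S0 / 2 / 2 ^ n) := by
        have h1 := summable_geometric_two.mul_left (S0 / 2)
        apply h1.congr
        intro n
        rw [one_div, inv_pow, ← div_eq_mul_inv]
      have hFCcomp : Summable (fun n => FC (ι n)) := by
        apply Summable.of_nonneg_of_le (fun n => ?_) (fun n => ?_) hmaj
        · rw [hFCι]
          exact mul_nonneg (Real.rpow_nonneg (hg0nn n) _) (Real.rpow_nonneg (hv0 _).le _)
        · rw [hFCι]
          exact hcostb n
      have hFCs : Summable FC := (hinj1.summable_iff hFC0).mp hFCcomp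
      have hFCt : (∑' x, FC x) ≤ S0 := by
        rw [← hinj1.tsum_eq hsuppFC]
        calc ∑' n, FC (ι n) ≤ ∑' n : ℕ, S0 / 2 / 2 ^ n :=
            Summable.tsum_le_tsum (fun n => by rw [hFCι]; exact hcostb n) hFCcomp hmaj
          _ = S0 := tsum_geometric_two' S0
      -- the solid minorant of c supported on the concentration points
      set c1 : (Fin (2 * d) → ℤ) → ℂ :=
        fun μ => if μ ∈ Set.range MM then ((‖c μ‖ : ℝ) : ℂ) else 0 with hc1def
      have hc1m := hsolid c1 c hc (by
        intro lam
        simp only [hc1def]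
        by_cases hμ : lam ∈ Set.range MM
        · rw [if_pos hμ, Complex.norm_real, Real.norm_eq_abs, abs_of_nonneg (norm_nonneg _)]
        · rw [if_neg hμ]
          simp)
      have hsumβ : Summable (fun μ => ‖βC μ‖ ^ q * v μ ^ q) := hFCs
      obtain ⟨hFmem, hFle⟩ := hBY βC hsumβ c1 hc1m.1
      -- pointwise domination
      have hpt : ∀ lam, h lam ≤ ‖(fun lam => ∑' μ, βC (lam - μ) * c1 μ) lam‖ := by
        intro lam
        set nl : ℕ := E lam with hnldef
        have hEnl : E.symm nl = lam := Equiv.symm_apply_apply E lam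
        set φ : (Fin (2 * d) → ℤ) → ℝ :=
          fun μ => β (lam - μ) * (if μ ∈ Set.range MM then ‖c μ‖ else 0) with hφdef
        have hφnn : ∀ μ, 0 ≤ φ μ := by
          intro μ
          apply mul_nonneg (hβnn _)
          by_cases hμ : μ ∈ Set.range MM
          · rw [if_pos hμ]; exact norm_nonneg _
          · rw [if_neg hμ]
        have hc1φ : ∀ μ, βC (lam - μ) * c1 μ = ((φ μ : ℝ) : ℂ) := by
          intro μ
          simp only [hφdef, hβCdef, hc1def]
          by_cases hμ : μ ∈ Set.range MM
          · rw [if_pos hμ, if_pos hμ]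
            push_cast
            ring
          · rw [if_neg hμ, if_neg hμ]
            simp
        set N : ℕ := ⌊‖Wc lam‖⌋₊ + 1 with hNdef
        set sfin : Finset (Fin (2 * d) → ℤ) :=
          {MM nl} ∪ (Finset.range N).image MM ∪
            (Finset.range N).image (fun n => MM n - E.symm n + lam) with hsfindef
        have hNlt : ∀ n : ℕ, (n : ℝ) ≤ ‖Wc lam‖ → n < N := by
          intro n hn
          rw [hNdef]
          exact Nat.lt_succ_of_le (Nat.le_floor hn)
        have hsupp : ∀ μ ∉ sfin, φ μ = 0 := by
          intro μ hμs
          by_contra hφne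
          have hc1ne : (if μ ∈ Set.range MM then ‖c μ‖ else 0) ≠ 0 := by
            intro hzz
            exact hφne (by simp only [hφdef]; rw [hzz, mul_zero])
          have hμM : μ ∈ Set.range MM := by
            by_contra hcon
            exact hc1ne (if_neg hcon)
          obtain ⟨nρ, hnρ⟩ := hμM
          have hβne : β (lam - μ) ≠ 0 := by
            intro hzz
            exact hφne (by simp only [hφdef]; rw [hzz, zero_mul])
          have hβrange : lam - μ ∈ Set.range ι := by
            by_contra hcon
            exact hβne (hβ0 _ hcon)
          obtain ⟨nσ, hnσ⟩ := hβrange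
          subst hnρ
          simp only [hιdef] at hnσ
          apply hμs
          rw [hsfindef]
          rcases lt_trichotomy nσ nρ with hlt | heqn | hlt
          · -- nσ < nρ
            have heq2 : MM nρ - MM nσ = lam - E.symm nσ := by
              linear_combination hnσ
            have h1 := hnormdiff (MM nρ) (MM nσ) lam (E.symm nσ) heq2
            have h2 := hKEY nσ nρ hlt
            have h3 := norm_nonneg (Wc (E.symm nρ))
            have h4 := norm_nonneg (Wc (E.symm nσ))
            have h5 := norm_nonneg (Wc (MM nσ))
            have hr : (nρ : ℝ) ≤ ‖Wc lam‖ := by linarith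
            apply Finset.mem_union_left
            apply Finset.mem_union_right
            exact Finset.mem_image.mpr ⟨nρ, Finset.mem_range.mpr (hNlt nρ hr), rfl⟩
          · -- nσ = nρ
            subst heqn
            have hlam : E.symm nσ = lam := sub_left_inj.mp hnσ
            have hnσl : nσ = nl := by
              rw [hnldef, ← hlam, Equiv.apply_symm_apply]
            apply Finset.mem_union_left
            apply Finset.mem_union_left
            rw [hnσl]
            exact Finset.mem_singleton_self _
          · -- nρ < nσ
            have heq2 : MM nσ - MM nρ = E.symm nσ - lam := by
              linear_combination -hnσ
            have h1 := hnormdiff (MM nσ) (MM nρ) (E.symm nσ) lam heq2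
            have h2 := hKEY nρ nσ hlt
            have h3 := norm_nonneg (Wc (E.symm nσ))
            have h4 := norm_nonneg (Wc (E.symm nρ))
            have h5 := norm_nonneg (Wc (MM nρ))
            have hr : (nσ : ℝ) ≤ ‖Wc lam‖ := by linarith
            have hμeq : MM nρ = MM nσ - E.symm nσ + lam := by
              linear_combination -heq2
            apply Finset.mem_union_right
            rw [hμeq]
            exact Finset.mem_image.mpr ⟨nσ, Finset.mem_range.mpr (hNlt nσ hr), rfl⟩
        have hφs : Summable φ := summable_of_ne_finset_zero hsupp
        have hown : φ (MM nl) = h lam := by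
          simp only [hφdef]
          rw [if_pos ⟨nl, rfl⟩]
          have hlamM : lam - MM nl = ι nl := by
            simp only [hιdef]
            rw [hEnl]
          rw [hlamM, hβι]
          simp only [hg0def]
          rw [hEnl, div_mul_cancel₀ _ (hCpos nl).ne']
        have hle1 : h lam ≤ ∑' μ, φ μ := by
          rw [← hown]
          exact Summable.le_tsum hφs (MM nl) (fun j _ => hφnn j)
        have hFval : (∑' μ, βC (lam - μ) * c1 μ) = ((∑' μ, φ μ : ℝ) : ℂ) := by
          rw [← aux_tsum_ofReal φ]
          exact tsum_congr hc1φ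
        calc h lam ≤ ∑' μ, φ μ := hle1
          _ = ‖((∑' μ, φ μ : ℝ) : ℂ)‖ := by
              rw [Complex.norm_real, Real.norm_eq_abs, abs_of_nonneg (tsum_nonneg hφnn)]
          _ = _ := by rw [← hFval]
      apply finish _ hFmem ?_ hpt
      refine le_trans hFle ?_
      have hr1 : (∑' μ, ‖βC μ‖ ^ q * v μ ^ q) ^ (1 / q) ≤ S0 ^ (1 / q) :=
        Real.rpow_le_rpow (tsum_nonneg (fun x => mul_nonneg
          (Real.rpow_nonneg (norm_nonneg _) _) (Real.rpow_nonneg (hv0 _).le _))) hFCt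
          (by positivity)
      have hr2 : 0 ≤ NY c1 := hNYnn c1 hc1m.1
      calc (∑' μ, ‖βC μ‖ ^ q * v μ ^ q) ^ (1 / q) * NY c1
          ≤ S0 ^ (1 / q) * NY c1 := mul_le_mul_of_nonneg_right hr1 hr2
        _ ≤ S0 ^ (1 / q) * NY c := mul_le_mul_of_nonneg_left hc1m.2 hSpow_nn
  · -- Case A : ‖c μ‖ ≤ K v μ
    push_neg at hP
    obtain ⟨K, hK⟩ := hP
    set K₀ := max K 0 with hK0def
    have hK₀ : ∀ μ, ‖c μ‖ ≤ K₀ * v μ := by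
      intro μ
      exact (hK μ).trans (mul_le_mul_of_nonneg_right (le_max_left _ _) (hv0 μ).le)
    have hK₀nn : 0 ≤ K₀ := le_max_right _ _
    set cabs : (Fin (2 * d) → ℤ) → ℂ := fun μ => ((‖c μ‖ : ℝ) : ℂ) with hcabsdef
    have hcabs := hsolid cabs c hc (by
      intro lam
      simp [hcabsdef, Complex.norm_real])
    set bC : (Fin (2 * d) → ℤ) → ℂ := fun μ => ((b μ : ℝ) : ℂ) with hbCdef
    have hcosteq : (fun μ => ‖bC μ‖ ^ q * v μ ^ q) = fun μ => b μ ^ q * v μ ^ q := by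
      funext μ
      rw [hbCdef]
      simp [Complex.norm_real, abs_of_nonneg (hbnn μ)]
    have hsumB : Summable (fun μ => ‖bC μ‖ ^ q * v μ ^ q) := by rw [hcosteq]; exact hA
    obtain ⟨hFmem, hFle⟩ := hBY bC hsumB cabs hcabs.1
    -- ℓ¹ bound for b * v
    have hbv : Summable (fun ν => b ν * v ν) := by
      apply aux_summable_of_rpow hq0 hq1 (fun ν => mul_nonneg (hbnn ν) (hv0 ν).le)
      have : (fun ν => (b ν * v ν) ^ q) = fun ν => b ν ^ q * v ν ^ q := by
        funext ν; rw [Real.mul_rpow (hbnn ν) (hv0 ν).le]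
      rw [this]; exact hA
    have hpt : ∀ lam, h lam ≤ ‖(fun lam => ∑' μ, bC (lam - μ) * cabs μ) lam‖ := by
      intro lam
      set gl : (Fin (2 * d) → ℤ) → ℝ := fun μ => b (lam - μ) * ‖c μ‖ with hgldef
      have hglnn : ∀ μ, 0 ≤ gl μ := fun μ => mul_nonneg (hbnn _) (norm_nonneg _)
      have hgl : Summable gl := by
        apply Summable.of_nonneg_of_le hglnn (fun μ => ?_)
          (((Equiv.subLeft lam).summable_iff.mpr hbv).mul_left (K₀ * v lam))
        have h1 : gl μ ≤ b (lam - μ) * (K₀ * v μ) :=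
          mul_le_mul_of_nonneg_left (hK₀ μ) (hbnn _)
        have h2 : v μ ≤ v (lam - μ) * v lam := hvmul lam μ
        have h3 : b (lam - μ) * (K₀ * v μ) ≤ b (lam - μ) * (K₀ * (v (lam - μ) * v lam)) := by
          apply mul_le_mul_of_nonneg_left ?_ (hbnn _)
          exact mul_le_mul_of_nonneg_left h2 hK₀nn
        refine h1.trans (h3.trans (le_of_eq ?_))
        show b (lam - μ) * (K₀ * (v (lam - μ) * v lam)) =
          K₀ * v lam * ((fun ν => b ν * v ν) ((Equiv.subLeft lam) μ))
        simp [Equiv.subLeft]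
        ring
      have hFval : (∑' μ, bC (lam - μ) * cabs μ) = ((∑' μ, gl μ : ℝ) : ℂ) := by
        rw [← aux_tsum_ofReal gl]
        apply tsum_congr
        intro μ
        rw [hbCdef, hcabsdef, hgldef]
        push_cast
        ring
      have hsummh : Summable (fun μ => ‖A lam μ‖ * ‖c μ‖) := by
        apply Summable.of_nonneg_of_le (fun μ => by positivity) (fun μ => ?_) hgl
        exact mul_le_mul_of_nonneg_right (hble lam μ) (norm_nonneg _)
      have : h lam ≤ ∑' μ, gl μ := by
        rw [hhdef]
        apply Summable.tsum_le_tsum (fun μ => ?_) hsummh hgl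
        exact mul_le_mul_of_nonneg_right (hble lam μ) (norm_nonneg _)
      calc h lam ≤ ∑' μ, gl μ := this
        _ = ‖((∑' μ, gl μ : ℝ) : ℂ)‖ := by
            rw [Complex.norm_real, Real.norm_eq_abs, abs_of_nonneg (tsum_nonneg hglnn)]
        _ = ‖(fun lam => ∑' μ, bC (lam - μ) * cabs μ) lam‖ := by rw [← hFval]
    apply finish _ hFmem ?_ hpt
    refine le_trans hFle ?_
    rw [hcosteq]
    exact mul_le_mul_of_nonneg_left hcabs.2 hSpow_nn
end
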